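/- arXiv:2009.00598 — 4 statements merged into one kernel-verified Lean document; each statement's English description precedes it below -/
import Mathlib

section
/- There exists N such that for every even n ≥ N the following holds: if G is a typical simple 3-regular graph on n vertices and (V1, V2) is a minimal bisection of G, then for each i ∈ {1, 2} there exist two distinct vertices u, w ∈ V_i, each of degree at most two in G[V_i], whose distance in G[V_i] is at most eight. -/
open SimpleGraph

/-- The number of edges of `G` with one endpoint in `V1` and the other in `V2`. -/
noncomputable def cutSize {V : Type*} (G : SimpleGraph V) (V1 V2 : Set V) : ℕ :=
  {p : V × V | p.1 ∈ V1 ∧ p.2 ∈ V2 ∧ G.Adj p.1 p.2}.ncard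

/-- `(V1, V2)` is a bisection: a partition of the vertex set into two parts of equal size. -/
def IsBisection {V : Type*} (V1 V2 : Set V) : Prop :=
  V1 ∪ V2 = Set.univ ∧ Disjoint V1 V2 ∧ V1.ncard = V2.ncard

/-- The bisection width of `G`: the minimum size of a bisection. -/
noncomputable def bisectionWidth {V : Type*} (G : SimpleGraph V) : ℕ :=
  sInf {m : ℕ | ∃ V1 V2 : Set V, IsBisection V1 V2 ∧ cutSize G V1 V2 = m}

/-- A minimal bisection: a bisection whose size equals the bisection width. -/
def IsMinimalBisection {V : Type*} (G : SimpleGraph V) (V1 V2 : Set V) : Prop :=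
  IsBisection V1 V2 ∧ cutSize G V1 V2 = bisectionWidth G

/-- `G` is (simple) 3-regular: every vertex has exactly 3 neighbours. -/
def IsCubic {V : Type*} (G : SimpleGraph V) : Prop :=
  ∀ v : V, (G.neighborSet v).ncard = 3

/-- `v` lies on a cycle of length `ℓ` in `G`. -/
def OnCycleOfLength {V : Type*} (G : SimpleGraph V) (ℓ : ℕ) (v : V) : Prop :=
  ∃ (u : V) (w : G.Walk u u), w.IsCycle ∧ w.length = ℓ ∧ v ∈ w.support

/-- A 3-regular graph on `n` vertices is typical if its bisection width is at least `0.10·n`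
and, for every `ℓ ≤ 20`, at most `log n` vertices lie on a cycle of length `ℓ`. -/
def Typical {n : ℕ} (G : SimpleGraph (Fin n)) : Prop :=
  (0.10 * (n : ℝ) ≤ (bisectionWidth G : ℝ)) ∧
  ∀ ℓ : ℕ, ℓ ≤ 20 → (({v : Fin n | OnCycleOfLength G ℓ v}).ncard : ℝ) ≤ Real.log n

/-- The degree of a vertex of the induced subgraph `G[S]`. -/
noncomputable def inducedDegree {V : Type*} (G : SimpleGraph V) (S : Set V) (v : S) : ℕ :=
  ((G.induce S).neighborSet v).ncard

/-- The conclusion for one side `S` of the bisection: there are two distinct vertices of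
degree at most two in `G[S]` at distance at most eight in `G[S]`. -/
def HasClosePairOfSmallDegree {V : Type*} (G : SimpleGraph V) (S : Set V) : Prop :=
  ∃ u w : S, u ≠ w ∧ inducedDegree G S u ≤ 2 ∧ inducedDegree G S w ≤ 2 ∧
    (G.induce S).Reachable u w ∧ (G.induce S).dist u w ≤ 8

set_option linter.unusedSectionVars false
set_option linter.unusedVariables false
set_option linter.unusedTactic false

lemma exists_cycle_of_two_paths {V : Type*} {G : SimpleGraph V} {b a : V} (p : G.Walk a b) :
    ∀ (q : G.Walk a b), p.IsPath → q.IsPath → p ≠ q →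
    ∃ (c : V) (γ : G.Walk c c), γ.IsCycle ∧ γ.length ≤ p.length + q.length ∧
      ∀ v ∈ γ.support, v ∈ p.support ∨ v ∈ q.support := by
  induction p with
  | nil =>
    intro q _ hq hne
    exact absurd ((SimpleGraph.Walk.isPath_iff_eq_nil (p := q)).mp hq).symm hne
  | @cons a x b h p' ih =>
    intro q hp hq hne
    cases q with
    | nil =>
      exact absurd ((SimpleGraph.Walk.isPath_iff_eq_nil (p := _)).mp hp) (by simp)
    | @cons _ y _ h' q' =>
      by_cases hxy : x = y
      · subst hxy
        have hne' : p' ≠ q' := by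
          rintro rfl; exact hne rfl
        obtain ⟨c, γ, hγ, hlen, hsupp⟩ :=
          ih q' ((Walk.cons_isPath_iff h p').mp hp).1 ((Walk.cons_isPath_iff h' q').mp hq).1 hne'
        refine ⟨c, γ, hγ, hlen.trans (by simp [SimpleGraph.Walk.length_cons]; omega), ?_⟩
        intro v hv
        rcases hsupp v hv with h1 | h1
        · exact Or.inl (by simp [SimpleGraph.Walk.support_cons, h1])
        · exact Or.inr (by simp [SimpleGraph.Walk.support_cons, h1])
      · -- direct construction
        letI : DecidableEq V := Classical.decEq V
        have hp' : p'.IsPath := ((Walk.cons_isPath_iff h p').mp hp).1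
        have hanp : a ∉ p'.support := ((Walk.cons_isPath_iff h p').mp hp).2
        have hq' : q'.IsPath := ((Walk.cons_isPath_iff h' q').mp hq).1
        have hanq : a ∉ q'.support := ((Walk.cons_isPath_iff h' q').mp hq).2
        have hmpath := SimpleGraph.Walk.bypass_isPath (p'.append (SimpleGraph.Walk.cons h' q').reverse)
        have hsubs := SimpleGraph.Walk.support_bypass_subset (p'.append (SimpleGraph.Walk.cons h' q').reverse)
        have hsube := SimpleGraph.Walk.edges_bypass_subset (p'.append (SimpleGraph.Walk.cons h' q').reverse)
        have hlenb := SimpleGraph.Walk.length_bypass_le (p'.append (SimpleGraph.Walk.cons h' q').reverse)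
        set m : G.Walk x a := (p'.append (SimpleGraph.Walk.cons h' q').reverse).bypass with hm
        have hmsupp : ∀ v ∈ m.support, v ∈ p'.support ∨ v ∈ (SimpleGraph.Walk.cons h' q').support := by
          intro v hv
          have := hsubs hv
          rw [SimpleGraph.Walk.mem_support_append_iff] at this
          rcases this with h1 | h1
          · exact Or.inl h1
          · rw [SimpleGraph.Walk.support_reverse, List.mem_reverse] at h1
            exact Or.inr h1
        have hedge : s(a, x) ∉ m.edges := by
          intro hmem
          have := hsube hmem
          rw [SimpleGraph.Walk.edges_append, List.mem_append] at this
          rcases this with h1 | h1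
          · exact hanp (SimpleGraph.Walk.fst_mem_support_of_mem_edges _ h1)
          · rw [SimpleGraph.Walk.edges_reverse, List.mem_reverse] at h1
            rw [SimpleGraph.Walk.edges_cons, List.mem_cons] at h1
            rcases h1 with h1 | h1
            · rw [Sym2.eq_iff] at h1
              rcases h1 with ⟨-, h1⟩ | ⟨h1, -⟩
              · exact hxy h1
              · rw [← h1] at h'
                exact G.irrefl h'
            · exact hanq (SimpleGraph.Walk.fst_mem_support_of_mem_edges _ h1)
        refine ⟨a, SimpleGraph.Walk.cons h m, ?_, ?_, ?_⟩
        · exact (SimpleGraph.Walk.cons_isCycle_iff m h).mpr ⟨hmpath, hedge⟩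
        · rw [SimpleGraph.Walk.length_append, SimpleGraph.Walk.length_reverse] at hlenb
          simp only [SimpleGraph.Walk.length_cons] at hlenb ⊢
          omega
        · intro v hv
          rw [SimpleGraph.Walk.support_cons, List.mem_cons] at hv
          rcases hv with rfl | hv
          · exact Or.inl (SimpleGraph.Walk.start_mem_support _)
          · rcases hmsupp v hv with h1 | h1
            · exact Or.inl (by simp [SimpleGraph.Walk.support_cons, h1])
            · exact Or.inr h1


section Infra
variable {n : ℕ}

lemma cutSize_comm (G : SimpleGraph (Fin n)) (A B : Set (Fin n)) :
    cutSize G A B = cutSize G B A := by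
  unfold cutSize
  rw [show {p : Fin n × Fin n | p.1 ∈ B ∧ p.2 ∈ A ∧ G.Adj p.1 p.2}
      = Prod.swap '' {p : Fin n × Fin n | p.1 ∈ A ∧ p.2 ∈ B ∧ G.Adj p.1 p.2} by
    ext ⟨x, y⟩
    simp only [Set.mem_setOf_eq, Set.mem_image, Prod.exists, Prod.swap_prod_mk, Prod.mk.injEq]
    constructor
    · rintro ⟨h1, h2, h3⟩; exact ⟨y, x, ⟨h2, h1, h3.symm⟩, rfl, rfl⟩
    · rintro ⟨a, b, ⟨h1, h2, h3⟩, rfl, rfl⟩; exact ⟨h2, h1, h3.symm⟩]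
  rw [Set.ncard_image_of_injective _ Prod.swap_injective]

lemma bisection_compl {V1 V2 : Set (Fin n)} (h : IsBisection V1 V2) : V2 = V1ᶜ := by
  obtain ⟨hu, hd, -⟩ := h
  apply Set.eq_of_subset_of_subset
  · intro x hx
    exact fun hx1 => (Set.disjoint_left.mp hd) hx1 hx
  · intro x hx
    rcases Set.mem_union x V1 V2 |>.mp (hu ▸ Set.mem_univ x) with h1 | h1
    · exact absurd h1 hx
    · exact h1

lemma bisection_card {V1 V2 : Set (Fin n)} (h : IsBisection V1 V2) :
    2 * V1.ncard = n := by
  obtain ⟨hu, hd, hc⟩ := h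
  have := Set.ncard_union_eq hd (Set.toFinite _) (Set.toFinite _)
  rw [hu] at this
  rw [Set.ncard_univ] at this
  simp only [Nat.card_eq_fintype_card, Fintype.card_fin] at this
  omega

/-- the induced neighbor set corresponds to `G.neighborSet v ∩ S`. -/
lemma inducedDegree_eq (G : SimpleGraph (Fin n)) (S : Set (Fin n)) (v : S) :
    inducedDegree G S v = (G.neighborSet v.val ∩ S).ncard := by
  unfold inducedDegree
  rw [show G.neighborSet v.val ∩ S = Subtype.val '' ((G.induce S).neighborSet v) by
    ext x
    simp only [Set.mem_inter_iff, mem_neighborSet, Set.mem_image]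
    constructor
    · rintro ⟨hadj, hx⟩
      exact ⟨⟨x, hx⟩, by simpa using hadj.symm.symm, rfl⟩
    · rintro ⟨⟨y, hy⟩, hadj, rfl⟩
      exact ⟨by simpa using hadj, hy⟩]
  rw [Set.ncard_image_of_injective _ Subtype.val_injective]

lemma inducedDegree_le_three {G : SimpleGraph (Fin n)} (hG : IsCubic G) (S : Set (Fin n)) (v : S) :
    inducedDegree G S v ≤ 3 := by
  rw [inducedDegree_eq]
  calc (G.neighborSet v.val ∩ S).ncard ≤ (G.neighborSet v.val).ncard :=
        Set.ncard_le_ncard Set.inter_subset_left (Set.toFinite _)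
    _ = 3 := hG v.val

lemma inducedDegree_add_out {G : SimpleGraph (Fin n)} (hG : IsCubic G) (S : Set (Fin n)) (v : S) :
    inducedDegree G S v + (G.neighborSet v.val ∩ Sᶜ).ncard = 3 := by
  rw [inducedDegree_eq]
  rw [← Set.ncard_union_eq (by
    exact Set.disjoint_of_subset Set.inter_subset_right Set.inter_subset_right
      disjoint_compl_right) (Set.toFinite _) (Set.toFinite _)]
  rw [← Set.inter_union_distrib_left, Set.union_compl_self, Set.inter_univ]
  exact hG v.val

end Infra


section Cut
variable {n : ℕ} {G : SimpleGraph (Fin n)}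

/-- cut is at most 3 times the number of small-degree vertices on the S side. -/
lemma cut_le_three_mul (hG : IsCubic G) (S : Set (Fin n)) :
    cutSize G S Sᶜ ≤ 3 * {u : S | inducedDegree G S u ≤ 2}.ncard := by
  classical
  set C : Set (Fin n × Fin n) := {p | p.1 ∈ S ∧ p.2 ∈ Sᶜ ∧ G.Adj p.1 p.2} with hC
  have hfin : C.Finite := Set.toFinite _
  set W : Set (Fin n) := Subtype.val '' {u : S | inducedDegree G S u ≤ 2} with hW
  have himg : ∀ p ∈ hfin.toFinset, (p.1 : Fin n) ∈ W.toFinset := by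
    rintro ⟨x, y⟩ hp
    rw [Set.Finite.mem_toFinset, hC] at hp
    obtain ⟨hx, hy, hadj⟩ := hp
    rw [Set.mem_toFinset, hW]
    refine ⟨⟨x, hx⟩, ?_, rfl⟩
    have h3 : inducedDegree G S ⟨x, hx⟩ + (G.neighborSet x ∩ Sᶜ).ncard = 3 :=
      inducedDegree_add_out hG S ⟨x, hx⟩
    have hpos : 0 < (G.neighborSet x ∩ Sᶜ).ncard := by
      rw [Set.ncard_pos (Set.toFinite _)]
      exact ⟨y, hadj, hy⟩
    show inducedDegree G S ⟨x, hx⟩ ≤ 2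
    omega
  have hmain : hfin.toFinset.card ≤ 3 * (hfin.toFinset.image Prod.fst).card := by
    apply Finset.card_le_mul_card_image
    intro b _
    -- fiber over b injects into neighbors of b
    have : (hfin.toFinset.filter fun p => p.1 = b).card ≤ (G.neighborSet b).toFinset.card := by
      apply Finset.card_le_card_of_injOn (fun p => p.2)
      · rintro ⟨x, y⟩ hp
        simp only [Finset.mem_coe, Finset.mem_filter, Set.Finite.mem_toFinset, hC, Set.mem_setOf_eq] at hp
        obtain ⟨⟨-, -, hadj⟩, rfl⟩ := hp
        simpa [Set.mem_toFinset] using hadj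
      · rintro ⟨x₁, y₁⟩ h₁ ⟨x₂, y₂⟩ h₂ (h : y₁ = y₂)
        simp only [Finset.coe_filter, Set.mem_setOf_eq] at h₁ h₂
        rw [Prod.mk.injEq]
        exact ⟨h₁.2.trans h₂.2.symm, h⟩
    calc (hfin.toFinset.filter fun p => p.1 = b).card
        ≤ (G.neighborSet b).toFinset.card := this
      _ = (G.neighborSet b).ncard := by rw [Set.ncard_eq_toFinset_card']
      _ = 3 := hG b
  have himg2 : (hfin.toFinset.image Prod.fst).card ≤ W.toFinset.card :=
    Finset.card_le_card (by
      intro b hb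
      rw [Finset.mem_image] at hb
      obtain ⟨p, hp, rfl⟩ := hb
      exact himg p hp)
  have hcut : cutSize G S Sᶜ = hfin.toFinset.card := by
    have : cutSize G S Sᶜ = C.ncard := rfl
    rw [this, Set.ncard_eq_toFinset_card _ hfin]
  have hWcard : W.toFinset.card = {u : S | inducedDegree G S u ≤ 2}.ncard := by
    rw [← Set.ncard_eq_toFinset_card', hW, Set.ncard_image_of_injective _ Subtype.val_injective]
  omega

/-- In a minimal bisection with cut at least 4, no vertex of `S` is isolated in `G[S]`. -/
lemma no_isolated (hG : IsCubic G) {S T : Set (Fin n)} (hb : IsBisection S T)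
    (hmin : cutSize G S T = bisectionWidth G) (hcut4 : 4 ≤ cutSize G S T) (u : S) :
    1 ≤ inducedDegree G S u := by
  by_contra hdeg
  push_neg at hdeg
  interval_cases h : inducedDegree G S u
  obtain ⟨hu, hdisj, hcard⟩ := hb
  set v : Fin n := u.val with hv
  have hvS : v ∈ S := u.property
  have hiso : G.neighborSet v ∩ S = ∅ := by
    have := inducedDegree_eq G S u
    rw [h] at this
    exact (Set.ncard_eq_zero (Set.toFinite _)).mp this.symm
  have hnbrT : G.neighborSet v ⊆ T := by
    intro y hy
    rcases Set.mem_union y S T |>.mp (hu ▸ Set.mem_univ y) with h1 | h1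
    · exact absurd (Set.mem_inter hy h1) (by rw [hiso]; exact id)
    · exact h1
  set C : Set (Fin n × Fin n) := {p | p.1 ∈ S ∧ p.2 ∈ T ∧ G.Adj p.1 p.2} with hC
  set Cv : Set (Fin n × Fin n) := {p | p.1 = v ∧ p.2 ∈ G.neighborSet v} with hCv
  have hCvcard : Cv.ncard = 3 := by
    rw [show Cv = (fun y => (v, y)) '' (G.neighborSet v) by
      ext ⟨a, b⟩
      simp only [hCv, Set.mem_setOf_eq, Set.mem_image, Prod.mk.injEq]
      constructor
      · rintro ⟨rfl, hb2⟩; exact ⟨b, hb2, rfl, rfl⟩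
      · rintro ⟨y, hy, rfl, rfl⟩; exact ⟨rfl, hy⟩]
    rw [Set.ncard_image_of_injective _ (fun a b hab => (Prod.mk.injEq _ _ _ _ ▸ hab).2)]
    exact hG v
  have hCvsub : Cv ⊆ C := by
    rintro ⟨a, b⟩ ⟨rfl, hb2⟩
    exact ⟨hvS, hnbrT hb2, hb2⟩
  -- there is a cut pair not at v
  have hex : ∃ p : Fin n × Fin n, p ∈ C ∧ p.1 ≠ v := by
    by_contra hno
    push_neg at hno
    have : C ⊆ Cv := by
      rintro ⟨a, b⟩ hp
      have ha := hno (a, b) hp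
      obtain ⟨-, -, hadj⟩ := hp
      subst ha
      exact ⟨rfl, hadj⟩
    have : C.ncard ≤ 3 := hCvcard ▸ Set.ncard_le_ncard this (Set.toFinite _)
    have hcc : cutSize G S T = C.ncard := rfl
    omega
  obtain ⟨⟨x, w⟩, ⟨hxS, hwT, hxw⟩, hxv⟩ := hex
  have hvw : v ≠ w := fun hvw => (Set.disjoint_left.mp hdisj) hvS (hvw ▸ hwT)
  have hwS : w ∉ S := fun hwS => (Set.disjoint_left.mp hdisj) hwS hwT
  have hvT : v ∉ T := fun hvT => (Set.disjoint_left.mp hdisj) hvS hvT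
  set S' : Set (Fin n) := insert w (S \ {v}) with hS'
  set T' : Set (Fin n) := insert v (T \ {w}) with hT'
  have hSfin : S.Finite := Set.toFinite _
  have hbis' : IsBisection S' T' := by
    refine ⟨?_, ?_, ?_⟩
    · apply Set.eq_univ_of_forall
      intro z
      rcases Set.mem_union z S T |>.mp (hu ▸ Set.mem_univ z) with h1 | h1
      · by_cases hz : z = v
        · exact Set.mem_union_right _ (Set.mem_insert_iff.mpr (Or.inl hz))
        · exact Set.mem_union_left _ (Set.mem_insert_iff.mpr (Or.inr ⟨h1, hz⟩))
      · by_cases hz : z = w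
        · exact Set.mem_union_left _ (Set.mem_insert_iff.mpr (Or.inl hz))
        · exact Set.mem_union_right _ (Set.mem_insert_iff.mpr (Or.inr ⟨h1, hz⟩))
    · rw [Set.disjoint_left]
      rintro z hz hz'
      rcases Set.mem_insert_iff.mp hz with rfl | ⟨hzS, hzv⟩
      · rcases Set.mem_insert_iff.mp hz' with h2 | ⟨-, h2⟩
        · exact hvw h2.symm
        · exact h2 rfl
      · rcases Set.mem_insert_iff.mp hz' with rfl | ⟨hzT, -⟩
        · exact hzv rfl
        · exact (Set.disjoint_left.mp hdisj) hzS hzT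
    · have h1 : S'.ncard = S.ncard := by
        rw [hS', Set.ncard_insert_of_notMem (fun hw => hwS hw.1) (hSfin.diff (t := {v})),
          Set.ncard_diff_singleton_of_mem hvS]
        have : 1 ≤ S.ncard := (Set.ncard_pos (Set.toFinite _)).mpr ⟨v, hvS⟩
        omega
      have h2 : T'.ncard = T.ncard := by
        rw [hT', Set.ncard_insert_of_notMem (fun hv2 => hvT hv2.1) ((Set.toFinite T).diff (t := {w})),
          Set.ncard_diff_singleton_of_mem hwT]
        have : 1 ≤ T.ncard := (Set.ncard_pos (Set.toFinite _)).mpr ⟨w, hwT⟩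
        omega
      rw [h1, h2, hcard]
  set A : Set (Fin n × Fin n) :=
    {p | p.1 ∈ S ∧ p.2 ∈ T ∧ G.Adj p.1 p.2 ∧ p.1 ≠ v ∧ p.1 ≠ w ∧ p.2 ≠ v ∧ p.2 ≠ w} with hA
  set Pw : Set (Fin n × Fin n) := {p | p.1 = w ∧ p.2 ∈ G.neighborSet w} with hPw
  have hPwcard : Pw.ncard = 3 := by
    rw [show Pw = (fun y => (w, y)) '' (G.neighborSet w) by
      ext ⟨a, b⟩
      simp only [hPw, Set.mem_setOf_eq, Set.mem_image, Prod.mk.injEq]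
      constructor
      · rintro ⟨rfl, hb2⟩; exact ⟨b, hb2, rfl, rfl⟩
      · rintro ⟨y, hy, rfl, rfl⟩; exact ⟨rfl, hy⟩]
    rw [Set.ncard_image_of_injective _ (fun a b hab => (Prod.mk.injEq _ _ _ _ ▸ hab).2)]
    exact hG w
  -- upper bound for the new cut
  have hupper : cutSize G S' T' ≤ A.ncard + 3 := by
    have hsub : {p : Fin n × Fin n | p.1 ∈ S' ∧ p.2 ∈ T' ∧ G.Adj p.1 p.2} ⊆ A ∪ Pw := by
      rintro ⟨a, b⟩ ⟨haS', hbT', hadj⟩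
      by_cases haw : a = w
      · exact Or.inr ⟨haw, by rw [← haw]; exact hadj⟩
      · left
        rcases Set.mem_insert_iff.mp haS' with h2 | ⟨haS, hav⟩
        · exact absurd h2 haw
        · rcases Set.mem_insert_iff.mp hbT' with rfl | ⟨hbT, hbw⟩
          · exfalso
            have ha2 : a ∈ G.neighborSet v := hadj.symm
            exact (Set.disjoint_left.mp hdisj) haS (hnbrT ha2)
          · have hbv : b ≠ v := fun hbv => hvT (hbv ▸ hbT)
            exact ⟨haS, hbT, hadj, hav, haw, hbv, hbw⟩
    calc cutSize G S' T' ≤ (A ∪ Pw).ncard := Set.ncard_le_ncard hsub (Set.toFinite _)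
      _ ≤ A.ncard + Pw.ncard := Set.ncard_union_le _ _
      _ = A.ncard + 3 := by rw [hPwcard]
  -- lower bound for the old cut
  have hlower : A.ncard + 4 ≤ cutSize G S T := by
    have hsub : (A ∪ Cv) ∪ {(x, w)} ⊆ C := by
      rintro ⟨a, b⟩ hp
      rcases hp with (hp | hp) | hp
      · exact ⟨hp.1, hp.2.1, hp.2.2.1⟩
      · exact hCvsub hp
      · rw [Set.mem_singleton_iff] at hp
        rw [hp]
        exact ⟨hxS, hwT, hxw⟩
    have hd1 : Disjoint A Cv := by
      rw [Set.disjoint_left]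
      rintro ⟨a, b⟩ ha hcv
      exact ha.2.2.2.1 hcv.1
    have hd2 : Disjoint (A ∪ Cv) {(x, w)} := by
      rw [Set.disjoint_right]
      rintro p hp
      rw [Set.mem_singleton_iff] at hp
      subst hp
      rintro (h2 | h2)
      · exact h2.2.2.2.2.2.2 rfl
      · exact hxv h2.1
    have e1 : ((A ∪ Cv) ∪ {(x, w)}).ncard = A.ncard + Cv.ncard + 1 := by
      rw [Set.ncard_union_eq hd2 (Set.toFinite _) (Set.toFinite _),
        Set.ncard_union_eq hd1 (Set.toFinite _) (Set.toFinite _), Set.ncard_singleton]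
    have := Set.ncard_le_ncard hsub (Set.toFinite _)
    rw [e1, hCvcard] at this
    have hcc : cutSize G S T = C.ncard := rfl
    omega
  -- contradiction with minimality
  have hbwle : bisectionWidth G ≤ cutSize G S' T' :=
    Nat.sInf_le ⟨S', T', hbis', rfl⟩
  omega

end Cut


section Ball
variable {α : Type*} [Fintype α] [DecidableEq α] {Γ : SimpleGraph α}

lemma reach_dist_triangle {a b c : α} (h1 : Γ.Reachable a b) (h2 : Γ.Reachable b c) :
    Γ.dist a c ≤ Γ.dist a b + Γ.dist b c := by
  obtain ⟨p, hp⟩ := h1.exists_walk_length_eq_dist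
  obtain ⟨q, hq⟩ := h2.exists_walk_length_eq_dist
  rw [← hp, ← hq, ← SimpleGraph.Walk.length_append]
  exact SimpleGraph.dist_le _

lemma support_dist_le {u y z : α} (p : Γ.Walk u y) (hz : z ∈ p.support) :
    Γ.Reachable u z ∧ Γ.dist u z ≤ p.length :=
  ⟨⟨p.takeUntil z hz⟩, le_trans (SimpleGraph.dist_le _) (SimpleGraph.Walk.length_takeUntil_le p hz)⟩

lemma support_dist_lt {u y z : α} (p : Γ.Walk u y) (hz : z ∈ p.support) (hzy : z ≠ y)
    (hpos : 1 ≤ p.length) : Γ.dist u z < p.length := by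
  have hspec := p.take_spec hz
  have hlen : (p.takeUntil z hz).length + (p.dropUntil z hz).length = p.length := by
    rw [← SimpleGraph.Walk.length_append, hspec]
  have hdrop : 1 ≤ (p.dropUntil z hz).length := by
    by_contra hd
    push_neg at hd
    interval_cases h : (p.dropUntil z hz).length
    exact hzy (SimpleGraph.Walk.eq_of_length_eq_zero h)
  have := SimpleGraph.dist_le (p.takeUntil z hz)
  omega

/-- at most one neighbor of `x` lies at distance at most `k ≤ min m 3` from `u`,
in a locally acyclic situation. -/
lemma claimU {u x : α} {m k : ℕ}
    (hreach : Γ.Reachable u x) (hdist : Γ.dist u x = m) (hm1 : 1 ≤ m) (hm4 : m ≤ 4)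
    (hk3 : k ≤ 3) (hkm : k ≤ m)
    (hclean : ∀ (c : α) (γ : Γ.Walk c c), γ.IsCycle → γ.length ≤ 20 →
      (∀ v ∈ γ.support, Γ.Reachable u v ∧ Γ.dist u v ≤ 4) → False) :
    {y | Γ.Adj x y ∧ Γ.dist u y ≤ k}.Subsingleton := by
  intro y hy z hz
  by_contra hyz
  obtain ⟨hxy, hdy⟩ := hy
  obtain ⟨hxz, hdz⟩ := hz
  have hry : Γ.Reachable u y := hreach.trans ⟨hxy.toWalk⟩
  have hrz : Γ.Reachable u z := hreach.trans ⟨hxz.toWalk⟩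
  obtain ⟨Py, hPy, hPylen⟩ := hry.exists_path_of_dist
  obtain ⟨Pz, hPz, hPzlen⟩ := hrz.exists_path_of_dist
  have hxPy : x ∉ Py.support := by
    intro hmem
    by_cases hxy' : x = y
    · exact Γ.irrefl (hxy' ▸ hxy)
    · by_cases hppos : 1 ≤ Py.length
      · have := support_dist_lt Py hmem hxy' hppos
        omega
      · push_neg at hppos
        interval_cases h : Py.length
        have huy : u = y := SimpleGraph.Walk.eq_of_length_eq_zero h
        subst huy
        rw [(SimpleGraph.Walk.isPath_iff_eq_nil (p := Py)).mp hPy] at hmem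
        simp only [SimpleGraph.Walk.support_nil, List.mem_singleton] at hmem
        subst hmem
        rw [SimpleGraph.dist_self] at hdist
        omega
  have hxPz : x ∉ Pz.support := by
    intro hmem
    by_cases hxz' : x = z
    · exact Γ.irrefl (hxz' ▸ hxz)
    · by_cases hppos : 1 ≤ Pz.length
      · have := support_dist_lt Pz hmem hxz' hppos
        omega
      · push_neg at hppos
        interval_cases h : Pz.length
        have huy : u = z := SimpleGraph.Walk.eq_of_length_eq_zero h
        subst huy
        rw [(SimpleGraph.Walk.isPath_iff_eq_nil (p := Pz)).mp hPz] at hmem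
        simp only [SimpleGraph.Walk.support_nil, List.mem_singleton] at hmem
        subst hmem
        rw [SimpleGraph.dist_self] at hdist
        omega
  set Ry : Γ.Walk x u := SimpleGraph.Walk.cons hxy Py.reverse with hRy
  set Rz : Γ.Walk x u := SimpleGraph.Walk.cons hxz Pz.reverse with hRz
  have hRyP : Ry.IsPath := by
    rw [hRy, SimpleGraph.Walk.cons_isPath_iff]
    exact ⟨hPy.reverse, by rwa [SimpleGraph.Walk.support_reverse, List.mem_reverse]⟩
  have hRzP : Rz.IsPath := by
    rw [hRz, SimpleGraph.Walk.cons_isPath_iff]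
    exact ⟨hPz.reverse, by rwa [SimpleGraph.Walk.support_reverse, List.mem_reverse]⟩
  have hne : Ry ≠ Rz := by
    intro heq
    apply hyz
    have := congrArg (fun r : Γ.Walk x u => r.getVert 1) heq
    simpa [hRy, hRz, SimpleGraph.Walk.getVert_cons_succ, SimpleGraph.Walk.getVert_zero] using this
  obtain ⟨c, γ, hγc, hγlen, hγsupp⟩ := exists_cycle_of_two_paths Ry Rz hRyP hRzP hne
  apply hclean c γ hγc
  · have : Ry.length + Rz.length ≤ 20 := by
      rw [hRy, hRz]
      simp only [SimpleGraph.Walk.length_cons, SimpleGraph.Walk.length_reverse]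
      omega
    omega
  · intro v hv
    have hv' := hγsupp v hv
    rcases hv' with h1 | h1
    · rw [hRy, SimpleGraph.Walk.support_cons, List.mem_cons] at h1
      rcases h1 with rfl | h1
      · exact ⟨hreach, by omega⟩
      · rw [SimpleGraph.Walk.support_reverse, List.mem_reverse] at h1
        obtain ⟨hr, hd⟩ := support_dist_le Py h1
        exact ⟨hr, by omega⟩
    · rw [hRz, SimpleGraph.Walk.support_cons, List.mem_cons] at h1
      rcases h1 with rfl | h1
      · exact ⟨hreach, by omega⟩
      · rw [SimpleGraph.Walk.support_reverse, List.mem_reverse] at h1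
        obtain ⟨hr, hd⟩ := support_dist_le Pz h1
        exact ⟨hr, by omega⟩

end Ball

section Ball2
variable {α : Type*} [Fintype α] [DecidableEq α] {Γ : SimpleGraph α}

lemma sphere_growth {u : α}
    (hdeg3 : ∀ x : α, x ≠ u → Γ.Reachable u x → Γ.dist u x ≤ 8 → (Γ.neighborSet x).ncard = 3)
    (hclean : ∀ (c : α) (γ : Γ.Walk c c), γ.IsCycle → γ.length ≤ 20 →
      (∀ v ∈ γ.support, Γ.Reachable u v ∧ Γ.dist u v ≤ 4) → False)
    {d : ℕ} (hd1 : 1 ≤ d) (hd3 : d ≤ 3) :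
    2 * {x | Γ.Reachable u x ∧ Γ.dist u x = d}.ncard ≤
      {x | Γ.Reachable u x ∧ Γ.dist u x = d + 1}.ncard := by
  classical
  set sphd : Set α := {x | Γ.Reachable u x ∧ Γ.dist u x = d} with hsphd
  set sphd1 : Set α := {x | Γ.Reachable u x ∧ Γ.dist u x = d + 1} with hsphd1
  have hfind : sphd.Finite := Set.toFinite _
  have hfind1 : sphd1.Finite := Set.toFinite _
  set Fd : Finset α := hfind.toFinset with hFd
  set Fd1 : Finset α := hfind1.toFinset with hFd1
  set E : Finset (α × α) :=
    Finset.univ.filter (fun p : α × α => p.1 ∈ sphd ∧ p.2 ∈ sphd1 ∧ Γ.Adj p.1 p.2) with hE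
  have hmem_E : ∀ p : α × α, p ∈ E ↔ p.1 ∈ sphd ∧ p.2 ∈ sphd1 ∧ Γ.Adj p.1 p.2 := by
    intro p
    simp [hE]
  -- lower bound
  have hfst : ∀ p ∈ E, p.1 ∈ Fd := by
    intro p hp
    rw [Set.Finite.mem_toFinset]
    exact ((hmem_E p).mp hp).1
  have hsum1 : E.card = ∑ b ∈ Fd, (E.filter fun p => p.1 = b).card :=
    Finset.card_eq_sum_card_fiberwise hfst
  have hfiber_lower : ∀ b ∈ Fd, 2 ≤ (E.filter fun p => p.1 = b).card := by
    intro x hx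
    rw [Set.Finite.mem_toFinset] at hx
    obtain ⟨hxr, hxd⟩ := hx
    have hxu : x ≠ u := by
      intro h
      subst h
      rw [SimpleGraph.dist_self] at hxd
      omega
    set A : Set α := {y | Γ.Adj x y ∧ Γ.dist u y ≤ d} with hA
    have hAsub : A.Subsingleton :=
      claimU hxr hxd hd1 (by omega) hd3 le_rfl hclean
    have hAcard : A.ncard ≤ 1 :=
      (Set.ncard_le_one (Set.toFinite _)).mpr (fun a ha b hb => hAsub ha hb)
    set B : Set α := {y | Γ.Adj x y ∧ y ∈ sphd1} with hB
    have hNB : Γ.neighborSet x ⊆ A ∪ B := by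
      intro y hy
      have hyadj : Γ.Adj x y := hy
      have hyr : Γ.Reachable u y := hxr.trans ⟨hyadj.toWalk⟩
      have hyd : Γ.dist u y ≤ d + 1 := by
        have h1 : Γ.dist x y ≤ 1 := by
          have := SimpleGraph.dist_le hyadj.toWalk
          simpa using this
        have := reach_dist_triangle hxr ⟨hyadj.toWalk⟩
        omega
      by_cases hc : Γ.dist u y ≤ d
      · exact Or.inl ⟨hyadj, hc⟩
      · exact Or.inr ⟨hyadj, hyr, by omega⟩
    have hdeg : (Γ.neighborSet x).ncard = 3 := hdeg3 x hxu hxr (by omega)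
    have hBcard : 2 ≤ B.ncard := by
      have h1 : (Γ.neighborSet x).ncard ≤ (A ∪ B).ncard :=
        Set.ncard_le_ncard hNB (Set.toFinite _)
      have h2 : (A ∪ B).ncard ≤ A.ncard + B.ncard := Set.ncard_union_le _ _
      omega
    -- B injects into the fiber
    have hinj : B.ncard ≤ (E.filter fun p => p.1 = x).card := by
      rw [Set.ncard_eq_toFinset_card _ (Set.toFinite B)]
      apply Finset.card_le_card_of_injOn (fun y => (x, y))
      · intro y hy
        rw [Finset.mem_coe, Set.Finite.mem_toFinset] at hy
        obtain ⟨hyadj, hy1⟩ := hy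
        rw [Finset.mem_coe, Finset.mem_filter]
        exact ⟨(hmem_E (x, y)).mpr ⟨⟨hxr, hxd⟩, hy1, hyadj⟩, rfl⟩
      · intro y1 _ y2 _ h
        exact (Prod.mk.injEq _ _ _ _ ▸ h).2
    omega
  -- upper bound
  have hsnd : ∀ p ∈ E, p.2 ∈ Fd1 := by
    intro p hp
    rw [Set.Finite.mem_toFinset]
    exact ((hmem_E p).mp hp).2.1
  have hsum2 : E.card = ∑ z ∈ Fd1, (E.filter fun p => p.2 = z).card :=
    Finset.card_eq_sum_card_fiberwise hsnd
  have hfiber_upper : ∀ z ∈ Fd1, (E.filter fun p => p.2 = z).card ≤ 1 := by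
    intro z hz
    rw [Set.Finite.mem_toFinset] at hz
    obtain ⟨hzr, hzd⟩ := hz
    have hAsub : {y | Γ.Adj z y ∧ Γ.dist u y ≤ d}.Subsingleton :=
      claimU hzr hzd (by omega) (by omega) hd3 (by omega) hclean
    apply Finset.card_le_one.mpr
    rintro ⟨a1, b1⟩ h1 ⟨a2, b2⟩ h2
    rw [Finset.mem_filter] at h1 h2
    obtain ⟨he1, hb1⟩ := h1
    obtain ⟨he2, hb2⟩ := h2
    obtain ⟨⟨ha1r, ha1d⟩, -, hadj1⟩ := (hmem_E _).mp he1
    obtain ⟨⟨ha2r, ha2d⟩, -, hadj2⟩ := (hmem_E _).mp he2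
    simp only at hb1 hb2
    rw [hb1] at hadj1
    rw [hb2] at hadj2
    have e1 : a1 ∈ {y | Γ.Adj z y ∧ Γ.dist u y ≤ d} := ⟨hadj1.symm, le_of_eq ha1d⟩
    have e2 : a2 ∈ {y | Γ.Adj z y ∧ Γ.dist u y ≤ d} := ⟨hadj2.symm, le_of_eq ha2d⟩
    rw [Prod.mk.injEq]
    exact ⟨hAsub e1 e2, hb1.trans hb2.symm⟩
  -- combine
  have hlow : 2 * Fd.card ≤ E.card := by
    rw [hsum1]
    calc 2 * Fd.card = ∑ _b ∈ Fd, 2 := by rw [Finset.sum_const, smul_eq_mul, mul_comm]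
      _ ≤ ∑ b ∈ Fd, (E.filter fun p => p.1 = b).card := Finset.sum_le_sum hfiber_lower
  have hhigh : E.card ≤ Fd1.card := by
    rw [hsum2]
    calc ∑ z ∈ Fd1, (E.filter fun p => p.2 = z).card ≤ ∑ _z ∈ Fd1, 1 :=
          Finset.sum_le_sum hfiber_upper
      _ = Fd1.card := by simp
  rw [Set.ncard_eq_toFinset_card _ hfind, Set.ncard_eq_toFinset_card _ hfind1, ← hFd, ← hFd1]
  omega

end Ball2

section Ball3
variable {α : Type*} [Fintype α] [DecidableEq α] {Γ : SimpleGraph α}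

lemma ball_sixteen {u : α} (hdegu : 1 ≤ (Γ.neighborSet u).ncard)
    (hdeg3 : ∀ x : α, x ≠ u → Γ.Reachable u x → Γ.dist u x ≤ 8 → (Γ.neighborSet x).ncard = 3)
    (hclean : ∀ (c : α) (γ : Γ.Walk c c), γ.IsCycle → γ.length ≤ 20 →
      (∀ v ∈ γ.support, Γ.Reachable u v ∧ Γ.dist u v ≤ 4) → False) :
    16 ≤ {x | Γ.Reachable u x ∧ Γ.dist u x ≤ 4}.ncard := by
  classical
  set sph : ℕ → Set α := fun e => {x | Γ.Reachable u x ∧ Γ.dist u x = e} with hsph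
  have h0 : 1 ≤ (sph 0).ncard := by
    have : ({u} : Set α) ⊆ sph 0 := by
      intro x hx
      rw [Set.mem_singleton_iff] at hx
      subst hx
      exact ⟨SimpleGraph.Reachable.refl x, SimpleGraph.dist_self⟩
    calc 1 = ({u} : Set α).ncard := (Set.ncard_singleton u).symm
      _ ≤ (sph 0).ncard := Set.ncard_le_ncard this (Set.toFinite _)
  have h1 : 1 ≤ (sph 1).ncard := by
    have hsub : Γ.neighborSet u ⊆ sph 1 := by
      intro y hy
      exact ⟨⟨(SimpleGraph.Adj.toWalk hy)⟩, SimpleGraph.dist_eq_one_iff_adj.mpr hy⟩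
    calc 1 ≤ (Γ.neighborSet u).ncard := hdegu
      _ ≤ (sph 1).ncard := Set.ncard_le_ncard hsub (Set.toFinite _)
  have g1 : 2 * (sph 1).ncard ≤ (sph 2).ncard := sphere_growth hdeg3 hclean le_rfl (by omega)
  have g2 : 2 * (sph 2).ncard ≤ (sph 3).ncard := sphere_growth hdeg3 hclean (by omega) (by omega)
  have g3 : 2 * (sph 3).ncard ≤ (sph 4).ncard := sphere_growth hdeg3 hclean (by omega) (by omega)
  have hdisj : ∀ i j : ℕ, i ≠ j → Disjoint (sph i) (sph j) := by
    intro i j hij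
    rw [Set.disjoint_left]
    rintro x ⟨-, hx⟩ ⟨-, hx'⟩
    exact hij (hx ▸ hx' ▸ rfl)
  have hsub : (((sph 0 ∪ sph 1) ∪ sph 2) ∪ sph 3) ∪ sph 4 ⊆
      {x | Γ.Reachable u x ∧ Γ.dist u x ≤ 4} := by
    rintro x ((((⟨hr, hd⟩ | ⟨hr, hd⟩) | ⟨hr, hd⟩) | ⟨hr, hd⟩) | ⟨hr, hd⟩) <;>
      exact ⟨hr, by omega⟩
  have e1 : ((sph 0 ∪ sph 1)).ncard = (sph 0).ncard + (sph 1).ncard :=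
    Set.ncard_union_eq (hdisj 0 1 (by omega)) (Set.toFinite _) (Set.toFinite _)
  have e2 : ((sph 0 ∪ sph 1) ∪ sph 2).ncard = (sph 0 ∪ sph 1).ncard + (sph 2).ncard :=
    Set.ncard_union_eq (Set.disjoint_union_left.mpr ⟨hdisj 0 2 (by omega), hdisj 1 2 (by omega)⟩)
      (Set.toFinite _) (Set.toFinite _)
  have e3 : (((sph 0 ∪ sph 1) ∪ sph 2) ∪ sph 3).ncard
      = ((sph 0 ∪ sph 1) ∪ sph 2).ncard + (sph 3).ncard :=
    Set.ncard_union_eq (Set.disjoint_union_left.mpr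
      ⟨Set.disjoint_union_left.mpr ⟨hdisj 0 3 (by omega), hdisj 1 3 (by omega)⟩,
        hdisj 2 3 (by omega)⟩) (Set.toFinite _) (Set.toFinite _)
  have e4 : ((((sph 0 ∪ sph 1) ∪ sph 2) ∪ sph 3) ∪ sph 4).ncard
      = (((sph 0 ∪ sph 1) ∪ sph 2) ∪ sph 3).ncard + (sph 4).ncard :=
    Set.ncard_union_eq (Set.disjoint_union_left.mpr
      ⟨Set.disjoint_union_left.mpr ⟨Set.disjoint_union_left.mpr
        ⟨hdisj 0 4 (by omega), hdisj 1 4 (by omega)⟩, hdisj 2 4 (by omega)⟩,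
        hdisj 3 4 (by omega)⟩) (Set.toFinite _) (Set.toFinite _)
  have hfinal := Set.ncard_le_ncard hsub (Set.toFinite _)
  omega

end Ball3


def valHom {n : ℕ} {G : SimpleGraph (Fin n)} (S : Set (Fin n)) : (G.induce S) →g G :=
  ⟨Subtype.val, fun {a b} h => h⟩

lemma valHom_apply {n : ℕ} {G : SimpleGraph (Fin n)} (S : Set (Fin n)) (a : S) :
    valHom (G := G) S a = a.val := rfl

lemma valHom_injective {n : ℕ} {G : SimpleGraph (Fin n)} (S : Set (Fin n)) :
    Function.Injective (valHom (G := G) S) := fun a b h => Subtype.val_injective h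

lemma key_side {n : ℕ} {G : SimpleGraph (Fin n)} (hG : IsCubic G) {S T : Set (Fin n)}
    (hb : IsBisection S T) (hmin : cutSize G S T = bisectionWidth G)
    (hcut : n ≤ 10 * cutSize G S T)
    (hcyc : ∀ ℓ : ℕ, ℓ ≤ 20 → (({v : Fin n | OnCycleOfLength G ℓ v}).ncard : ℝ) ≤ Real.log n)
    (hn : 406425601 ≤ n) :
    HasClosePairOfSmallDegree G S := by
  classical
  by_contra hclose
  set Γ : SimpleGraph S := G.induce S with hΓ
  have hcompl := bisection_compl hb
  have hScard : 2 * S.ncard = n := bisection_card hb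
  have hcut4 : 4 ≤ cutSize G S T := by omega
  have hnoiso : ∀ u : S, 1 ≤ inducedDegree G S u := no_isolated hG hb hmin hcut4
  set W : Set S := {u : S | inducedDegree G S u ≤ 2} with hW
  have hWbound : n ≤ 30 * W.ncard := by
    have h1 : cutSize G S Sᶜ ≤ 3 * W.ncard := cut_le_three_mul hG S
    rw [← hcompl] at h1
    omega
  -- far apart
  have hfar : ∀ u : S, u ∈ W → ∀ x : S, x ≠ u → Γ.Reachable u x → Γ.dist u x ≤ 8 → x ∉ W := by
    intro u hu x hxu hreach hdist hx
    exact hclose ⟨u, x, fun h => hxu h.symm, hu, hx, hreach, hdist⟩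
  have hdeg3 : ∀ u : S, u ∈ W →
      ∀ x : S, x ≠ u → Γ.Reachable u x → Γ.dist u x ≤ 8 → (Γ.neighborSet x).ncard = 3 := by
    intro u hu x hxu hreach hdist
    have h1 : ¬(inducedDegree G S x ≤ 2) := hfar u hu x hxu hreach hdist
    have h2 : inducedDegree G S x ≤ 3 := inducedDegree_le_three hG S x
    have h3 : inducedDegree G S x = (Γ.neighborSet x).ncard := rfl
    omega
  set ball : S → Set S := fun u => {x : S | Γ.Reachable u x ∧ Γ.dist u x ≤ 4} with hball
  have hdisj : ∀ u ∈ W, ∀ w ∈ W, u ≠ w → Disjoint (ball u) (ball w) := by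
    intro u hu w hw huw
    rw [Set.disjoint_left]
    rintro x ⟨hru, hdu⟩ ⟨hrw, hdw⟩
    refine hfar u hu w (fun h => huw h.symm) (hru.trans hrw.symm) ?_ hw
    calc Γ.dist u w ≤ Γ.dist u x + Γ.dist x w := reach_dist_triangle hru hrw.symm
      _ ≤ 4 + 4 := by
          have : Γ.dist x w = Γ.dist w x := SimpleGraph.dist_comm
          omega
      _ = 8 := rfl
  set Dirty : Set S := {u ∈ W | ∃ x ∈ ball u, ∃ ℓ, ℓ ≤ 20 ∧ OnCycleOfLength G ℓ x.val} with hDirty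
  set Clean : Set S := W \ Dirty with hClean
  -- clean balls are big
  have hbig : ∀ u ∈ Clean, 16 ≤ (ball u).ncard := by
    rintro u ⟨huW, huD⟩
    apply ball_sixteen
    · have := hnoiso u
      have h3 : inducedDegree G S u = (Γ.neighborSet u).ncard := rfl
      omega
    · exact hdeg3 u huW
    · intro c γ hγ hlen hsupp
      apply huD
      refine ⟨huW, c, hsupp c (SimpleGraph.Walk.start_mem_support γ), γ.length, hlen, ?_⟩
      -- map the cycle into G
      refine ⟨valHom S c, γ.map (valHom S), ?_, SimpleGraph.Walk.length_map _ _, ?_⟩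
      · exact SimpleGraph.Walk.IsCycle.map (valHom_injective S) hγ
      · rw [SimpleGraph.Walk.support_map]
        exact List.mem_map.mpr ⟨c, γ.start_mem_support, rfl⟩
  -- counting clean balls
  have hCleanBound : 32 * Clean.ncard ≤ n := by
    have hfinC : Clean.Finite := Set.toFinite _
    set CF : Finset S := hfinC.toFinset with hCF
    have hdisjF : ∀ u ∈ CF, ∀ w ∈ CF, u ≠ w →
        Disjoint (Set.toFinite (ball u)).toFinset (Set.toFinite (ball w)).toFinset := by
      intro u hu w hw huw
      rw [Set.Finite.mem_toFinset] at hu hw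
      rw [Finset.disjoint_left]
      intro x hx hx'
      rw [Set.Finite.mem_toFinset] at hx hx'
      exact Set.disjoint_left.mp (hdisj u hu.1 w hw.1 huw) hx hx'
    have hbi := Finset.card_biUnion hdisjF
    have hsum : ∀ u ∈ CF, 16 ≤ (Set.toFinite (ball u)).toFinset.card := by
      intro u hu
      rw [Set.Finite.mem_toFinset] at hu
      rw [← Set.ncard_eq_toFinset_card _ (Set.toFinite (ball u))]
      exact hbig u hu
    have h16 : 16 * CF.card ≤ (CF.biUnion fun u => (Set.toFinite (ball u)).toFinset).card := by
      rw [hbi]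
      calc 16 * CF.card = ∑ _u ∈ CF, 16 := by rw [Finset.sum_const, smul_eq_mul, mul_comm]
        _ ≤ ∑ u ∈ CF, (Set.toFinite (ball u)).toFinset.card := Finset.sum_le_sum hsum
    have hle : (CF.biUnion fun u => (Set.toFinite (ball u)).toFinset).card ≤ Fintype.card S :=
      Finset.card_le_card (Finset.subset_univ _) |>.trans (by rw [Finset.card_univ])
    have hCard : Fintype.card S = S.ncard := by
      rw [Set.ncard_eq_toFinset_card', Set.toFinset_card]
    have hCFcard : CF.card = Clean.ncard := by
      rw [← Set.ncard_eq_toFinset_card _ hfinC]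
    omega
  -- dirty vertices inject into short-cycle vertices
  set Y : Set (Fin n) := {v : Fin n | ∃ ℓ, ℓ ≤ 20 ∧ OnCycleOfLength G ℓ v} with hY
  have hDirtyBound : Dirty.ncard ≤ Y.ncard := by
    have hch : ∀ u ∈ Dirty, ∃ x : S, x ∈ ball u ∧ x.val ∈ Y := by
      rintro u ⟨-, x, hx, ℓ, hℓ, hcycle⟩
      exact ⟨x, hx, ℓ, hℓ, hcycle⟩
    choose f hf1 hf2 using hch
    have : Dirty.ncard ≤ (Subtype.val '' (Set.univ : Set S) ∩ Y).ncard := by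
      apply Set.ncard_le_ncard_of_injOn (fun u => if h : u ∈ Dirty then (f u h).val else u.val)
      · intro u hu
        simp only [dif_pos hu]
        exact ⟨⟨f u hu, trivial, rfl⟩, hf2 u hu⟩
      · intro u hu w hw heq
        simp only [dif_pos hu, dif_pos hw] at heq
        have hfeq : f u hu = f w hw := Subtype.val_injective heq
        by_contra huw
        have := Set.disjoint_left.mp (hdisj u hu.1 w hw.1 huw) (hf1 u hu)
        rw [hfeq] at this
        exact this (hf1 w hw)
    calc Dirty.ncard ≤ (Subtype.val '' (Set.univ : Set S) ∩ Y).ncard := this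
      _ ≤ Y.ncard := Set.ncard_le_ncard Set.inter_subset_right (Set.toFinite _)
  -- Y is small: at most 21 log n
  have hYsmall : (Y.ncard : ℝ) ≤ 21 * Real.log n := by
    have hsub : Y.toFinset ⊆ (Finset.range 21).biUnion
        (fun ℓ => ({v : Fin n | OnCycleOfLength G ℓ v}).toFinset) := by
      intro v hv
      rw [Set.mem_toFinset] at hv
      obtain ⟨ℓ, hℓ, hcyc'⟩ := hv
      rw [Finset.mem_biUnion]
      exact ⟨ℓ, Finset.mem_range.mpr (by omega), Set.mem_toFinset.mpr hcyc'⟩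
    have h1 : Y.toFinset.card ≤
        ∑ ℓ ∈ Finset.range 21, ({v : Fin n | OnCycleOfLength G ℓ v}).toFinset.card :=
      (Finset.card_le_card hsub).trans (Finset.card_biUnion_le)
    have h2 : (Y.ncard : ℝ) ≤
        ∑ ℓ ∈ Finset.range 21, (({v : Fin n | OnCycleOfLength G ℓ v}).ncard : ℝ) := by
      rw [Set.ncard_eq_toFinset_card']
      push_cast
      calc (Y.toFinset.card : ℝ) ≤
          ((∑ ℓ ∈ Finset.range 21, ({v : Fin n | OnCycleOfLength G ℓ v}).toFinset.card : ℕ) : ℝ) :=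
            Nat.cast_le.mpr h1
        _ = _ := by
            push_cast
            apply Finset.sum_congr rfl
            intro ℓ _
            rw [Set.ncard_eq_toFinset_card']
    calc (Y.ncard : ℝ) ≤ ∑ ℓ ∈ Finset.range 21, (({v : Fin n | OnCycleOfLength G ℓ v}).ncard : ℝ) := h2
      _ ≤ ∑ _ℓ ∈ Finset.range 21, Real.log n := by
          apply Finset.sum_le_sum
          intro ℓ hℓ
          exact hcyc ℓ (by have := Finset.mem_range.mp hℓ; omega)
      _ = 21 * Real.log n := by
          rw [Finset.sum_const, Finset.card_range, nsmul_eq_mul]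
          norm_num
  -- final arithmetic
  have hWC : W.ncard ≤ Clean.ncard + Dirty.ncard := by
    have : W ⊆ Clean ∪ Dirty := by
      intro u hu
      by_cases h : u ∈ Dirty
      · exact Or.inr h
      · exact Or.inl ⟨hu, h⟩
    calc W.ncard ≤ (Clean ∪ Dirty).ncard := Set.ncard_le_ncard this (Set.toFinite _)
      _ ≤ Clean.ncard + Dirty.ncard := Set.ncard_union_le _ _
  have hnD : n ≤ 480 * Dirty.ncard := by omega
  have hlogn : (n : ℝ) ≤ 10080 * Real.log n := by
    have h1 : (n : ℝ) ≤ 480 * Dirty.ncard := by exact_mod_cast hnD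
    have h2 : (Dirty.ncard : ℝ) ≤ 21 * Real.log n := le_trans (Nat.cast_le.mpr hDirtyBound) hYsmall
    nlinarith
  -- log n ≤ 2 sqrt n
  have hnpos : (0 : ℝ) < n := by positivity
  have hsqrt : Real.log n ≤ 2 * Real.sqrt n := by
    have h1 : Real.log (Real.sqrt n) ≤ Real.sqrt n - 1 :=
      Real.log_le_sub_one_of_pos (Real.sqrt_pos.mpr hnpos)
    have h2 : Real.log (Real.sqrt n) = Real.log n / 2 := Real.log_sqrt (le_of_lt hnpos)
    have h3 : (0:ℝ) ≤ Real.sqrt n := Real.sqrt_nonneg _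
    linarith
  have hfin : (n : ℝ) ≤ 20160 * Real.sqrt n := by linarith
  have hsq : Real.sqrt n * Real.sqrt n = n := Real.mul_self_sqrt (le_of_lt hnpos)
  have hbig : (406425601 : ℝ) ≤ n := by exact_mod_cast hn
  nlinarith [Real.sqrt_nonneg (n:ℝ)]


/-- For all large enough even `n`: in any typical 3-regular graph on `n` vertices with a
minimal bisection `(V1, V2)`, each side contains two distinct vertices of degree at most
two (in the induced subgraph) at distance at most eight (in the induced subgraph). -/
theorem statement6 :
    ∃ N : ℕ, ∀ n : ℕ, N ≤ n → Even n →
      ∀ G : SimpleGraph (Fin n), IsCubic G → Typical G →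
        ∀ V1 V2 : Set (Fin n), IsMinimalBisection G V1 V2 →
          HasClosePairOfSmallDegree G V1 ∧ HasClosePairOfSmallDegree G V2 := by
  refine ⟨406425601, fun n hn _heven G hG htyp V1 V2 hmb => ?_⟩
  obtain ⟨hb, hmin⟩ := hmb
  have hcutR : (n : ℝ) ≤ 10 * (cutSize G V1 V2 : ℝ) := by
    have h1 := htyp.1
    rw [← hmin] at h1
    norm_num at h1
    linarith
  have hcut : n ≤ 10 * cutSize G V1 V2 := by exact_mod_cast hcutR
  have hb2 : IsBisection V2 V1 := ⟨Set.union_comm V2 V1 ▸ hb.1, hb.2.1.symm, hb.2.2.symm⟩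
  have hmin2 : cutSize G V2 V1 = bisectionWidth G := (cutSize_comm G V2 V1).trans hmin
  have hcut2 : n ≤ 10 * cutSize G V2 V1 := by rw [cutSize_comm G V2 V1]; exact hcut
  exact ⟨key_side hG hb hmin hcut htyp.2 hn, key_side hG hb2 hmin2 hcut2 htyp.2 hn⟩
end

section
/- There exists N such that for every even n ≥ N the following holds: if G is a typical simple 3-regular graph on n vertices and (V1, V2) is a minimal bisection of G, then for each i ∈ {1, 2} the number of vertices of degree exactly one in G[V_i] is at most 19. -/
open SimpleGraph

open SimpleGraph Finset
set_option linter.unusedSectionVars false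

set_option linter.unusedSectionVars false

variable {V : Type*} [Fintype V] [DecidableEq V] (G : SimpleGraph V) [DecidableRel G.Adj]

/-- number of ordered adjacent pairs in S × T -/
def E2 (S T : Finset V) : ℕ := ((S ×ˢ T).filter fun p => G.Adj p.1 p.2).card

def nav (S : Finset V) (v : V) : ℕ := (S.filter fun u => G.Adj v u).card

lemma E2_eq_sum (S T : Finset V) : E2 G S T = ∑ v ∈ S, nav G T v := by
  classical
  unfold E2 nav
  rw [Finset.card_filter, Finset.sum_product]
  congr 1; ext a
  rw [Finset.card_filter]

lemma E2_comm (S T : Finset V) : E2 G S T = E2 G T S := by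
  classical
  unfold E2
  apply Finset.card_bij (fun p _ => p.swap)
  · rintro ⟨a,b⟩ h
    simp only [Finset.mem_filter, Finset.mem_product] at h ⊢
    exact ⟨⟨h.1.2, h.1.1⟩, h.2.symm⟩
  · rintro ⟨a,b⟩ _ ⟨c,d⟩ _ h
    simpa [Prod.ext_iff, and_comm] using h
  · rintro ⟨a,b⟩ h
    refine ⟨⟨b,a⟩, ?_, rfl⟩
    simp only [Finset.mem_filter, Finset.mem_product] at h ⊢
    exact ⟨⟨h.1.2, h.1.1⟩, h.2.symm⟩

lemma nav_union {S T : Finset V} (h : Disjoint S T) (v : V) :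
    nav G (S ∪ T) v = nav G S v + nav G T v := by
  unfold nav
  rw [Finset.filter_union, Finset.card_union_of_disjoint]
  exact Finset.disjoint_filter_filter h

lemma nav_le (S : Finset V) (v : V) : nav G S v ≤ nav G Finset.univ v :=
  Finset.card_le_card (Finset.filter_subset_filter _ (Finset.subset_univ S))

lemma nav_univ_of_cubic (h : IsCubic G) (v : V) : nav G Finset.univ v = 3 := by
  unfold nav
  have h3 := h v
  rw [← Set.ncard_coe_finset]
  convert h3 using 2
  ext u
  simp [SimpleGraph.mem_neighborSet]

lemma cubic_split (h : IsCubic G) (S : Finset V) (v : V) :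
    nav G S v + nav G Sᶜ v = 3 := by
  rw [← nav_union G (disjoint_compl_right) v, Finset.union_compl, nav_univ_of_cubic G h]

lemma cutSize_coe (S T : Finset V) : cutSize G ↑S ↑T = E2 G S T := by
  unfold cutSize E2
  rw [← Set.ncard_coe_finset]
  congr 1
  ext ⟨a,b⟩
  simp [and_assoc]

lemma nav_mono {T T' : Finset V} (h : T ⊆ T') (v : V) : nav G T v ≤ nav G T' v :=
  Finset.card_le_card (Finset.filter_subset_filter _ h)

lemma E2_mono_right {T T' : Finset V} (S : Finset V) (h : T ⊆ T') : E2 G S T ≤ E2 G S T' := by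
  rw [E2_eq_sum, E2_eq_sum]
  exact Finset.sum_le_sum fun v _ => nav_mono G h v

lemma handshake (h : IsCubic G) (S : Finset V) :
    3 * S.card = E2 G S S + E2 G S Sᶜ := by
  rw [E2_eq_sum, E2_eq_sum, ← Finset.sum_add_distrib]
  rw [Finset.sum_congr rfl fun v _ => cubic_split G h S v, Finset.sum_const, smul_eq_mul,
    Nat.mul_comm]

lemma E2_union_left {W P : Finset V} (h : Disjoint W P) (T : Finset V) :
    E2 G (W ∪ P) T = E2 G W T + E2 G P T := by
  rw [E2_eq_sum, E2_eq_sum, E2_eq_sum, Finset.sum_union h]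

lemma E2_union_right {W P : Finset V} (h : Disjoint W P) (S : Finset V) :
    E2 G S (W ∪ P) = E2 G S W + E2 G S P := by
  rw [E2_comm, E2_union_left G h, E2_comm G W S, E2_comm G P S]

lemma E2_square_lower {W P : Finset V} (h : Disjoint W P) :
    E2 G W W + E2 G P P + 2 * E2 G P W ≤ E2 G (W ∪ P) (W ∪ P) := by
  rw [E2_union_left G h, E2_union_right G h, E2_union_right G h, E2_comm G W P]
  omega

lemma E2_remove {S S1 : Finset V} (h : S1 ⊆ S) :
    E2 G S S ≤ E2 G (S \ S1) (S \ S1) + 2 * ∑ u ∈ S1, nav G S u := by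
  have hd : Disjoint (S \ S1) S1 := Finset.sdiff_disjoint
  have hu : (S \ S1) ∪ S1 = S := Finset.sdiff_union_of_subset h
  have e1 : E2 G S S = E2 G (S \ S1) S + E2 G S1 S := by rw [← hu, E2_union_left G hd, hu]
  have e2 : E2 G (S \ S1) S = E2 G (S \ S1) (S \ S1) + E2 G (S \ S1) S1 := by
    rw [E2_comm G (S \ S1) S]
    nth_rewrite 1 [← hu]
    rw [E2_union_left G hd, E2_comm G (S \ S1) (S \ S1), E2_comm G S1 (S \ S1)]
  have e3 : E2 G (S \ S1) S1 ≤ E2 G S1 S := by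
    rw [E2_comm]; exact E2_mono_right G S1 Finset.sdiff_subset
  have e4 : E2 G S1 S = ∑ u ∈ S1, nav G S u := E2_eq_sum G S1 S
  omega

lemma E2_singleton_left (u : V) (T : Finset V) : E2 G {u} T = nav G T u := by
  rw [E2_eq_sum, Finset.sum_singleton]

lemma path_E2 {u v : V} (p : G.Walk u v) (hp : p.IsPath) :
    2 * p.length ≤ E2 G p.support.toFinset p.support.toFinset := by
  induction p with
  | nil => simp
  | @cons a b c h q ih =>
    rw [SimpleGraph.Walk.cons_isPath_iff] at hp
    have hq := ih hp.1
    have hnot : a ∉ q.support.toFinset := by simpa using hp.2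
    have hins : (SimpleGraph.Walk.cons h q).support.toFinset
        = q.support.toFinset ∪ {a} := by
      rw [SimpleGraph.Walk.support_cons, List.toFinset_cons, Finset.insert_eq, Finset.union_comm]
    rw [hins]
    have hd : Disjoint q.support.toFinset ({a} : Finset V) := by
      simp [Finset.disjoint_singleton_right, hnot]
    have hlow := E2_square_lower G (P := {a}) hd
    have hnavge : 1 ≤ E2 G {a} q.support.toFinset := by
      rw [E2_singleton_left]
      unfold nav
      have hb : b ∈ q.support.toFinset.filter (fun x => G.Adj a x) := by
        simp [SimpleGraph.Walk.start_mem_support, h]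
      exact Finset.card_pos.2 ⟨b, hb⟩
    simp only [SimpleGraph.Walk.length_cons]
    omega

lemma isBisection_coe {F : Finset V} (h : 2 * F.card = Fintype.card V) :
    IsBisection (↑F : Set V) ↑(Fᶜ) := by
  refine ⟨?_, ?_, ?_⟩
  · rw [Finset.coe_compl]
    exact Set.union_compl_self _
  · rw [Finset.coe_compl]
    exact disjoint_compl_right
  · rw [Set.ncard_coe_finset, Set.ncard_coe_finset, Finset.card_compl]
    omega

lemma bisection_card_s7 {F : Finset V} (h : IsBisection (↑F : Set V) ↑(Fᶜ)) :
    2 * F.card = Fintype.card V := by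
  have h3 := h.2.2
  rw [Set.ncard_coe_finset, Set.ncard_coe_finset, Finset.card_compl] at h3
  have hle : F.card ≤ Fintype.card V := Finset.card_le_univ F
  omega

lemma bw_le {F : Finset V} (hb : IsBisection (↑F : Set V) ↑(Fᶜ)) (W : Finset V)
    (hW : W.card = F.card) : bisectionWidth G ≤ E2 G W Wᶜ := by
  have hc : 2 * W.card = Fintype.card V := by rw [hW]; exact bisection_card_s7 hb
  refine Nat.sInf_le ⟨↑W, ↑(Wᶜ), isBisection_coe hc, (cutSize_coe G W Wᶜ)⟩

/-- The key contradiction: a strictly denser half contradicts minimality. -/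
lemma swap_contra (hcubic : IsCubic G) {F W : Finset V}
    (hmin : IsMinimalBisection G ↑F ↑(Fᶜ))
    (hWcard : W.card = F.card)
    (hgain : E2 G F F < E2 G W W) : False := by
  have hb := hmin.1
  have hbw : cutSize G ↑F ↑(Fᶜ) = bisectionWidth G := hmin.2
  rw [cutSize_coe] at hbw
  have h1 : bisectionWidth G ≤ E2 G W Wᶜ := bw_le G hb W hWcard
  have h2 := handshake G hcubic F
  have h3 := handshake G hcubic W
  rw [hWcard] at h3
  omega

lemma improve (hcubic : IsCubic G) {F : Finset V} (hmin : IsMinimalBisection G ↑F ↑(Fᶜ))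
    {S1 P : Finset V} (hS1F : S1 ⊆ F) (hPF : P ⊆ Fᶜ) (hcard : S1.card = P.card)
    (hlt : 2 * ∑ u ∈ S1, nav G F u < E2 G P P + 2 * E2 G P (F \ S1)) : False := by
  have hdisj : Disjoint (F \ S1) P := by
    exact (disjoint_compl_right.mono_right hPF).mono_left Finset.sdiff_subset
  have hWcard : ((F \ S1) ∪ P).card = F.card := by
    rw [Finset.card_union_of_disjoint hdisj, Finset.card_sdiff_of_subset hS1F]
    have := Finset.card_le_card hS1F
    omega
  have h1 := E2_square_lower G hdisj
  have h2 := E2_remove G hS1F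
  exact swap_contra G hcubic hmin hWcard (by omega)

lemma nav_sdiff_not_adj {S : Finset V} {z u : V} (h : ¬ G.Adj z u) :
    nav G (S \ {u}) z = nav G S z := by
  unfold nav
  congr 1
  ext x
  simp only [Finset.mem_filter, Finset.mem_sdiff, Finset.mem_singleton]
  constructor
  · rintro ⟨⟨h1, _⟩, h2⟩; exact ⟨h1, h2⟩
  · rintro ⟨h1, h2⟩
    refine ⟨⟨h1, ?_⟩, h2⟩
    rintro rfl; exact h h2

/-- Step I: if one side has ≥ 4 vertices of induced degree 1, the other side has
induced min-degree ≥ 2. -/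
lemma mindeg (hcubic : IsCubic G) {F : Finset V} (hmin : IsMinimalBisection G ↑F ↑(Fᶜ))
    (hD : 4 ≤ (F.filter fun v => nav G F v = 1).card) :
    ∀ z ∈ Fᶜ, 2 ≤ nav G Fᶜ z := by
  intro z hz
  by_contra hlt
  push_neg at hlt
  have hsplit := cubic_split G hcubic F z
  have hnavF : 2 ≤ nav G F z := by omega
  -- pick u in D not adjacent to z
  have hcardN : (Finset.univ.filter fun v => G.Adj z v).card = 3 := nav_univ_of_cubic G hcubic z
  have hex : ((F.filter fun v => nav G F v = 1) \ (Finset.univ.filter fun v => G.Adj z v)).Nonempty := by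
    rw [← Finset.card_pos]
    have := Finset.le_card_sdiff (Finset.univ.filter fun v => G.Adj z v) (F.filter fun v => nav G F v = 1)
    omega
  obtain ⟨u, hu⟩ := hex
  rw [Finset.mem_sdiff, Finset.mem_filter] at hu
  have hnadj : ¬ G.Adj z u := by
    intro h; exact hu.2 (by simp [h])
  refine improve G hcubic hmin (S1 := {u}) (P := {z}) ?_ ?_ ?_ ?_
  · simpa using hu.1.1
  · simpa using hz
  · simp
  · rw [Finset.sum_singleton, hu.1.2, E2_singleton_left, E2_singleton_left,
      nav_sdiff_not_adj G hnadj]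
    have hzz : nav G ({z} : Finset V) z = 0 := by
      simp [nav, Finset.filter_singleton]
    omega

lemma cut_eq_A (hcubic : IsCubic G) {F : Finset V} (hmd : ∀ z ∈ Fᶜ, 2 ≤ nav G Fᶜ z) :
    E2 G F Fᶜ = (Fᶜ.filter fun z => nav G Fᶜ z = 2).card := by
  rw [E2_comm, E2_eq_sum, Finset.card_filter]
  apply Finset.sum_congr rfl
  intro z hz
  have h1 := cubic_split G hcubic F z
  have h2 := hmd z hz
  have h3 : nav G Fᶜ z ≤ 3 := by
    have := nav_le G Fᶜ z
    rw [nav_univ_of_cubic G hcubic] at this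
    exact this
  by_cases h : nav G Fᶜ z = 2 <;> simp [h] <;> omega

/-- Case YES: a short connection within `Fᶜ` between two degree-2 vertices
contradicts minimality, when `F` has ≥ 20 degree-1 vertices. -/
lemma caseYES (hcubic : IsCubic G) {F : Finset V} (hmin : IsMinimalBisection G ↑F ↑(Fᶜ))
    (hD : 20 ≤ (F.filter fun v => nav G F v = 1).card)
    {w w' : V} (hw : w ∈ Fᶜ) (hw' : w' ∈ Fᶜ)
    (hwA : nav G Fᶜ w = 2) (hw'A : nav G Fᶜ w' = 2) (hne : w ≠ w')
    (p : G.Walk w w') (hsupp : ∀ x ∈ p.support, x ∈ Fᶜ) (hlen : p.length ≤ 12) : False := by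
  classical
  set q := p.bypass with hq
  have hqpath : q.IsPath := p.bypass_isPath
  have hqsupp : ∀ x ∈ q.support, x ∈ Fᶜ := fun x hx => hsupp x (p.support_bypass_subset hx)
  have hqlen : q.length ≤ 12 := le_trans p.length_bypass_le hlen
  set P := q.support.toFinset with hP
  have hPcard : P.card = q.length + 1 := by
    rw [hP, List.toFinset_card_of_nodup hqpath.support_nodup, SimpleGraph.Walk.length_support]
  have hPF : P ⊆ Fᶜ := by
    intro x hx
    exact hqsupp x (List.mem_toFinset.1 hx)
  have hwP : w ∈ P := List.mem_toFinset.2 q.start_mem_support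
  have hw'P : w' ∈ P := List.mem_toFinset.2 q.end_mem_support
  -- neighbours of w, w' in F
  have hnavFw : nav G F w = 1 := by
    have := cubic_split G hcubic F w; omega
  have hnavFw' : nav G F w' = 1 := by
    have := cubic_split G hcubic F w'; omega
  obtain ⟨x, hx⟩ : (F.filter fun v => G.Adj w v).Nonempty := by
    rw [← Finset.card_pos]; unfold nav at hnavFw; omega
  obtain ⟨x', hx'⟩ : (F.filter fun v => G.Adj w' v).Nonempty := by
    rw [← Finset.card_pos]; unfold nav at hnavFw'; omega
  rw [Finset.mem_filter] at hx hx'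
  -- the forbidden set
  set N := (Finset.univ.filter fun v => G.Adj w v) ∪ (Finset.univ.filter fun v => G.Adj w' v)
    with hN
  have hNcard : N.card ≤ 6 := by
    refine le_trans (Finset.card_union_le _ _) ?_
    have e1 : (Finset.univ.filter fun v => G.Adj w v).card = 3 := nav_univ_of_cubic G hcubic w
    have e2 : (Finset.univ.filter fun v => G.Adj w' v).card = 3 := nav_univ_of_cubic G hcubic w'
    omega
  -- choose S1
  have hbig : q.length + 1 ≤ ((F.filter fun v => nav G F v = 1) \ N).card := by
    have := Finset.le_card_sdiff N (F.filter fun v => nav G F v = 1)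
    omega
  obtain ⟨S1, hS1sub, hS1card⟩ := Finset.exists_subset_card_eq hbig
  have hS1D : S1 ⊆ (F.filter fun v => nav G F v = 1) \ N := hS1sub
  have hS1F : S1 ⊆ F := fun u hu => (Finset.mem_filter.1 (Finset.mem_sdiff.1 (hS1D hu)).1).1
  have hS1nav : ∀ u ∈ S1, nav G F u = 1 :=
    fun u hu => (Finset.mem_filter.1 (Finset.mem_sdiff.1 (hS1D hu)).1).2
  have hS1N : ∀ u ∈ S1, u ∉ N := fun u hu => (Finset.mem_sdiff.1 (hS1D hu)).2
  -- x, x' in F \ S1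
  have hxS : x ∈ F \ S1 := by
    rw [Finset.mem_sdiff]
    refine ⟨hx.1, fun hxs => hS1N x hxs ?_⟩
    rw [hN, Finset.mem_union]
    exact Or.inl (by simp [hx.2])
  have hx'S : x' ∈ F \ S1 := by
    rw [Finset.mem_sdiff]
    refine ⟨hx'.1, fun hxs => hS1N x' hxs ?_⟩
    rw [hN, Finset.mem_union]
    exact Or.inr (by simp [hx'.2])
  -- E2 P (F \ S1) ≥ 2
  have hcross : 2 ≤ E2 G P (F \ S1) := by
    have hsub : ({(w, x), (w', x')} : Finset (V × V)) ⊆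
        ((P ×ˢ (F \ S1)).filter fun pr => G.Adj pr.1 pr.2) := by
      intro pr hpr
      rw [Finset.mem_insert, Finset.mem_singleton] at hpr
      rcases hpr with rfl | rfl
      · simp only [Finset.mem_filter, Finset.mem_product]
        exact ⟨⟨hwP, hxS⟩, hx.2⟩
      · simp only [Finset.mem_filter, Finset.mem_product]
        exact ⟨⟨hw'P, hx'S⟩, hx'.2⟩
    have hcard2 : ({(w, x), (w', x')} : Finset (V × V)).card = 2 := by
      rw [Finset.card_insert_of_notMem, Finset.card_singleton]
      simp only [Finset.mem_singleton]
      intro hcontra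
      exact hne (congrArg Prod.fst hcontra)
    calc 2 = ({(w, x), (w', x')} : Finset (V × V)).card := hcard2.symm
    _ ≤ _ := Finset.card_le_card hsub
  -- conclude via improve
  refine improve G hcubic hmin hS1F hPF (by rw [hS1card, hPcard]) ?_
  have hsum : ∑ u ∈ S1, nav G F u = q.length + 1 := by
    rw [Finset.sum_congr rfl hS1nav, Finset.sum_const, hS1card, smul_eq_mul, mul_one]
  have hpe : 2 * q.length ≤ E2 G P P := by
    rw [hP]; exact path_E2 G q hqpath
  rw [hsum]
  omega

open SimpleGraph.Walk in
/-- Extension step: a path inside `F2` (min induced degree 2) can be extended at its start,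
or else a short cycle exists within its support. -/
lemma ext_step {F2 : Finset V} (hmd : ∀ z ∈ F2, 2 ≤ nav G F2 z)
    {a w : V} (p : G.Walk a w) (hpath : p.IsPath) (hsupp : ∀ x ∈ p.support, x ∈ F2) :
    (∃ (a' : V), G.Adj a' a ∧ a' ∈ F2 ∧ a' ∉ p.support) ∨
    (∃ (u : V) (c : G.Walk u u), c.IsCycle ∧ c.length ≤ p.length + 1 ∧
      ∀ x ∈ c.support, x ∈ p.support) := by
  classical
  have haF2 : a ∈ F2 := hsupp a p.start_mem_support
  have hnav : 2 ≤ (F2.filter fun u => G.Adj a u).card := hmd a haF2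
  have hnav1 : 1 < (F2.filter fun u => G.Adj a u).card := by omega
  obtain ⟨x, hx, y, hy, hxy⟩ := Finset.one_lt_card.1 hnav1
  rw [Finset.mem_filter] at hx hy
  by_cases hxs : x ∉ p.support
  · exact Or.inl ⟨x, hx.2.symm, hx.1, hxs⟩
  by_cases hys : y ∉ p.support
  · exact Or.inl ⟨y, hy.2.symm, hy.1, hys⟩
  push_neg at hxs hys
  right
  -- both x and y are on the path; p cannot be nil
  cases p with
  | nil =>
    exfalso
    simp only [support_nil, List.mem_singleton] at hxs
    subst hxs
    exact G.irrefl hx.2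
  | @cons _ b _ hab q =>
    rw [cons_isPath_iff] at hpath
    -- choose z ∈ {x, y} with z ≠ b
    obtain ⟨z, hzadj, hzs, hzb⟩ : ∃ z, G.Adj a z ∧ z ∈ (Walk.cons hab q).support ∧ z ≠ b := by
      by_cases hxb : x = b
      · refine ⟨y, hy.2, hys, ?_⟩
        exact fun h => hxy (hxb.trans h.symm)
      · exact ⟨x, hx.2, hxs, hxb⟩
    have hza : z ≠ a := fun h => G.irrefl (h ▸ hzadj)
    set p' := Walk.cons hab q with hp'
    have hzs' : z ∈ p'.support := hzs
    set r := p'.takeUntil z hzs' with hr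
    have hrpath : r.IsPath := by
      have : p'.IsPath := by rw [cons_isPath_iff]; exact hpath
      exact this.takeUntil hzs'
    have hedge : s(a, z) ∉ r.edges := by
      intro hmem
      have hmem' : s(a, z) ∈ p'.edges := edges_takeUntil_subset p' hzs' hmem
      rw [hp', edges_cons, List.mem_cons] at hmem'
      rcases hmem' with heq | hmem''
      · rw [Sym2.eq_iff] at heq
        rcases heq with ⟨_, rfl⟩ | ⟨rfl, rfl⟩
        · exact hzb rfl
        · exact hza rfl
      · exact hpath.2 (snd_mem_support_of_mem_edges q (by rwa [Sym2.eq_swap] at hmem''))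
    have hedge' : s(a, z) ∉ r.reverse.edges := by
      rw [edges_reverse, List.mem_reverse]
      exact hedge
    refine ⟨a, Walk.cons hzadj r.reverse, ?_, ?_, ?_⟩
    · rw [cons_isCycle_iff]
      exact ⟨hrpath.reverse, hedge'⟩
    · have hlen2 : r.length ≤ p'.length := by
        rw [hr]; exact length_takeUntil_le p' hzs'
      rw [length_cons, length_reverse]
      omega
    · intro v hv
      rw [support_cons, List.mem_cons] at hv
      rcases hv with rfl | hv
      · exact p'.start_mem_support
      · rw [support_reverse, List.mem_reverse] at hv
        exact support_takeUntil_subset p' hzs' hv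

/-- Growing a path of length 6 from `w` inside `F2`, or finding a short cycle near `w`. -/
lemma grow {F2 : Finset V} (hmd : ∀ z ∈ F2, 2 ≤ nav G F2 z) {w : V} (hw : w ∈ F2) :
    ∀ k : ℕ, k ≤ 6 →
    (∃ (a : V) (p : G.Walk a w), p.IsPath ∧ (∀ x ∈ p.support, x ∈ F2) ∧ p.length = k) ∨
    (∃ (u : V) (c : G.Walk u u), c.IsCycle ∧ c.length ≤ 20 ∧
      ∃ v, v ∈ c.support ∧ v ∈ F2 ∧ ∃ (qq : G.Walk w v),
        (∀ x ∈ qq.support, x ∈ F2) ∧ qq.length ≤ 6) := by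
  intro k
  induction k with
  | zero =>
    intro _
    exact Or.inl ⟨w, SimpleGraph.Walk.nil, SimpleGraph.Walk.IsPath.nil, by simpa using hw, rfl⟩
  | succ k ih =>
    intro hk
    rcases ih (by omega) with ⟨a, p, hpath, hsupp, hlen⟩ | hcyc
    · rcases ext_step G hmd p hpath hsupp with ⟨a', hadj, ha'F2, ha's⟩ | ⟨u, c, hc, hclen, hcsupp⟩
      · left
        refine ⟨a', SimpleGraph.Walk.cons hadj p, ?_, ?_, ?_⟩
        · rw [SimpleGraph.Walk.cons_isPath_iff]; exact ⟨hpath, ha's⟩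
        · intro x hx
          rw [SimpleGraph.Walk.support_cons, List.mem_cons] at hx
          rcases hx with rfl | hx
          exacts [ha'F2, hsupp x hx]
        · rw [SimpleGraph.Walk.length_cons, hlen]
      · right
        have hus : u ∈ c.support := c.start_mem_support
        have hup : u ∈ p.support := hcsupp u hus
        have hur : u ∈ p.reverse.support := by
          rw [SimpleGraph.Walk.support_reverse, List.mem_reverse]; exact hup
        refine ⟨u, c, hc, by omega, u, hus, hsupp u hup, p.reverse.takeUntil u hur, ?_, ?_⟩
        · intro x hx
          have hmem := SimpleGraph.Walk.support_takeUntil_subset p.reverse hur hx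
          rw [SimpleGraph.Walk.support_reverse, List.mem_reverse] at hmem
          exact hsupp x hmem
        · have hle := SimpleGraph.Walk.length_takeUntil_le p.reverse hur
          rw [SimpleGraph.Walk.length_reverse] at hle
          omega
    · exact Or.inr hcyc

lemma grow_final {F2 : Finset V} (hmd : ∀ z ∈ F2, 2 ≤ nav G F2 z) {w : V} (hw : w ∈ F2) :
    (∃ T : Finset V, T.card = 7 ∧ T ⊆ F2 ∧ w ∈ T ∧ ∀ v ∈ T, ∃ (qq : G.Walk w v),
      (∀ x ∈ qq.support, x ∈ F2) ∧ qq.length ≤ 6) ∨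
    (∃ (u : V) (c : G.Walk u u), c.IsCycle ∧ c.length ≤ 20 ∧
      ∃ v, v ∈ c.support ∧ v ∈ F2 ∧ ∃ (qq : G.Walk w v),
        (∀ x ∈ qq.support, x ∈ F2) ∧ qq.length ≤ 6) := by
  rcases grow G hmd hw 6 le_rfl with ⟨a, p, hpath, hsupp, hlen⟩ | hcyc
  · left
    refine ⟨p.support.toFinset, ?_, ?_, ?_, ?_⟩
    · rw [List.toFinset_card_of_nodup hpath.support_nodup, SimpleGraph.Walk.length_support, hlen]
    · intro x hx; exact hsupp x (List.mem_toFinset.1 hx)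
    · exact List.mem_toFinset.2 p.end_mem_support
    · intro v hv
      have hvp : v ∈ p.support := List.mem_toFinset.1 hv
      have hvr : v ∈ p.reverse.support := by
        rw [SimpleGraph.Walk.support_reverse, List.mem_reverse]; exact hvp
      refine ⟨p.reverse.takeUntil v hvr, ?_, ?_⟩
      · intro x hx
        have hmem := SimpleGraph.Walk.support_takeUntil_subset p.reverse hvr hx
        rw [SimpleGraph.Walk.support_reverse, List.mem_reverse] at hmem
        exact hsupp x hmem
      · have hle := SimpleGraph.Walk.length_takeUntil_le p.reverse hvr
        rw [SimpleGraph.Walk.length_reverse] at hle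
        omega
  · exact Or.inr hcyc

lemma link {F2 : Finset V} {w w' v : V} (q1 : G.Walk w v) (q2 : G.Walk w' v)
    (h1 : ∀ x ∈ q1.support, x ∈ F2) (h2 : ∀ x ∈ q2.support, x ∈ F2)
    (hl1 : q1.length ≤ 6) (hl2 : q2.length ≤ 6) :
    ∃ p : G.Walk w w', (∀ x ∈ p.support, x ∈ F2) ∧ p.length ≤ 12 := by
  refine ⟨q1.append q2.reverse, ?_, ?_⟩
  · intro x hx
    rw [SimpleGraph.Walk.mem_support_append_iff] at hx
    rcases hx with hx | hx
    · exact h1 x hx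
    · rw [SimpleGraph.Walk.support_reverse, List.mem_reverse] at hx
      exact h2 x hx
  · rw [SimpleGraph.Walk.length_append, SimpleGraph.Walk.length_reverse]
    omega

section KeyLemma

variable {n : ℕ}

lemma key (G : SimpleGraph (Fin n)) [DecidableRel G.Adj] (hcubic : IsCubic G)
    (htyp : Typical G) {F : Finset (Fin n)} (hmin : IsMinimalBisection G ↑F ↑(Fᶜ))
    (hn : 3000000 ≤ n) :
    (F.filter fun v => nav G F v = 1).card ≤ 19 := by
  classical
  by_contra hD'
  push_neg at hD'
  have hD : 20 ≤ (F.filter fun v => nav G F v = 1).card := hD'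
  have hmd : ∀ z ∈ Fᶜ, 2 ≤ nav G Fᶜ z := mindeg G hcubic hmin (by omega)
  set A := Fᶜ.filter (fun z => nav G Fᶜ z = 2) with hA
  have hcutA : E2 G F Fᶜ = A.card := cut_eq_A G hcubic hmd
  -- bisection width equals |A|
  have hbw : bisectionWidth G = A.card := by
    rw [← hmin.2, cutSize_coe, hcutA]
  have hAn : (0.1 : ℝ) * n ≤ (A.card : ℝ) := by
    have := htyp.1
    rw [hbw] at this
    convert this using 2 <;> norm_num
  -- Case distinction
  by_cases hCP : ∃ w w', w ∈ A ∧ w' ∈ A ∧ w ≠ w' ∧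
      ∃ p : G.Walk w w', (∀ x ∈ p.support, x ∈ Fᶜ) ∧ p.length ≤ 12
  · obtain ⟨w, w', hw, hw', hne, p, hps, hpl⟩ := hCP
    rw [hA, Finset.mem_filter] at hw hw'
    exact caseYES G hcubic hmin hD hw.1 hw'.1 hw.2 hw'.2 hne p hps hpl
  · -- Case NO
    push_neg at hCP
    have hNO : ∀ w w', w ∈ A → w' ∈ A →
        (∃ p : G.Walk w w', (∀ x ∈ p.support, x ∈ Fᶜ) ∧ p.length ≤ 12) → w = w' := by
      intro w w' hw hw' hex
      obtain ⟨p, hps, hpl⟩ := hex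
      by_contra hne
      exact absurd hpl (not_le.2 (hCP w w' hw hw' hne p hps))
    -- outcome of grow_final for each w in A
    set Bad : Fin n → Prop := fun w => ∃ v, (∃ ℓ ≤ 20, OnCycleOfLength G ℓ v) ∧ v ∈ Fᶜ ∧
      ∃ qq : G.Walk w v, (∀ x ∈ qq.support, x ∈ Fᶜ) ∧ qq.length ≤ 6 with hBadDef
    set GoodT : Fin n → Prop := fun w => ∃ T : Finset (Fin n), T.card = 7 ∧ T ⊆ Fᶜ ∧ w ∈ T ∧
      ∀ v ∈ T, ∃ qq : G.Walk w v, (∀ x ∈ qq.support, x ∈ Fᶜ) ∧ qq.length ≤ 6 with hGoodDef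
    have houtcome : ∀ w ∈ A, GoodT w ∨ Bad w := by
      intro w hw
      rw [hA, Finset.mem_filter] at hw
      rcases grow_final G hmd hw.1 with ⟨T, hT7, hTF, hwT, hTwalk⟩ | ⟨u, c, hc, hcl, v, hvc, hvF, qq, hqs, hql⟩
      · exact Or.inl ⟨T, hT7, hTF, hwT, hTwalk⟩
      · exact Or.inr ⟨v, ⟨c.length, hcl, u, c, hc, rfl, hvc⟩, hvF, qq, hqs, hql⟩
    set Abad := A.filter Bad with hAbad
    set Agood := A \ Abad with hAgood
    have hgood : ∀ w ∈ Agood, GoodT w := by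
      intro w hw
      have hw1 : w ∈ A ∧ w ∉ Abad := Finset.mem_sdiff.1 hw
      rcases houtcome w hw1.1 with h | h
      · exact h
      · exact absurd (Finset.mem_filter.2 ⟨hw1.1, h⟩) hw1.2
    -- bound on Abad
    have hAbadcard : (Abad.card : ℝ) ≤ 21 * Real.log n := by
      set SCb := (Finset.range 21).biUnion
        (fun ℓ => Finset.univ.filter (fun v => OnCycleOfLength G ℓ v)) with hSCb
      set vfun : Fin n → Fin n := fun w => if h : Bad w then h.choose else w with hvfun
      have hvspec : ∀ w, ∀ h : Bad w, (∃ ℓ ≤ 20, OnCycleOfLength G ℓ (vfun w)) ∧ vfun w ∈ Fᶜ ∧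
          ∃ qq : G.Walk w (vfun w), (∀ x ∈ qq.support, x ∈ Fᶜ) ∧ qq.length ≤ 6 := by
        intro w h
        have hvv : vfun w = h.choose := by rw [hvfun]; simp only [dif_pos h]
        rw [hvv]
        exact h.choose_spec
      have hvmem : ∀ w ∈ Abad, vfun w ∈ SCb := by
        intro w hw
        have hb : Bad w := (Finset.mem_filter.1 hw).2
        obtain ⟨⟨ℓ, hℓ, hcyc⟩, _, _⟩ := hvspec w hb
        rw [hSCb, Finset.mem_biUnion]
        exact ⟨ℓ, Finset.mem_range.2 (by omega), Finset.mem_filter.2 ⟨Finset.mem_univ _, hcyc⟩⟩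
      have hvinj : Set.InjOn vfun Abad := by
        intro w hw w' hw' heq
        have hbw : Bad w := (Finset.mem_filter.1 hw).2
        have hbw' : Bad w' := (Finset.mem_filter.1 hw').2
        obtain ⟨_, _, q1, hq1s, hq1l⟩ := hvspec w hbw
        obtain ⟨_, _, q2, hq2s, hq2l⟩ := hvspec w' hbw'
        refine hNO w w' (Finset.mem_filter.1 hw).1 (Finset.mem_filter.1 hw').1 ?_
        refine link G q1 (q2.copy rfl heq.symm) hq1s ?_ hq1l ?_
        · intro x hx
          rw [SimpleGraph.Walk.support_copy] at hx
          exact hq2s x hx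
        · rw [SimpleGraph.Walk.length_copy]
          exact hq2l
      have hcard1 : Abad.card ≤ SCb.card :=
        Finset.card_le_card_of_injOn vfun hvmem hvinj
      have hcard2 : (SCb.card : ℝ) ≤ 21 * Real.log n := by
        have hle := Finset.card_biUnion_le (s := Finset.range 21)
          (t := fun ℓ => Finset.univ.filter (fun v => OnCycleOfLength G ℓ v))
        have hcast : (SCb.card : ℝ) ≤
            ∑ ℓ ∈ Finset.range 21,
              ((Finset.univ.filter (fun v => OnCycleOfLength G ℓ v)).card : ℝ) := by
          rw [hSCb]
          exact_mod_cast hle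
        refine le_trans hcast ?_
        have hterm : ∀ ℓ ∈ Finset.range 21,
            ((Finset.univ.filter (fun v => OnCycleOfLength G ℓ v)).card : ℝ) ≤ Real.log n := by
          intro ℓ hℓ
          have h20 : ℓ ≤ 20 := by
            have := Finset.mem_range.1 hℓ; omega
          have hlogb := htyp.2 ℓ h20
          convert hlogb using 3
          rw [Set.ncard_eq_toFinset_card']
          congr 1
          ext v
          simp
        calc ∑ ℓ ∈ Finset.range 21,
              ((Finset.univ.filter (fun v => OnCycleOfLength G ℓ v)).card : ℝ)
            ≤ ∑ _ℓ ∈ Finset.range 21, Real.log n := Finset.sum_le_sum hterm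
          _ = 21 * Real.log n := by
              rw [Finset.sum_const, Finset.card_range, nsmul_eq_mul]
              norm_num
      calc (Abad.card : ℝ) ≤ (SCb.card : ℝ) := by exact_mod_cast hcard1
        _ ≤ 21 * Real.log n := hcard2
    -- bound on Agood
    have hAgoodcard : 14 * Agood.card ≤ n := by
      set Tfun : Fin n → Finset (Fin n) := fun w => if h : GoodT w then h.choose else ∅ with hTfun
      have hT7 : ∀ w ∈ Agood, (Tfun w).card = 7 := by
        intro w hw
        have h := hgood w hw
        rw [hTfun]; simp only [dif_pos h]
        exact h.choose_spec.1
      have hTF : ∀ w ∈ Agood, Tfun w ⊆ Fᶜ := by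
        intro w hw
        have h := hgood w hw
        rw [hTfun]; simp only [dif_pos h]
        exact h.choose_spec.2.1
      have hTwalk : ∀ w ∈ Agood, ∀ v ∈ Tfun w, ∃ qq : G.Walk w v,
          (∀ x ∈ qq.support, x ∈ Fᶜ) ∧ qq.length ≤ 6 := by
        intro w hw
        have h := hgood w hw
        rw [hTfun]; simp only [dif_pos h]
        exact h.choose_spec.2.2.2
      have hdisj : ∀ w ∈ Agood, ∀ w' ∈ Agood, w ≠ w' → Disjoint (Tfun w) (Tfun w') := by
        intro w hw w' hw' hne
        rw [Finset.disjoint_left]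
        intro v hv hv'
        obtain ⟨q1, hq1s, hq1l⟩ := hTwalk w hw v hv
        obtain ⟨q2, hq2s, hq2l⟩ := hTwalk w' hw' v hv'
        have hwA : w ∈ A := (Finset.mem_sdiff.1 hw).1
        have hw'A : w' ∈ A := (Finset.mem_sdiff.1 hw').1
        exact hne (hNO w w' hwA hw'A (link G q1 q2 hq1s hq2s hq1l hq2l))
      have hbicard : (Agood.biUnion Tfun).card = 7 * Agood.card := by
        rw [Finset.card_biUnion hdisj]
        rw [Finset.sum_congr rfl hT7, Finset.sum_const, smul_eq_mul, Nat.mul_comm]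
      have hbisub : Agood.biUnion Tfun ⊆ Fᶜ := by
        intro v hv
        obtain ⟨w, hw, hvw⟩ := Finset.mem_biUnion.1 hv
        exact hTF w hw hvw
      have hle : 7 * Agood.card ≤ Fᶜ.card := hbicard ▸ Finset.card_le_card hbisub
      have hcompl : Fᶜ.card = n - F.card := by
        rw [Finset.card_compl, Fintype.card_fin]
      have hhalf : 2 * F.card = n := by
        have := bisection_card_s7 hmin.1
        rwa [Fintype.card_fin] at this
      omega
    -- numerics
    have hsplitA : A.card ≤ Agood.card + Abad.card := by
      have hsum := Finset.card_sdiff_add_card_eq_card (Finset.filter_subset Bad A)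
      rw [← hAbad, ← hAgood] at hsum
      omega
    have hlog : Real.log n ≤ 2 * Real.sqrt n := by
      have hnpos : (0 : ℝ) < (n : ℝ) := by
        have : (0:ℕ) < n := by omega
        exact_mod_cast this
      have hspos : 0 < Real.sqrt n := Real.sqrt_pos.2 hnpos
      have h1 : Real.log n = 2 * Real.log (Real.sqrt n) := by
        rw [Real.log_sqrt (le_of_lt hnpos)]; ring
      have h2 : Real.log (Real.sqrt n) ≤ Real.sqrt n - 1 :=
        Real.log_le_sub_one_of_pos hspos
      rw [h1]
      nlinarith
    have hnR : (3000000 : ℝ) ≤ (n : ℝ) := by exact_mod_cast hn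
    have hgR : (Agood.card : ℝ) ≤ (n : ℝ) / 14 := by
      have : (14 * Agood.card : ℝ) ≤ (n : ℝ) := by exact_mod_cast hAgoodcard
      linarith
    have hsR : (A.card : ℝ) ≤ (Agood.card : ℝ) + (Abad.card : ℝ) := by exact_mod_cast hsplitA
    have hs := Real.sq_sqrt (by positivity : (0:ℝ) ≤ (n:ℝ))
    have hsnn := Real.sqrt_nonneg (n : ℝ)
    nlinarith [hs, hsnn, hAn, hAbadcard, hgR, hsR, hlog, hnR]

end KeyLemma

lemma inducedDegree_eq_nav (F : Finset V) (v : V) (hv : v ∈ F) :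
    inducedDegree G (↑F) ⟨v, by simpa using hv⟩ = nav G F v := by
  unfold inducedDegree nav
  have himage : Subtype.val '' ((G.induce (↑F : Set V)).neighborSet ⟨v, by simpa using hv⟩)
      = ↑(F.filter fun u => G.Adj v u) := by
    ext u
    simp only [Set.mem_image, SimpleGraph.mem_neighborSet, Finset.coe_filter, Set.mem_setOf_eq]
    constructor
    · rintro ⟨⟨u', hu'⟩, hadj, rfl⟩
      exact ⟨by simpa using hu', hadj⟩
    · rintro ⟨huF, hadj⟩
      exact ⟨⟨u, by simpa using huF⟩, hadj, rfl⟩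
  have := Set.ncard_image_of_injective
    ((G.induce (↑F : Set V)).neighborSet ⟨v, by simpa using hv⟩) Subtype.val_injective
  rw [← this, himage, Set.ncard_coe_finset]

lemma count_deg1 (F : Finset V) :
    ({v : (↑F : Set V) | inducedDegree G (↑F) v = 1}).ncard
      = (F.filter fun v => nav G F v = 1).card := by
  have himage : Subtype.val '' {v : (↑F : Set V) | inducedDegree G (↑F) v = 1}
      = ↑(F.filter fun v => nav G F v = 1) := by
    ext v
    simp only [Set.mem_image, Set.mem_setOf_eq, Finset.coe_filter]
    constructor
    · rintro ⟨⟨v', hv'⟩, hdeg, rfl⟩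
      have hvF : v' ∈ F := by simpa using hv'
      refine ⟨hvF, ?_⟩
      rw [← inducedDegree_eq_nav G F v' hvF]
      exact hdeg
    · rintro ⟨hvF, hnav⟩
      exact ⟨⟨v, by simpa using hvF⟩, by rw [inducedDegree_eq_nav G F v hvF]; exact hnav, rfl⟩
  have := Set.ncard_image_of_injective
    {v : (↑F : Set V) | inducedDegree G (↑F) v = 1} Subtype.val_injective
  rw [← this, himage, Set.ncard_coe_finset]

/-- For all large enough even `n`: in any typical 3-regular graph on `n` vertices with a
minimal bisection `(V1, V2)`, each side contains at most 19 vertices of degree exactly one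
in the induced subgraph. -/

theorem statement7 :
    ∃ N : ℕ, ∀ n : ℕ, N ≤ n → Even n →
      ∀ G : SimpleGraph (Fin n), IsCubic G → Typical G →
        ∀ V1 V2 : Set (Fin n), IsMinimalBisection G V1 V2 →
          ({v : V1 | inducedDegree G V1 v = 1}).ncard ≤ 19 ∧
          ({v : V2 | inducedDegree G V2 v = 1}).ncard ≤ 19 := by
  classical
  refine ⟨3000000, fun n hN _hEven G hcubic htyp V1 V2 hmin => ?_⟩
  letI : DecidableRel G.Adj := Classical.decRel _
  set F := Finset.univ.filter (· ∈ V1) with hF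
  have hFV1 : (↑F : Set (Fin n)) = V1 := by
    ext x; simp [hF]
  have hV2 : V2 = (↑(Fᶜ) : Set (Fin n)) := by
    rw [Finset.coe_compl, hFV1]
    ext x
    constructor
    · intro hx
      exact Set.disjoint_right.1 hmin.1.2.1 hx
    · intro hx
      have hu : x ∈ V1 ∪ V2 := by rw [hmin.1.1]; trivial
      rcases hu with h | h
      · exact absurd h hx
      · exact h
  rw [← hFV1, hV2] at hmin
  have hmin2 : IsMinimalBisection G ↑(Fᶜ) ↑(Fᶜᶜ) := by
    constructor
    · refine isBisection_coe ?_
      have h2 := bisection_card_s7 hmin.1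
      rw [Fintype.card_fin] at h2 ⊢
      rw [Finset.card_compl, Fintype.card_fin]
      omega
    · have hcc : Fᶜᶜ = F := compl_compl F
      rw [hcc]
      have : cutSize G ↑(Fᶜ) ↑F = cutSize G ↑F ↑(Fᶜ) := by
        rw [cutSize_coe, cutSize_coe, E2_comm]
      rw [this]
      exact hmin.2
  constructor
  · rw [← hFV1, count_deg1 G F]
    exact key G hcubic htyp hmin hN
  · rw [hV2, count_deg1 G Fᶜ]
    exact key G hcubic htyp hmin2 hN
end

section
/- There exists N such that for every even n ≥ N the following holds: if G is a typical simple 3-regular graph on n vertices and (V1, V2) is a minimal bisection of G, then for each i ∈ {1, 2} there exists d ∈ {1, 2, 3, 4} and a collection of at least n/10⁷ pairwise disjoint pairs {u, w} of distinct vertices of V_i such that both u and w have degree two in G[V_i], the distance between u and w in G[V_i] equals d, and there is a path of length d from u to w in G[V_i] all of whose d − 1 internal vertices have degree three in G[V_i]. -/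
open SimpleGraph

/-- The conclusion for one side `S`: there is some `d ∈ {1,2,3,4}` and a collection of at
least `n/10⁷` pairwise disjoint pairs of distinct vertices of degree two in `G[S]` at
distance exactly `d`, joined by a path of length `d` all of whose internal vertices have
degree three in `G[S]`. -/
def HasManyGoodPairs {V : Type*} (G : SimpleGraph V) (S : Set V) (n : ℕ) : Prop :=
  ∃ d : ℕ, 1 ≤ d ∧ d ≤ 4 ∧
    ∃ P : Set (S × S),
      (n : ℝ) / 10 ^ 7 ≤ (P.ncard : ℝ) ∧
      (∀ p ∈ P, p.1 ≠ p.2 ∧ inducedDegree G S p.1 = 2 ∧ inducedDegree G S p.2 = 2 ∧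
        (G.induce S).Reachable p.1 p.2 ∧ (G.induce S).dist p.1 p.2 = d ∧
        ∃ w : (G.induce S).Walk p.1 p.2, w.IsPath ∧ w.length = d ∧
          ∀ x ∈ w.support, x ≠ p.1 → x ≠ p.2 → inducedDegree G S x = 3) ∧
      (∀ p ∈ P, ∀ q ∈ P, p ≠ q →
        ({p.1, p.2} : Set S) ∩ ({q.1, q.2} : Set S) = ∅)

open Finset
set_option linter.unusedSectionVars false
namespace St9
variable {n : ℕ} (G : SimpleGraph (Fin n)) [DecidableRel G.Adj]

/-- degree of `v` into the finset `Y` -/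
def degIn (Y : Finset (Fin n)) (v : Fin n) : ℕ := (Y.filter (fun w => G.Adj v w)).card

/-- ordered edge count between finsets -/
def E (X Y : Finset (Fin n)) : ℕ := ∑ x ∈ X, degIn G Y x

lemma E_eq_sum_sum (X Y : Finset (Fin n)) :
    E G X Y = ∑ x ∈ X, ∑ y ∈ Y, (if G.Adj x y then 1 else 0) := by
  unfold E degIn
  exact Finset.sum_congr rfl fun x _ => Finset.card_filter _ _

lemma E_comm (X Y : Finset (Fin n)) : E G X Y = E G Y X := by
  rw [E_eq_sum_sum, E_eq_sum_sum, Finset.sum_comm]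
  refine Finset.sum_congr rfl fun x _ => Finset.sum_congr rfl fun y _ => ?_
  simp [adj_comm]

lemma E_union_left {X X' : Finset (Fin n)} (Y : Finset (Fin n)) (h : Disjoint X X') :
    E G (X ∪ X') Y = E G X Y + E G X' Y := Finset.sum_union h

lemma degIn_union {Y Y' : Finset (Fin n)} (h : Disjoint Y Y') (v : Fin n) :
    degIn G (Y ∪ Y') v = degIn G Y v + degIn G Y' v := by
  unfold degIn
  rw [Finset.filter_union, Finset.card_union_of_disjoint (Finset.disjoint_filter_filter h)]

lemma E_union_right (X : Finset (Fin n)) {Y Y' : Finset (Fin n)} (h : Disjoint Y Y') :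
    E G X (Y ∪ Y') = E G X Y + E G X Y' := by
  unfold E
  rw [← Finset.sum_add_distrib]
  exact Finset.sum_congr rfl fun x _ => degIn_union G h x

lemma cutSize_coe (X Y : Finset (Fin n)) : cutSize G ↑X ↑Y = E G X Y := by
  have : {p : Fin n × Fin n | p.1 ∈ (X : Set (Fin n)) ∧ p.2 ∈ (Y : Set (Fin n)) ∧ G.Adj p.1 p.2}
      = ↑((X ×ˢ Y).filter (fun p => G.Adj p.1 p.2)) := by
    ext p; simp [and_assoc]
  rw [cutSize, this, Set.ncard_coe_finset, E_eq_sum_sum, ← Finset.sum_product',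
    Finset.card_filter _ _]

lemma cutSize_comm (V1 V2 : Set (Fin n)) : cutSize G V1 V2 = cutSize G V2 V1 := by
  unfold cutSize
  have : {p : Fin n × Fin n | p.1 ∈ V2 ∧ p.2 ∈ V1 ∧ G.Adj p.1 p.2}
      = Prod.swap '' {p : Fin n × Fin n | p.1 ∈ V1 ∧ p.2 ∈ V2 ∧ G.Adj p.1 p.2} := by
    ext ⟨a, b⟩
    constructor
    · rintro ⟨h1, h2, h3⟩; exact ⟨(b, a), ⟨h2, h1, h3.symm⟩, rfl⟩
    · rintro ⟨⟨x, y⟩, ⟨h1, h2, h3⟩, h⟩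
      cases h; exact ⟨h2, h1, h3.symm⟩
  rw [this, Set.ncard_image_of_injective _ Prod.swap_injective]

/-- The key swap inequality: a minimal bisection admits no improving swap. -/
lemma swap_lemma {S T A B : Finset (Fin n)}
    (hpart : S ∪ T = Finset.univ) (hdisj : Disjoint S T) (hcard : S.card = T.card)
    (hmin : cutSize G ↑S ↑T = bisectionWidth G)
    (hAS : A ⊆ S) (hBT : B ⊆ T) (hAB : A.card = B.card) :
    ¬ (E G A (S \ A) + E G B (T \ B) < E G A (T \ B) + E G B (S \ A)) := by
  intro hlt
  set S' := (S \ A) ∪ B with hS'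
  set T' := (T \ B) ∪ A with hT'
  have hdAB : Disjoint A B := (hdisj.mono hAS hBT)
  have hdSA_B : Disjoint (S \ A) B := (hdisj.mono (Finset.sdiff_subset) hBT)
  have hdTB_A : Disjoint (T \ B) A := ((hdisj.symm).mono (Finset.sdiff_subset) hAS)
  have hdS'T' : Disjoint S' T' := by
    rw [hS', hT', Finset.disjoint_left]
    intro a ha ha'
    simp only [Finset.mem_union, Finset.mem_sdiff] at ha ha'
    rcases ha with ⟨haS, haA⟩ | haB
    · rcases ha' with ⟨haT, _⟩ | haA'
      · exact (Finset.disjoint_left.1 hdisj) haS haT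
      · exact haA haA'
    · rcases ha' with ⟨haT, haB'⟩ | haA'
      · exact haB' haB
      · exact (Finset.disjoint_left.1 hdisj) (hAS haA') (hBT haB)
  have hunion : S' ∪ T' = Finset.univ := by
    rw [← hpart, hS', hT']
    ext a
    simp only [Finset.mem_union, Finset.mem_sdiff]
    constructor
    · rintro ((⟨h, _⟩ | h) | (⟨h, _⟩ | h))
      · exact Or.inl h
      · exact Or.inr (hBT h)
      · exact Or.inr h
      · exact Or.inl (hAS h)
    · rintro (h | h)
      · by_cases hA : a ∈ A
        · exact Or.inr (Or.inr hA)
        · exact Or.inl (Or.inl ⟨h, hA⟩)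
      · by_cases hB : a ∈ B
        · exact Or.inl (Or.inr hB)
        · exact Or.inr (Or.inl ⟨h, hB⟩)
  have hcard' : S'.card = T'.card := by
    rw [hS', hT', Finset.card_union_of_disjoint hdSA_B,
      Finset.card_union_of_disjoint hdTB_A,
      Finset.card_sdiff_of_subset hAS, Finset.card_sdiff_of_subset hBT]
    have h1 : A.card ≤ S.card := Finset.card_le_card hAS
    have h2 : B.card ≤ T.card := Finset.card_le_card hBT
    omega
  have hbis : IsBisection (↑S' : Set (Fin n)) ↑T' := by
    refine ⟨?_, ?_, ?_⟩
    · rw [← Finset.coe_union, hunion, Finset.coe_univ]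
    · rw [Finset.disjoint_coe]; exact hdS'T'
    · rw [Set.ncard_coe_finset, Set.ncard_coe_finset, hcard']
  have hble : bisectionWidth G ≤ E G S' T' := by
    apply Nat.sInf_le
    exact ⟨↑S', ↑T', hbis, cutSize_coe G S' T'⟩
  have hSdec : S = (S \ A) ∪ A := (Finset.sdiff_union_of_subset hAS).symm
  have hTdec : T = (T \ B) ∪ B := (Finset.sdiff_union_of_subset hBT).symm
  have hdSAA : Disjoint (S \ A) A := Finset.sdiff_disjoint
  have hdTBB : Disjoint (T \ B) B := Finset.sdiff_disjoint
  have eq1 : E G S T = E G (S \ A) (T \ B) + E G (S \ A) B + (E G A (T \ B) + E G A B) := by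
    conv_lhs => rw [hSdec, hTdec]
    rw [E_union_left _ _ hdSAA, E_union_right _ _ hdTBB, E_union_right _ _ hdTBB]
  have eq2 : E G S' T' = E G (S \ A) (T \ B) + E G (S \ A) A + (E G B (T \ B) + E G B A) := by
    rw [hS', hT', E_union_left _ _ hdSA_B, E_union_right _ _ hdTB_A, E_union_right _ _ hdTB_A]
  have c1 : E G (S \ A) A = E G A (S \ A) := E_comm G _ _
  have c2 : E G (S \ A) B = E G B (S \ A) := E_comm G _ _
  have c3 : E G B A = E G A B := E_comm G _ _
  rw [cutSize_coe] at hmin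
  omega

end St9

namespace St9
variable {n : ℕ} (G : SimpleGraph (Fin n)) [DecidableRel G.Adj]

lemma nbr_card (hcub : IsCubic G) (v : Fin n) : (G.neighborFinset v).card = 3 := by
  have := hcub v
  rwa [Set.ncard_eq_toFinset_card', ← neighborFinset_def] at this

lemma degIn_mono {Y Y' : Finset (Fin n)} (h : Y ⊆ Y') (v : Fin n) :
    degIn G Y v ≤ degIn G Y' v :=
  Finset.card_le_card (Finset.filter_subset_filter _ h)

lemma degIn_le_three (hcub : IsCubic G) (Y : Finset (Fin n)) (v : Fin n) :
    degIn G Y v ≤ 3 := by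
  rw [← nbr_card G hcub v]
  apply Finset.card_le_card
  intro x hx
  simp only [Finset.mem_filter] at hx
  simpa [mem_neighborFinset] using hx.2

lemma degIn_partition (hcub : IsCubic G) {S T : Finset (Fin n)}
    (hpart : S ∪ T = Finset.univ) (hdisj : Disjoint S T) (v : Fin n) :
    degIn G S v + degIn G T v = 3 := by
  unfold degIn
  rw [← Finset.card_union_of_disjoint (Finset.disjoint_filter_filter hdisj),
    ← Finset.filter_union, hpart]
  have : Finset.filter (fun w => G.Adj v w) Finset.univ = G.neighborFinset v := by
    ext x; simp [mem_neighborFinset]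
  rw [this, nbr_card G hcub]

lemma degIn_sdiff_of_no_adj {B T : Finset (Fin n)} {a : Fin n}
    (h : ∀ b ∈ B, ¬ G.Adj a b) : degIn G (T \ B) a = degIn G T a := by
  unfold degIn
  congr 1
  ext x
  simp only [Finset.mem_filter, Finset.mem_sdiff]
  constructor
  · rintro ⟨⟨h1, _⟩, h3⟩; exact ⟨h1, h3⟩
  · rintro ⟨h1, h3⟩; exact ⟨⟨h1, fun hb => h x hb h3⟩, h3⟩

/-- Greedily pick `k` pairwise non-adjacent vertices from `L` avoiding `F`. -/
lemma exists_indep (hcub : IsCubic G) :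
    ∀ (k : ℕ) (L F : Finset (Fin n)), 4 * k + F.card ≤ L.card →
    ∃ A : Finset (Fin n), A ⊆ L ∧ A.card = k ∧
      (∀ a ∈ A, ∀ b ∈ A, a ≠ b → ¬ G.Adj a b) ∧ Disjoint A F := by
  intro k
  induction k with
  | zero => intro L F _; exact ⟨∅, by simp⟩
  | succ k ih =>
    intro L F hLF
    have hne : (L \ F).Nonempty := by
      rw [← Finset.card_pos]
      have := Finset.le_card_sdiff F L
      have h2 : F.card < L.card := by omega
      omega
    obtain ⟨x, hx⟩ := hne
    rw [Finset.mem_sdiff] at hx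
    set L' := L \ (insert x (G.neighborFinset x)) with hL'
    have hL'card : 4 * k + F.card ≤ L'.card := by
      have h1 : L'.card ≥ L.card - (insert x (G.neighborFinset x)).card :=
        Finset.le_card_sdiff _ _
      have h2 : (insert x (G.neighborFinset x)).card ≤ 4 := by
        have := Finset.card_insert_le x (G.neighborFinset x)
        rw [nbr_card G hcub] at this
        omega
      omega
    obtain ⟨A', hA'L, hA'card, hA'ind, hA'F⟩ := ih L' F hL'card
    have hxA' : x ∉ A' := fun hmem => by
      have := hA'L hmem
      rw [hL', Finset.mem_sdiff] at this
      exact this.2 (Finset.mem_insert_self x _)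
    have hnoadj : ∀ a ∈ A', ¬ G.Adj x a := by
      intro a ha hadj
      have := hA'L ha
      rw [hL', Finset.mem_sdiff] at this
      exact this.2 (Finset.mem_insert_of_mem (by rwa [mem_neighborFinset]))
    refine ⟨insert x A', ?_, ?_, ?_, ?_⟩
    · intro a ha
      rcases Finset.mem_insert.1 ha with rfl | ha
      · exact hx.1
      · have := hA'L ha
        rw [hL', Finset.mem_sdiff] at this
        exact this.1
    · rw [Finset.card_insert_of_notMem hxA', hA'card]
    · intro a ha b hb hne
      rcases Finset.mem_insert.1 ha with ha | ha
      · subst ha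
        rcases Finset.mem_insert.1 hb with hb | hb
        · exact absurd hb.symm hne
        · exact hnoadj b hb
      · rcases Finset.mem_insert.1 hb with hb2 | hb2
        · intro h
          rw [hb2] at h
          exact hnoadj a ha h.symm
        · exact hA'ind a ha b hb2 hne
    · rw [Finset.disjoint_insert_left]
      exact ⟨hx.2, hA'F⟩

end St9

namespace St9

section cycles
variable {V : Type*} {Γ : SimpleGraph V}

lemma on3cycle {u w1 w2 : V} (h1 : Γ.Adj u w1) (h2 : Γ.Adj w1 w2) (h3 : Γ.Adj w2 u) :
    OnCycleOfLength Γ 3 u := by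
  have n01 : u ≠ w1 := h1.ne
  have n10 : w1 ≠ u := h1.ne'
  have n12 : w1 ≠ w2 := h2.ne
  have n21 : w2 ≠ w1 := h2.ne'
  have n20 : w2 ≠ u := h3.ne
  have n02 : u ≠ w2 := h3.ne'
  refine ⟨u, Walk.cons h1 (Walk.cons h2 (Walk.cons h3 Walk.nil)), ?_, by simp, by simp⟩
  rw [Walk.isCycle_def]
  refine ⟨⟨?_⟩, by simp, ?_⟩
  · simp only [Walk.edges_cons, Walk.edges_nil, List.nodup_cons, List.mem_cons,
      List.not_mem_nil, or_false, List.nodup_nil, and_true, List.mem_singleton, Sym2.eq_iff]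
    tauto
  · simp only [Walk.support_cons, Walk.support_nil, List.tail_cons, List.nodup_cons,
      List.mem_cons, List.not_mem_nil, or_false, List.nodup_nil, and_true, List.mem_singleton]
    tauto

lemma on4cycle {u w1 w2 w3 : V} (h1 : Γ.Adj u w1) (h2 : Γ.Adj w1 w2) (h3 : Γ.Adj w2 w3)
    (h4 : Γ.Adj w3 u) (hu2 : u ≠ w2) (h13 : w1 ≠ w3) :
    OnCycleOfLength Γ 4 u := by
  have n01 : u ≠ w1 := h1.ne
  have n10 : w1 ≠ u := h1.ne'
  have n12 : w1 ≠ w2 := h2.ne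
  have n21 : w2 ≠ w1 := h2.ne'
  have n23 : w2 ≠ w3 := h3.ne
  have n32 : w3 ≠ w2 := h3.ne'
  have n30 : w3 ≠ u := h4.ne
  have n03 : u ≠ w3 := h4.ne'
  have hu2' : w2 ≠ u := hu2.symm
  have h13' : w3 ≠ w1 := h13.symm
  refine ⟨u, Walk.cons h1 (Walk.cons h2 (Walk.cons h3 (Walk.cons h4 Walk.nil))), ?_, by simp,
    by simp⟩
  rw [Walk.isCycle_def]
  refine ⟨⟨?_⟩, by simp, ?_⟩
  · simp only [Walk.edges_cons, Walk.edges_nil, List.nodup_cons, List.mem_cons,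
      List.not_mem_nil, or_false, List.nodup_nil, and_true, List.mem_singleton, Sym2.eq_iff]
    tauto
  · simp only [Walk.support_cons, Walk.support_nil, List.tail_cons, List.nodup_cons,
      List.mem_cons, List.not_mem_nil, or_false, List.nodup_nil, and_true, List.mem_singleton]
    tauto

end cycles

variable {n : ℕ} (G : SimpleGraph (Fin n)) [DecidableRel G.Adj] (S : Finset (Fin n))

instance decH : DecidableRel (G.induce (S : Set (Fin n))).Adj :=
  fun u v => decidable_of_iff (G.Adj ↑u ↑v) comap_adj.symm

lemma oncycle_lift {ℓ : ℕ} (v : ↥(S : Set (Fin n)))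
    (h : OnCycleOfLength (G.induce (S : Set (Fin n))) ℓ v) :
    OnCycleOfLength G ℓ ↑v := by
  obtain ⟨u, w, hc, hl, hs⟩ := h
  have hinj : Function.Injective
      ((SimpleGraph.Embedding.induce (S : Set (Fin n)) : G.induce (S : Set (Fin n)) ↪g G)) :=
    RelEmbedding.injective _
  refine ⟨↑u, w.map (SimpleGraph.Embedding.induce _).toHom, ?_, (Walk.length_map _ _).trans hl, ?_⟩
  · exact ((Walk.map_isCycle_iff_of_injective hinj).2 hc)
  · have h := List.mem_map_of_mem (f := (SimpleGraph.Embedding.induce (G := G) (S : Set (Fin n))).toHom) hs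
    rw [← Walk.support_map] at h
    exact h

/-- `u` is within distance `k` of `v` in the induced graph. -/
def near (v u : ↥(S : Set (Fin n))) (k : ℕ) : Prop :=
  ∃ p : (G.induce (S : Set (Fin n))).Walk v u, p.length ≤ k

lemma near_refl (v : ↥(S : Set (Fin n))) (k : ℕ) : near G S v v k := ⟨Walk.nil, by simp⟩

lemma near_symm {v u : ↥(S : Set (Fin n))} {k : ℕ} (h : near G S v u k) : near G S u v k := by
  obtain ⟨p, hp⟩ := h
  exact ⟨p.reverse, by simpa using hp⟩

lemma near_trans {v u x : ↥(S : Set (Fin n))} {k l : ℕ} (h1 : near G S v u k)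
    (h2 : near G S u x l) : near G S v x (k + l) := by
  obtain ⟨p, hp⟩ := h1
  obtain ⟨q, hq⟩ := h2
  exact ⟨p.append q, by rw [Walk.length_append]; omega⟩

lemma near_mono {v u : ↥(S : Set (Fin n))} {k l : ℕ} (hkl : k ≤ l) (h : near G S v u k) :
    near G S v u l := by
  obtain ⟨p, hp⟩ := h
  exact ⟨p, hp.trans hkl⟩

lemma adj_near {v u : ↥(S : Set (Fin n))} {k : ℕ} (hk : 1 ≤ k)
    (h : (G.induce (S : Set (Fin n))).Adj v u) : near G S v u k :=
  ⟨Walk.cons h Walk.nil, by simpa using hk⟩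

noncomputable def ballF (v : ↥(S : Set (Fin n))) (k : ℕ) : Finset ↥(S : Set (Fin n)) :=
  @Finset.filter _ (fun u => near G S v u k) (Classical.decPred _) Finset.univ

lemma mem_ballF {v u : ↥(S : Set (Fin n))} {k : ℕ} : u ∈ ballF G S v k ↔ near G S v u k := by
  unfold ballF
  rw [@Finset.mem_filter _ _ (Classical.decPred _)]
  simp

lemma degH_eq (u : ↥(S : Set (Fin n))) :
    (G.induce (S : Set (Fin n))).degree u = degIn G S ↑u := by
  unfold degIn
  rw [← card_neighborFinset_eq_degree]
  refine Finset.card_bij (fun w _ => (↑w : Fin n)) ?_ ?_ ?_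
  · intro w hw
    rw [mem_neighborFinset] at hw
    rw [Finset.mem_filter]
    exact ⟨w.2, (comap_adj.1 hw : G.Adj _ _)⟩
  · intro w _ w' _ h
    exact Subtype.ext h
  · intro x hx
    rw [Finset.mem_filter] at hx
    refine ⟨⟨x, hx.1⟩, ?_, rfl⟩
    rw [mem_neighborFinset]
    exact (comap_adj.2 (by exact hx.2) : (G.induce (S : Set (Fin n))).Adj u ⟨x, hx.1⟩)

def bnd : ℕ → ℕ
  | 0 => 1
  | k + 1 => 1 + 3 * bnd k

lemma ballF_card_le (hcub : IsCubic G) : ∀ (k : ℕ) (v : ↥(S : Set (Fin n))),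
    (ballF G S v k).card ≤ bnd k := by
  intro k
  induction k with
  | zero =>
    intro v
    have : ballF G S v 0 ⊆ {v} := by
      intro u hu
      rw [mem_ballF] at hu
      obtain ⟨p, hp⟩ := hu
      have := p.eq_of_length_eq_zero (Nat.le_zero.1 hp)
      simp [this]
    simpa [bnd] using Finset.card_le_card this
  | succ k ih =>
    intro v
    have hsub : ballF G S v (k+1) ⊆
        insert v (((G.induce (S : Set (Fin n))).neighborFinset v).biUnion
          (fun x => ballF G S x k)) := by
      intro u hu
      rw [mem_ballF] at hu
      obtain ⟨p, hp⟩ := hu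
      cases p with
      | nil => exact Finset.mem_insert_self _ _
      | cons h q =>
        apply Finset.mem_insert_of_mem
        rw [Finset.mem_biUnion]
        refine ⟨_, by rw [mem_neighborFinset]; exact h, ?_⟩
        rw [mem_ballF]
        exact ⟨q, by simpa using hp⟩
    calc (ballF G S v (k+1)).card
        ≤ (insert v (((G.induce (S : Set (Fin n))).neighborFinset v).biUnion
            (fun x => ballF G S x k))).card := Finset.card_le_card hsub
      _ ≤ 1 + (((G.induce (S : Set (Fin n))).neighborFinset v).biUnion
            (fun x => ballF G S x k)).card := by
          have := Finset.card_insert_le v (((G.induce (S : Set (Fin n))).neighborFinset v).biUnion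
            (fun x => ballF G S x k))
          omega
      _ ≤ 1 + ∑ x ∈ (G.induce (S : Set (Fin n))).neighborFinset v, (ballF G S x k).card :=
          Nat.add_le_add_left (Finset.card_biUnion_le) 1
      _ ≤ 1 + ∑ _x ∈ (G.induce (S : Set (Fin n))).neighborFinset v, bnd k :=
          Nat.add_le_add_left (Finset.sum_le_sum fun x _ => ih x) 1
      _ ≤ 1 + 3 * bnd k := by
          rw [Finset.sum_const, smul_eq_mul]
          have : ((G.induce (S : Set (Fin n))).neighborFinset v).card ≤ 3 := by
            rw [card_neighborFinset_eq_degree, degH_eq]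
            exact degIn_le_three G hcub S ↑v
          exact Nat.add_le_add_left (Nat.mul_le_mul_right _ this) 1
      _ = bnd (k+1) := rfl

end St9

namespace St9
variable {n : ℕ} (G : SimpleGraph (Fin n)) [DecidableRel G.Adj] (S : Finset (Fin n))

lemma seven (hcub : IsCubic G) {v : ↥(S : Set (Fin n))} (hdeg2 : degIn G S ↑v = 2)
    (hclean : ∀ u : ↥(S : Set (Fin n)), u ≠ v → near G S v u 2 → degIn G S ↑u = 3)
    (hc3 : ¬ OnCycleOfLength G 3 (↑v : Fin n)) (hc4 : ¬ OnCycleOfLength G 4 (↑v : Fin n)) :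
    7 ≤ (ballF G S v 2).card := by
  classical
  set H := G.induce (S : Set (Fin n)) with hHdef
  have hdv : (H.neighborFinset v).card = 2 := by
    rw [card_neighborFinset_eq_degree, degH_eq]; exact hdeg2
  obtain ⟨x1, x2, hx12, hNv⟩ := Finset.card_eq_two.1 hdv
  have hadj1 : H.Adj v x1 := by
    rw [← mem_neighborFinset, hNv]; simp
  have hadj2 : H.Adj v x2 := by
    rw [← mem_neighborFinset, hNv]; simp
  have hnx1 : x1 ≠ v := hadj1.ne'
  have hnx2 : x2 ≠ v := hadj2.ne'
  have hdx1 : (H.neighborFinset x1).card = 3 := by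
    rw [card_neighborFinset_eq_degree, degH_eq]
    exact hclean x1 hnx1 (adj_near G S (by norm_num) hadj1)
  have hdx2 : (H.neighborFinset x2).card = 3 := by
    rw [card_neighborFinset_eq_degree, degH_eq]
    exact hclean x2 hnx2 (adj_near G S (by norm_num) hadj2)
  have hvx1 : v ∈ H.neighborFinset x1 := by rw [mem_neighborFinset]; exact hadj1.symm
  have hvx2 : v ∈ H.neighborFinset x2 := by rw [mem_neighborFinset]; exact hadj2.symm
  have he1 : ((H.neighborFinset x1).erase v).card = 2 := by
    rw [Finset.card_erase_of_mem hvx1, hdx1]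
  have he2 : ((H.neighborFinset x2).erase v).card = 2 := by
    rw [Finset.card_erase_of_mem hvx2, hdx2]
  obtain ⟨a, b, hab, hab_eq⟩ := Finset.card_eq_two.1 he1
  obtain ⟨c, d, hcd, hcd_eq⟩ := Finset.card_eq_two.1 he2
  have ha : a ∈ (H.neighborFinset x1).erase v := by rw [hab_eq]; simp
  have hb : b ∈ (H.neighborFinset x1).erase v := by rw [hab_eq]; simp
  have hc : c ∈ (H.neighborFinset x2).erase v := by rw [hcd_eq]; simp
  have hd : d ∈ (H.neighborFinset x2).erase v := by rw [hcd_eq]; simp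
  have hav : a ≠ v := (Finset.mem_erase.1 ha).1
  have hbv : b ≠ v := (Finset.mem_erase.1 hb).1
  have hcv : c ≠ v := (Finset.mem_erase.1 hc).1
  have hdv' : d ≠ v := (Finset.mem_erase.1 hd).1
  have hx1a : H.Adj x1 a := by
    have := (Finset.mem_erase.1 ha).2; rwa [mem_neighborFinset] at this
  have hx1b : H.Adj x1 b := by
    have := (Finset.mem_erase.1 hb).2; rwa [mem_neighborFinset] at this
  have hx2c : H.Adj x2 c := by
    have := (Finset.mem_erase.1 hc).2; rwa [mem_neighborFinset] at this
  have hx2d : H.Adj x2 d := by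
    have := (Finset.mem_erase.1 hd).2; rwa [mem_neighborFinset] at this
  -- triangle-based distinctness
  have tri : ¬ H.Adj x1 x2 := by
    intro h
    exact hc3 (oncycle_lift G S v (on3cycle hadj1 h hadj2.symm))
  have hx1c : x1 ≠ c := fun h => tri (by rw [h]; exact hx2c.symm)
  have hx1d : x1 ≠ d := fun h => tri (by rw [h]; exact hx2d.symm)
  have hx2a : x2 ≠ a := fun h => tri (by rw [h]; exact hx1a)
  have hx2b : x2 ≠ b := fun h => tri (by rw [h]; exact hx1b)
  -- 4-cycle-based distinctness
  have quad : ∀ y : ↥(S : Set (Fin n)), H.Adj x1 y → H.Adj x2 y → y ≠ v → False := by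
    intro y h1 h2 hyv
    exact hc4 (oncycle_lift G S v (on4cycle hadj1 h1 h2.symm hadj2.symm hyv.symm hx12))
  have hac : a ≠ c := fun h => quad a hx1a (h ▸ hx2c) hav
  have had : a ≠ d := fun h => quad a hx1a (h ▸ hx2d) hav
  have hbc : b ≠ c := fun h => quad b hx1b (h ▸ hx2c) hbv
  have hbd : b ≠ d := fun h => quad b hx1b (h ▸ hx2d) hbv
  have hva : v ≠ a := hav.symm
  have hvb : v ≠ b := hbv.symm
  have hvc : v ≠ c := hcv.symm
  have hvd : v ≠ d := hdv'.symm
  have hvx1' : v ≠ x1 := hadj1.ne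
  have hvx2' : v ≠ x2 := hadj2.ne
  have hx1a' : x1 ≠ a := hx1a.ne
  have hx1b' : x1 ≠ b := hx1b.ne
  have hx2c' : x2 ≠ c := hx2c.ne
  have hx2d' : x2 ≠ d := hx2d.ne
  have hx1x2 : x1 ≠ x2 := hx12
  have hsub : ({v, x1, x2, a, b, c, d} : Finset ↥(S : Set (Fin n))) ⊆ ballF G S v 2 := by
    intro u hu
    rw [mem_ballF]
    simp only [Finset.mem_insert, Finset.mem_singleton] at hu
    rcases hu with rfl | rfl | rfl | rfl | rfl | rfl | rfl
    · exact near_refl G S _ _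
    · exact adj_near G S (by norm_num) hadj1
    · exact adj_near G S (by norm_num) hadj2
    · exact near_trans G S (adj_near G S le_rfl hadj1) (adj_near G S le_rfl hx1a)
    · exact near_trans G S (adj_near G S le_rfl hadj1) (adj_near G S le_rfl hx1b)
    · exact near_trans G S (adj_near G S le_rfl hadj2) (adj_near G S le_rfl hx2c)
    · exact near_trans G S (adj_near G S le_rfl hadj2) (adj_near G S le_rfl hx2d)
  have hcard : ({v, x1, x2, a, b, c, d} : Finset ↥(S : Set (Fin n))).card = 7 := by
    rw [Finset.card_insert_of_notMem (by simp_all), Finset.card_insert_of_notMem (by simp_all),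
      Finset.card_insert_of_notMem (by simp_all), Finset.card_insert_of_notMem (by simp_all),
      Finset.card_insert_of_notMem (by simp_all), Finset.card_insert_of_notMem (by simp_all),
      Finset.card_singleton]
  calc 7 = ({v, x1, x2, a, b, c, d} : Finset ↥(S : Set (Fin n))).card := hcard.symm
  _ ≤ (ballF G S v 2).card := Finset.card_le_card hsub

/-- packing of radius-2 balls around isolated degree-2 vertices -/
lemma packing (hcub : IsCubic G) (W : Finset ↥(S : Set (Fin n)))
    (hW : ∀ v ∈ W, degIn G S (↑v : Fin n) = 2 ∧
      (∀ u : ↥(S : Set (Fin n)), u ≠ v → near G S v u 4 → degIn G S ↑u = 3) ∧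
      ¬ OnCycleOfLength G 3 (↑v : Fin n) ∧ ¬ OnCycleOfLength G 4 (↑v : Fin n)) :
    7 * W.card ≤ S.card := by
  classical
  have hdisj : ∀ v ∈ W, ∀ v' ∈ W, v ≠ v' → Disjoint (ballF G S v 2) (ballF G S v' 2) := by
    intro v hv v' hv' hne
    rw [Finset.disjoint_left]
    intro u hu hu'
    rw [mem_ballF] at hu hu'
    have : near G S v v' 4 := near_trans G S hu (near_symm G S hu')
    have h3 := (hW v hv).2.1 v' hne.symm this
    rw [(hW v' hv').1] at h3
    norm_num at h3
  calc 7 * W.card = ∑ _v ∈ W, 7 := by rw [Finset.sum_const, smul_eq_mul, Nat.mul_comm]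
  _ ≤ ∑ v ∈ W, (ballF G S v 2).card := by
      apply Finset.sum_le_sum
      intro v hv
      obtain ⟨h1, h2, h3, h4⟩ := hW v hv
      exact seven G S hcub h1 (fun u hu hnear => h2 u hu (near_mono G S (by norm_num) hnear)) h3 h4
  _ = (W.biUnion (fun v => ballF G S v 2)).card := (Finset.card_biUnion hdisj).symm
  _ ≤ (Finset.univ : Finset ↥(S : Set (Fin n))).card := Finset.card_le_card (Finset.subset_univ _)
  _ = S.card := by
      rw [Finset.card_univ]
      simp

/-- extraction of a nearest low-degree partner -/
lemma extract {v : ↥(S : Set (Fin n))}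
    (hcand : ∃ u : ↥(S : Set (Fin n)), u ≠ v ∧ degIn G S ↑u ≠ 3 ∧ near G S v u 4) :
    ∃ (w : ↥(S : Set (Fin n))) (d : ℕ), w ≠ v ∧ degIn G S ↑w ≠ 3 ∧ near G S v w 4 ∧
      1 ≤ d ∧ d ≤ 4 ∧
      (G.induce (S : Set (Fin n))).Reachable v w ∧ (G.induce (S : Set (Fin n))).dist v w = d ∧
      ∃ p : (G.induce (S : Set (Fin n))).Walk v w, p.IsPath ∧ p.length = d ∧
        (∀ x ∈ p.support, x ≠ v → x ≠ w → degIn G S ↑x = 3) := by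
  classical
  set H := G.induce (S : Set (Fin n)) with hHdef
  set C := @Finset.filter _
      (fun u => u ≠ v ∧ degIn G S ↑u ≠ 3 ∧ near G S v u 4) (Classical.decPred _)
      (Finset.univ : Finset ↥(S : Set (Fin n))) with hC
  have hmemC : ∀ u, u ∈ C ↔ (u ≠ v ∧ degIn G S ↑u ≠ 3 ∧ near G S v u 4) := by
    intro u
    rw [hC, @Finset.mem_filter _ _ (Classical.decPred _)]
    simp
  have hCne : C.Nonempty := by
    obtain ⟨u, hu⟩ := hcand
    exact ⟨u, (hmemC u).2 hu⟩
  obtain ⟨w, hwC, hwmin⟩ := Finset.exists_min_image C (fun u => H.dist v u) hCne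
  rw [hmemC] at hwC
  obtain ⟨hwv, hw3, hwnear⟩ := hwC
  obtain ⟨q, hq⟩ := hwnear
  have hreach : H.Reachable v w := q.reachable
  set d := H.dist v w with hd
  have hdle : d ≤ 4 := le_trans (SimpleGraph.dist_le q) hq
  have hdpos : 1 ≤ d := by
    rcases Nat.eq_zero_or_pos d with h0 | h
    · obtain ⟨p0, hp0⟩ := hreach.exists_walk_length_eq_dist
      rw [← hd] at hp0
      exact absurd (p0.eq_of_length_eq_zero (by omega)).symm hwv
    · exact h
  obtain ⟨p0, hp0⟩ := hreach.exists_walk_length_eq_dist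
  set p := p0.bypass with hp
  have hpath : p.IsPath := Walk.bypass_isPath p0
  have hplen : p.length = d := by
    have h1 : p.length ≤ p0.length := Walk.length_bypass_le p0
    have h2 : d ≤ p.length := SimpleGraph.dist_le p
    omega
  refine ⟨w, d, hwv, hw3, ⟨q, hq⟩, hdpos, hdle, hreach, rfl, p, hpath, hplen, ?_⟩
  intro x hx hxv hxw
  by_contra hx3
  -- x is an internal vertex; it is closer to v than w is
  have hsplit := p.take_spec hx
  have hlen : (p.takeUntil x hx).length + (p.dropUntil x hx).length = d := by
    rw [← hplen, ← Walk.length_append, hsplit]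
  have hdrop_pos : 1 ≤ (p.dropUntil x hx).length := by
    rcases Nat.eq_zero_or_pos (p.dropUntil x hx).length with h0 | h
    · exact absurd ((p.dropUntil x hx).eq_of_length_eq_zero h0) hxw
    · exact h
  have htake : (p.takeUntil x hx).length ≤ d - 1 := by omega
  have hxC : x ∈ C := by
    rw [hmemC]
    exact ⟨hxv, hx3, ⟨p.takeUntil x hx, by omega⟩⟩
  have := hwmin x hxC
  have hdistx : H.dist v x ≤ d - 1 := le_trans (SimpleGraph.dist_le _) htake
  omega

end St9

namespace St9
variable {n : ℕ} (G : SimpleGraph (Fin n)) [DecidableRel G.Adj]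

lemma E_eq_card (X Y : Finset (Fin n)) :
    E G X Y = ((X ×ˢ Y).filter (fun q => G.Adj q.1 q.2)).card := by
  rw [E_eq_sum_sum, ← Finset.sum_product', Finset.card_filter _ _]

/-- counting at subtype level equals counting at ambient level -/
lemma card_subtype_filter (S : Finset (Fin n)) (P : Fin n → Prop) [DecidablePred P] :
    (@Finset.filter _ (fun v : ↥(S : Set (Fin n)) => P ↑v) (Classical.decPred _)
      Finset.univ).card = (S.filter P).card := by
  refine Finset.card_bij (fun w _ => (↑w : Fin n)) ?_ ?_ ?_
  · intro w hw
    rw [@Finset.mem_filter _ _ (Classical.decPred _)] at hw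
    rw [Finset.mem_filter]
    exact ⟨w.2, hw.2⟩
  · intro w _ w' _ h
    exact Subtype.ext h
  · intro x hx
    rw [Finset.mem_filter] at hx
    refine ⟨⟨x, hx.1⟩, ?_, rfl⟩
    rw [@Finset.mem_filter _ _ (Classical.decPred _)]
    exact ⟨Finset.mem_univ _, hx.2⟩

/-- the cut is at most `3·(#degree ≤ 1) + (#degree = 2)` -/
lemma cut_le (hcub : IsCubic G) (S T : Finset (Fin n))
    (hpart : S ∪ T = Finset.univ) (hdisj : Disjoint S T) :
    E G S T ≤ 3 * (S.filter (fun a => degIn G S a ≤ 1)).card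
      + (S.filter (fun a => degIn G S a = 2)).card := by
  classical
  set L := S.filter (fun a => degIn G S a ≤ 1) with hL
  have hLS : L ⊆ S := Finset.filter_subset _ _
  have hsplit : E G S T = ∑ a ∈ L, degIn G T a + ∑ a ∈ S \ L, degIn G T a := by
    rw [E, ← Finset.sum_union Finset.disjoint_sdiff, Finset.union_sdiff_of_subset hLS]
  have h1 : ∑ a ∈ L, degIn G T a ≤ 3 * L.card := by
    rw [Nat.mul_comm]
    calc ∑ a ∈ L, degIn G T a ≤ ∑ _a ∈ L, 3 :=
        Finset.sum_le_sum fun a _ => degIn_le_three G hcub T a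
    _ = L.card * 3 := by rw [Finset.sum_const, smul_eq_mul]
  have h2 : ∑ a ∈ S \ L, degIn G T a ≤ (S.filter (fun a => degIn G S a = 2)).card := by
    calc ∑ a ∈ S \ L, degIn G T a
        ≤ ∑ a ∈ S \ L, (if degIn G S a = 2 then 1 else 0) := by
          apply Finset.sum_le_sum
          intro a ha
          rw [Finset.mem_sdiff, hL, Finset.mem_filter] at ha
          have hdeg : 2 ≤ degIn G S a := by
            rcases ha with ⟨haS, hnot⟩
            by_contra hcon
            exact hnot ⟨haS, by omega⟩
          have hsum := degIn_partition G hcub hpart hdisj a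
          by_cases h : degIn G S a = 2
          · simp only [h, if_true]; omega
          · simp only [h, if_false]; omega
      _ = ((S \ L).filter (fun a => degIn G S a = 2)).card := (Finset.card_filter _ _).symm
      _ ≤ (S.filter (fun a => degIn G S a = 2)).card :=
          Finset.card_le_card (Finset.filter_subset_filter _ Finset.sdiff_subset)
  omega

variable (S : Finset (Fin n))

/-- A path in the induced graph contributes `2·length` ordered adjacent pairs. -/
lemma path_inner_edges {v w : ↥(S : Set (Fin n))} (p : (G.induce (S : Set (Fin n))).Walk v w)
    (hp : p.IsPath) :
    2 * p.length ≤ E G ((p.support.map Subtype.val).toFinset)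
      ((p.support.map Subtype.val).toFinset) := by
  classical
  set Bf := (p.support.map Subtype.val).toFinset with hBf
  set LL : List (Fin n × Fin n) :=
    p.darts.map (fun e => ((↑e.fst, ↑e.snd) : Fin n × Fin n))
      ++ p.darts.map (fun e => ((↑e.snd, ↑e.fst) : Fin n × Fin n)) with hLL
  have hdartsnd : p.darts.Nodup := by
    have := hp.isTrail.edges_nodup
    exact List.Nodup.of_map _ this
  have hinj1 : ∀ d1 ∈ p.darts, ∀ d2 ∈ p.darts,
      ((↑d1.fst, ↑d1.snd) : Fin n × Fin n) = (↑d2.fst, ↑d2.snd) → d1 = d2 := by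
    intro d1 _ d2 _ h
    apply SimpleGraph.Dart.ext
    have h1 : d1.fst = d2.fst := Subtype.ext (congrArg Prod.fst h)
    have h2 : d1.snd = d2.snd := Subtype.ext (congrArg Prod.snd h)
    exact Prod.ext h1 h2
  have hedge_inj : ∀ d1 ∈ p.darts, ∀ d2 ∈ p.darts, d1.edge = d2.edge → d1 = d2 :=
    List.inj_on_of_nodup_map hp.isTrail.edges_nodup
  have hnodup : LL.Nodup := by
    rw [hLL]
    rw [List.nodup_append]
    refine ⟨?_, ?_, ?_⟩
    · exact List.Nodup.map_on (fun d1 h1 d2 h2 h => hinj1 d1 h1 d2 h2 h) hdartsnd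
    · apply List.Nodup.map_on ?_ hdartsnd
      intro d1 h1 d2 h2 h
      have h1' : d1.snd = d2.snd := Subtype.ext (congrArg Prod.fst h)
      have h2' : d1.fst = d2.fst := Subtype.ext (congrArg Prod.snd h)
      exact SimpleGraph.Dart.ext _ _ (Prod.ext h2' h1')
    · intro z hz1 z' hz2 hzz
      subst hzz
      rw [List.mem_map] at hz1 hz2
      obtain ⟨d1, hd1, rfl⟩ := hz1
      obtain ⟨d2, hd2, heq⟩ := hz2
      have h1 : d2.snd = d1.fst := Subtype.ext (congrArg Prod.fst heq)
      have h2 : d2.fst = d1.snd := Subtype.ext (congrArg Prod.snd heq)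
      have hedge : d1.edge = d2.edge := by
        unfold SimpleGraph.Dart.edge
        have hprod : d1.toProd = (d2.toProd.2, d2.toProd.1) := Prod.ext h1.symm h2.symm
        rw [hprod]
        exact Sym2.eq_swap.trans (by rfl)
      have heq12 := hedge_inj d1 hd1 d2 hd2 hedge
      rw [heq12] at h1
      exact d2.adj.ne h1.symm
  have hsub : LL.toFinset ⊆ (Bf ×ˢ Bf).filter (fun q => G.Adj q.1 q.2) := by
    intro z hz
    rw [List.mem_toFinset, hLL, List.mem_append] at hz
    rw [Finset.mem_filter, Finset.mem_product]
    rcases hz with hz | hz <;> rw [List.mem_map] at hz <;> obtain ⟨d, hd, rfl⟩ := hz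
    · refine ⟨⟨?_, ?_⟩, ?_⟩
      · rw [hBf, List.mem_toFinset]
        exact List.mem_map_of_mem (p.dart_fst_mem_support_of_mem_darts hd)
      · rw [hBf, List.mem_toFinset]
        exact List.mem_map_of_mem (p.dart_snd_mem_support_of_mem_darts hd)
      · exact (comap_adj.1 d.adj : G.Adj _ _)
    · refine ⟨⟨?_, ?_⟩, ?_⟩
      · rw [hBf, List.mem_toFinset]
        exact List.mem_map_of_mem (p.dart_snd_mem_support_of_mem_darts hd)
      · rw [hBf, List.mem_toFinset]
        exact List.mem_map_of_mem (p.dart_fst_mem_support_of_mem_darts hd)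
      · exact ((comap_adj.1 d.adj : G.Adj _ _)).symm
  calc 2 * p.length = LL.length := by
        rw [hLL, List.length_append, List.length_map, List.length_map, Walk.length_darts]
        omega
  _ = LL.toFinset.card := (List.toFinset_card_of_nodup hnodup).symm
  _ ≤ ((Bf ×ˢ Bf).filter (fun q => G.Adj q.1 q.2)).card := Finset.card_le_card hsub
  _ = E G Bf Bf := (E_eq_card G Bf Bf).symm

end St9

namespace St9
variable {n : ℕ} (G : SimpleGraph (Fin n)) [DecidableRel G.Adj]

lemma E_A_upper {A S : Finset (Fin n)} (hA : ∀ a ∈ A, degIn G S a ≤ 1) :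
    E G A (S \ A) ≤ A.card := by
  unfold E
  calc ∑ a ∈ A, degIn G (S \ A) a ≤ ∑ a ∈ A, 1 := by
        apply Finset.sum_le_sum
        intro a ha
        exact le_trans (degIn_mono G Finset.sdiff_subset a) (hA a ha)
  _ = A.card := by simp

lemma E_A_lower (hcub : IsCubic G) {S T A B : Finset (Fin n)}
    (hpart : S ∪ T = Finset.univ) (hdisj : Disjoint S T)
    (hA1 : ∀ a ∈ A, degIn G S a ≤ 1) (hnoadj : ∀ a ∈ A, ∀ b ∈ B, ¬ G.Adj a b) :
    2 * A.card ≤ E G A (T \ B) := by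
  unfold E
  calc 2 * A.card = ∑ _a ∈ A, 2 := by rw [Finset.sum_const, smul_eq_mul, Nat.mul_comm]
  _ ≤ ∑ a ∈ A, degIn G (T \ B) a := by
      apply Finset.sum_le_sum
      intro a ha
      rw [degIn_sdiff_of_no_adj G (fun b hb => hnoadj a ha b hb)]
      have := degIn_partition G hcub hpart hdisj a
      have := hA1 a ha
      omega

/-- the main structure lemma: each side of a minimal bisection has at most 60 vertices
of induced degree ≤ 1. -/
lemma Lsmall (hcub : IsCubic G) (S T : Finset (Fin n))
    (hpart : S ∪ T = Finset.univ) (hdisj : Disjoint S T) (hST : S.card = T.card)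
    (hminS : cutSize G ↑S ↑T = bisectionWidth G)
    (hcutT : n ≤ 10 * E G T S)
    (hK : 100 * ((@Finset.filter _ (fun x => OnCycleOfLength G 3 x) (Classical.decPred _)
        Finset.univ).card +
      (@Finset.filter _ (fun x => OnCycleOfLength G 4 x) (Classical.decPred _)
        Finset.univ).card) ≤ n)
    (hn : 10 ^ 9 ≤ n) :
    (S.filter (fun a => degIn G S a ≤ 1)).card ≤ 60 := by
  classical
  by_contra hcon
  push_neg at hcon
  set LS := S.filter (fun a => degIn G S a ≤ 1) with hLS
  have hLSsub : LS ⊆ S := Finset.filter_subset _ _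
  have hLSdeg : ∀ a ∈ LS, degIn G S a ≤ 1 := fun a ha => (Finset.mem_filter.1 ha).2
  set LT := T.filter (fun a => degIn G T a ≤ 1) with hLT
  by_cases hLTbig : 8 ≤ LT.card
  · -- both sides have low-degree vertices: easy swap
    obtain ⟨B, hBL, hBcard, hBind, -⟩ := exists_indep G hcub 2 LT ∅ (by simpa using hLTbig)
    have hBT : B ⊆ T := hBL.trans (Finset.filter_subset _ _)
    have hFcard : (B ∪ B.biUnion (fun b => G.neighborFinset b)).card ≤ 8 := by
      calc (B ∪ B.biUnion (fun b => G.neighborFinset b)).card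
          ≤ B.card + (B.biUnion (fun b => G.neighborFinset b)).card := Finset.card_union_le _ _
      _ ≤ B.card + ∑ b ∈ B, (G.neighborFinset b).card :=
          Nat.add_le_add_left Finset.card_biUnion_le _
      _ ≤ 2 + 2 * 3 := by
          rw [hBcard]
          have : ∑ b ∈ B, (G.neighborFinset b).card = 6 := by
            rw [Finset.sum_congr rfl (fun b _ => nbr_card G hcub b), Finset.sum_const, hBcard]
            norm_num
          omega
      _ = 8 := by norm_num
    obtain ⟨A, hAL, hAcard, hAind, hAF⟩ := exists_indep G hcub 2 LS
      (B ∪ B.biUnion (fun b => G.neighborFinset b)) (by omega)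
    have hAS : A ⊆ S := hAL.trans hLSsub
    have hnoadjAB : ∀ a ∈ A, ∀ b ∈ B, ¬ G.Adj a b := by
      intro a ha b hb hadj
      have : a ∈ B.biUnion (fun b => G.neighborFinset b) :=
        Finset.mem_biUnion.2 ⟨b, hb, by rw [mem_neighborFinset]; exact hadj.symm⟩
      exact Finset.disjoint_left.1 hAF ha (Finset.mem_union_right _ this)
    apply swap_lemma G hpart hdisj hST hminS hAS hBT (by rw [hAcard, hBcard])
    have e1 : E G A (S \ A) ≤ 2 := hAcard ▸ E_A_upper G (fun a ha => hLSdeg a (hAL ha))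
    have e2 : E G B (T \ B) ≤ 2 := hBcard ▸ E_A_upper G
      (fun b hb => (Finset.mem_filter.1 (hBL hb)).2)
    have e3 : 4 ≤ E G A (T \ B) := by
      have := E_A_lower G hcub hpart hdisj (fun a ha => hLSdeg a (hAL ha)) hnoadjAB
      omega
    have e4 : 4 ≤ E G B (S \ A) := by
      have := E_A_lower G hcub (by rw [Finset.union_comm]; exact hpart) hdisj.symm
        (fun b hb => (Finset.mem_filter.1 (hBL hb)).2)
        (fun b hb a ha hadj => hnoadjAB a ha b hb hadj.symm)
      omega
    omega
  · -- T has few low-degree vertices: find a short low-degree-to-low-degree path in T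
    push_neg at hLTbig
    -- subtype-level sets in T
    set D2T := @Finset.filter _ (fun v : ↥(T : Set (Fin n)) => degIn G T ↑v = 2)
      (Classical.decPred _) Finset.univ with hD2T
    set B1T := @Finset.filter _ (fun v : ↥(T : Set (Fin n)) =>
      OnCycleOfLength G 3 (↑v : Fin n) ∨ OnCycleOfLength G 4 (↑v : Fin n))
      (Classical.decPred _) D2T with hB1T
    set CT := @Finset.filter _ (fun v : ↥(T : Set (Fin n)) =>
      ∃ u : ↥(T : Set (Fin n)), u ≠ v ∧ degIn G T ↑u ≠ 3 ∧ near G T v u 4)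
      (Classical.decPred _) D2T with hCT
    set WT := @Finset.filter _ (fun v : ↥(T : Set (Fin n)) =>
      ¬(OnCycleOfLength G 3 (↑v : Fin n) ∨ OnCycleOfLength G 4 (↑v : Fin n)) ∧
      ¬∃ u : ↥(T : Set (Fin n)), u ≠ v ∧ degIn G T ↑u ≠ 3 ∧ near G T v u 4)
      (Classical.decPred _) D2T with hWT
    have hcover : D2T ⊆ B1T ∪ WT ∪ CT := by
      intro v hv
      by_cases h1 : OnCycleOfLength G 3 (↑v : Fin n) ∨ OnCycleOfLength G 4 (↑v : Fin n)
      · exact Finset.mem_union_left _ (Finset.mem_union_left _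
          (by rw [hB1T, @Finset.mem_filter _ _ (Classical.decPred _)]; exact ⟨hv, h1⟩))
      by_cases h2 : ∃ u : ↥(T : Set (Fin n)), u ≠ v ∧ degIn G T ↑u ≠ 3 ∧ near G T v u 4
      · exact Finset.mem_union_right _
          (by rw [hCT, @Finset.mem_filter _ _ (Classical.decPred _)]; exact ⟨hv, h2⟩)
      · exact Finset.mem_union_left _ (Finset.mem_union_right _
          (by rw [hWT, @Finset.mem_filter _ _ (Classical.decPred _)]; exact ⟨hv, h1, h2⟩))
    have hWTpack : 7 * WT.card ≤ T.card := by
      apply packing G T hcub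
      intro v hv
      rw [hWT, @Finset.mem_filter _ _ (Classical.decPred _)] at hv
      obtain ⟨hvD, hnc, hnocand⟩ := hv
      rw [hD2T, @Finset.mem_filter _ _ (Classical.decPred _)] at hvD
      push_neg at hnocand
      refine ⟨hvD.2, ?_, fun h => hnc (Or.inl h), fun h => hnc (Or.inr h)⟩
      intro u hu hnear
      by_contra h3
      exact (hnocand u hu h3) hnear
    have hB1Tle : B1T.card ≤
        (@Finset.filter _ (fun x => OnCycleOfLength G 3 x) (Classical.decPred _)
          Finset.univ).card +
        (@Finset.filter _ (fun x => OnCycleOfLength G 4 x) (Classical.decPred _)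
          Finset.univ).card := by
      have hinj : B1T.card ≤ ((@Finset.filter _ (fun x => OnCycleOfLength G 3 x)
          (Classical.decPred _) Finset.univ) ∪ (@Finset.filter _
          (fun x => OnCycleOfLength G 4 x) (Classical.decPred _) Finset.univ)).card := by
        refine Finset.card_le_card_of_injOn (fun v => (↑v : Fin n)) ?_ ?_
        · intro v hv
          rw [Finset.mem_coe, hB1T, @Finset.mem_filter _ _ (Classical.decPred _)] at hv
          rcases hv.2 with h | h
          · exact Finset.mem_union_left _
              (by rw [@Finset.mem_filter _ _ (Classical.decPred _)]
                  exact ⟨Finset.mem_univ _, h⟩)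
          · exact Finset.mem_union_right _
              (by rw [@Finset.mem_filter _ _ (Classical.decPred _)]
                  exact ⟨Finset.mem_univ _, h⟩)
        · intro x _ y _ h
          exact Subtype.ext h
      exact le_trans hinj (Finset.card_union_le _ _)
    -- cardinalities
    have hD2amb : D2T.card = (T.filter (fun a => degIn G T a = 2)).card := by
      rw [hD2T]
      exact card_subtype_filter T (fun a => degIn G T a = 2)
    have hcutle := cut_le G hcub T S (by rw [Finset.union_comm]; exact hpart) hdisj.symm
    rw [← hLT] at hcutle
    have hTn : S.card + T.card = n := by
      have := Finset.card_union_of_disjoint hdisj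
      rw [hpart, Finset.card_univ] at this
      simp at this
      omega
    have hCTpos : 0 < CT.card := by
      have hcovc : D2T.card ≤ B1T.card + WT.card + CT.card := by
        calc D2T.card ≤ (B1T ∪ WT ∪ CT).card := Finset.card_le_card hcover
        _ ≤ (B1T ∪ WT).card + CT.card := Finset.card_union_le _ _
        _ ≤ B1T.card + WT.card + CT.card := by
            have := Finset.card_union_le B1T WT
            omega
      omega
    obtain ⟨v, hvCT⟩ := Finset.card_pos.1 hCTpos
    rw [hCT, @Finset.mem_filter _ _ (Classical.decPred _)] at hvCT
    obtain ⟨hvD2, hvcand⟩ := hvCT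
    rw [hD2T, @Finset.mem_filter _ _ (Classical.decPred _)] at hvD2
    have hv2 : degIn G T ↑v = 2 := hvD2.2
    obtain ⟨w, d, hwv, hw3, hwnear, hd1, hd4, hreach, hdist, p, hpath, hplen, hinternal⟩ :=
      extract G T hvcand
    -- build the ambient path vertex set
    set Bf := (p.support.map Subtype.val).toFinset with hBf
    have hmemBf : ∀ x, x ∈ Bf ↔ ∃ y ∈ p.support, (↑y : Fin n) = x := by
      intro x
      rw [hBf, List.mem_toFinset, List.mem_map]
      try simp
    have hBfT : Bf ⊆ T := by
      intro x hx
      rw [hmemBf] at hx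
      obtain ⟨y, _, rfl⟩ := hx
      exact y.2
    have hBfcard : Bf.card = d + 1 := by
      rw [hBf, List.toFinset_card_of_nodup
        (hpath.support_nodup.map Subtype.val_injective), List.length_map,
        Walk.length_support, hplen]
    have hvBf : (↑v : Fin n) ∈ Bf := (hmemBf _).2 ⟨v, p.start_mem_support, rfl⟩
    have hwBf : (↑w : Fin n) ∈ Bf := (hmemBf _).2 ⟨w, p.end_mem_support, rfl⟩
    have hvwne : (↑v : Fin n) ≠ ↑w := fun h => hwv (Subtype.ext h.symm)
    -- pick A
    have hFcard : (Bf ∪ Bf.biUnion (fun b => G.neighborFinset b)).card ≤ 4 * (d + 1) := by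
      calc (Bf ∪ Bf.biUnion (fun b => G.neighborFinset b)).card
          ≤ Bf.card + (Bf.biUnion (fun b => G.neighborFinset b)).card := Finset.card_union_le _ _
      _ ≤ Bf.card + ∑ b ∈ Bf, (G.neighborFinset b).card :=
          Nat.add_le_add_left Finset.card_biUnion_le _
      _ = Bf.card + 3 * Bf.card := by
          rw [Finset.sum_congr rfl (fun b _ => nbr_card G hcub b), Finset.sum_const,
            smul_eq_mul, Nat.mul_comm]
      _ ≤ 4 * (d + 1) := by rw [hBfcard]; omega
    obtain ⟨A, hAL, hAcard, hAind, hAF⟩ := exists_indep G hcub (d + 1) LS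
      (Bf ∪ Bf.biUnion (fun b => G.neighborFinset b)) (by omega)
    have hAS : A ⊆ S := hAL.trans hLSsub
    have hnoadjAB : ∀ a ∈ A, ∀ b ∈ Bf, ¬ G.Adj a b := by
      intro a ha b hb hadj
      have : a ∈ Bf.biUnion (fun b => G.neighborFinset b) :=
        Finset.mem_biUnion.2 ⟨b, hb, by rw [mem_neighborFinset]; exact hadj.symm⟩
      exact Finset.disjoint_left.1 hAF ha (Finset.mem_union_right _ this)
    apply swap_lemma G hpart hdisj hST hminS hAS hBfT (by rw [hAcard, hBfcard])
    -- the four bounds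
    have e1 : E G A (S \ A) ≤ d + 1 := hAcard ▸ E_A_upper G (fun a ha => hLSdeg a (hAL ha))
    have e3 : 2 * (d + 1) ≤ E G A (T \ Bf) := by
      have := E_A_lower G hcub hpart hdisj (fun a ha => hLSdeg a (hAL ha)) hnoadjAB
      omega
    -- sum of S-degrees over Bf is at least 2
    have hdegS_v : degIn G S (↑v : Fin n) = 1 := by
      have := degIn_partition G hcub hpart hdisj (↑v : Fin n)
      omega
    have hdegS_w : 1 ≤ degIn G S (↑w : Fin n) := by
      have := degIn_partition G hcub hpart hdisj (↑w : Fin n)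
      have h3 := degIn_le_three G hcub T (↑w : Fin n)
      omega
    have hpairsub : ({(↑v : Fin n), ↑w} : Finset (Fin n)) ⊆ Bf := by
      intro x hx
      rcases Finset.mem_insert.1 hx with rfl | hx
      · exact hvBf
      · rw [Finset.mem_singleton.1 hx]; exact hwBf
    have hsumS : 2 ≤ ∑ b ∈ Bf, degIn G S b := by
      calc 2 ≤ degIn G S ↑v + degIn G S ↑w := by omega
      _ = ∑ b ∈ ({(↑v : Fin n), ↑w} : Finset (Fin n)), degIn G S b :=
          (Finset.sum_pair hvwne).symm
      _ ≤ ∑ b ∈ Bf, degIn G S b := Finset.sum_le_sum_of_subset hpairsub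
    have hsumTot : ∑ b ∈ Bf, degIn G T b + ∑ b ∈ Bf, degIn G S b = 3 * (d + 1) := by
      rw [← Finset.sum_add_distrib]
      rw [Finset.sum_congr rfl (fun b _ => by
        have := degIn_partition G hcub hpart hdisj b
        omega : ∀ b ∈ Bf, degIn G T b + degIn G S b = 3)]
      rw [Finset.sum_const, smul_eq_mul, hBfcard, Nat.mul_comm]
    have hEBfT : E G Bf T = ∑ b ∈ Bf, degIn G T b := rfl
    have hinner : 2 * d ≤ E G Bf Bf := by
      have := path_inner_edges G T p hpath
      rw [hplen] at this
      rw [← hBf] at this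
      exact this
    have hsplitT : E G Bf T = E G Bf (T \ Bf) + E G Bf Bf := by
      conv_lhs => rw [show T = (T \ Bf) ∪ Bf from (Finset.sdiff_union_of_subset hBfT).symm]
      exact E_union_right G Bf Finset.sdiff_disjoint
    have e2 : E G Bf (T \ Bf) ≤ d + 1 := by omega
    have e4 : 2 ≤ E G Bf (S \ A) := by
      have heq : ∀ b ∈ Bf, degIn G (S \ A) b = degIn G S b := by
        intro b hb
        apply degIn_sdiff_of_no_adj
        intro a ha hadj
        exact hnoadjAB a ha b hb hadj.symm
      calc 2 ≤ ∑ b ∈ Bf, degIn G S b := hsumS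
      _ = ∑ b ∈ Bf, degIn G (S \ A) b := Finset.sum_congr rfl (fun b hb => (heq b hb).symm)
      _ = E G Bf (S \ A) := rfl
    omega

end St9

namespace St9
variable {n : ℕ} (G : SimpleGraph (Fin n)) [DecidableRel G.Adj]

/-- main counting: a positive fraction of vertices on a side are degree-2 with a nearby
degree-2 partner reachable through degree-3 vertices. -/
lemma side_X (hcub : IsCubic G) (S T : Finset (Fin n))
    (hpart : S ∪ T = Finset.univ) (hdisj : Disjoint S T) (hST : S.card = T.card)
    (hcutS : n ≤ 10 * E G S T)
    (hK : 100 * ((@Finset.filter _ (fun x => OnCycleOfLength G 3 x) (Classical.decPred _)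
        Finset.univ).card +
      (@Finset.filter _ (fun x => OnCycleOfLength G 4 x) (Classical.decPred _)
        Finset.univ).card) ≤ n)
    (hL60 : (S.filter (fun a => degIn G S a ≤ 1)).card ≤ 60)
    (hn : 10 ^ 9 ≤ n) :
    ∃ X : Finset ↥(S : Set (Fin n)), n ≤ 10 ^ 4 * X.card ∧
      ∀ v ∈ X, degIn G S ↑v = 2 ∧
        (∃ u : ↥(S : Set (Fin n)), u ≠ v ∧ degIn G S ↑u ≠ 3 ∧ near G S v u 4) ∧
        (¬ ∃ u : ↥(S : Set (Fin n)), degIn G S ↑u ≤ 1 ∧ near G S v u 4) := by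
  classical
  set D2 := @Finset.filter _ (fun v : ↥(S : Set (Fin n)) => degIn G S ↑v = 2)
    (Classical.decPred _) Finset.univ with hD2
  set B1 := @Finset.filter _ (fun v : ↥(S : Set (Fin n)) =>
    OnCycleOfLength G 3 (↑v : Fin n) ∨ OnCycleOfLength G 4 (↑v : Fin n))
    (Classical.decPred _) D2 with hB1
  set B2 := @Finset.filter _ (fun v : ↥(S : Set (Fin n)) =>
    ∃ u : ↥(S : Set (Fin n)), degIn G S ↑u ≤ 1 ∧ near G S v u 4)
    (Classical.decPred _) D2 with hB2
  set W := @Finset.filter _ (fun v : ↥(S : Set (Fin n)) =>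
    ¬(OnCycleOfLength G 3 (↑v : Fin n) ∨ OnCycleOfLength G 4 (↑v : Fin n)) ∧
    ¬∃ u : ↥(S : Set (Fin n)), u ≠ v ∧ degIn G S ↑u ≠ 3 ∧ near G S v u 4)
    (Classical.decPred _) D2 with hW
  set X := @Finset.filter _ (fun v : ↥(S : Set (Fin n)) =>
    (∃ u : ↥(S : Set (Fin n)), u ≠ v ∧ degIn G S ↑u ≠ 3 ∧ near G S v u 4) ∧
    ¬ ∃ u : ↥(S : Set (Fin n)), degIn G S ↑u ≤ 1 ∧ near G S v u 4)
    (Classical.decPred _) D2 with hX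
  refine ⟨X, ?_, ?_⟩
  swap
  · intro v hv
    rw [hX, @Finset.mem_filter _ _ (Classical.decPred _)] at hv
    obtain ⟨hvD, hv1, hv2⟩ := hv
    rw [hD2, @Finset.mem_filter _ _ (Classical.decPred _)] at hvD
    exact ⟨hvD.2, hv1, hv2⟩
  have hcover : D2 ⊆ B1 ∪ B2 ∪ W ∪ X := by
    intro v hv
    by_cases h1 : OnCycleOfLength G 3 (↑v : Fin n) ∨ OnCycleOfLength G 4 (↑v : Fin n)
    · exact Finset.mem_union_left _ (Finset.mem_union_left _ (Finset.mem_union_left _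
        (by rw [hB1, @Finset.mem_filter _ _ (Classical.decPred _)]; exact ⟨hv, h1⟩)))
    by_cases h2 : ∃ u : ↥(S : Set (Fin n)), degIn G S ↑u ≤ 1 ∧ near G S v u 4
    · exact Finset.mem_union_left _ (Finset.mem_union_left _ (Finset.mem_union_right _
        (by rw [hB2, @Finset.mem_filter _ _ (Classical.decPred _)]; exact ⟨hv, h2⟩)))
    by_cases h3 : ∃ u : ↥(S : Set (Fin n)), u ≠ v ∧ degIn G S ↑u ≠ 3 ∧ near G S v u 4
    · exact Finset.mem_union_right _
        (by rw [hX, @Finset.mem_filter _ _ (Classical.decPred _)]; exact ⟨hv, h3, h2⟩)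
    · exact Finset.mem_union_left _ (Finset.mem_union_right _
        (by rw [hW, @Finset.mem_filter _ _ (Classical.decPred _)]; exact ⟨hv, h1, h3⟩))
  have hWpack : 7 * W.card ≤ S.card := by
    apply packing G S hcub
    intro v hv
    rw [hW, @Finset.mem_filter _ _ (Classical.decPred _)] at hv
    obtain ⟨hvD, hnc, hnocand⟩ := hv
    rw [hD2, @Finset.mem_filter _ _ (Classical.decPred _)] at hvD
    push_neg at hnocand
    refine ⟨hvD.2, ?_, fun h => hnc (Or.inl h), fun h => hnc (Or.inr h)⟩
    intro u hu hnear
    by_contra h3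
    exact (hnocand u hu h3) hnear
  have hB1le : B1.card ≤
      (@Finset.filter _ (fun x => OnCycleOfLength G 3 x) (Classical.decPred _)
        Finset.univ).card +
      (@Finset.filter _ (fun x => OnCycleOfLength G 4 x) (Classical.decPred _)
        Finset.univ).card := by
    have hinj : B1.card ≤ ((@Finset.filter _ (fun x => OnCycleOfLength G 3 x)
        (Classical.decPred _) Finset.univ) ∪ (@Finset.filter _
        (fun x => OnCycleOfLength G 4 x) (Classical.decPred _) Finset.univ)).card := by
      refine Finset.card_le_card_of_injOn (fun v => (↑v : Fin n)) ?_ ?_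
      · intro v hv
        rw [Finset.mem_coe, hB1, @Finset.mem_filter _ _ (Classical.decPred _)] at hv
        rcases hv.2 with h | h
        · exact Finset.mem_union_left _
            (by rw [@Finset.mem_filter _ _ (Classical.decPred _)]
                exact ⟨Finset.mem_univ _, h⟩)
        · exact Finset.mem_union_right _
            (by rw [@Finset.mem_filter _ _ (Classical.decPred _)]
                exact ⟨Finset.mem_univ _, h⟩)
      · intro x _ y _ h
        exact Subtype.ext h
    exact le_trans hinj (Finset.card_union_le _ _)
  have hB2le : B2.card ≤ 7260 := by
    set Lsub := @Finset.filter _ (fun u : ↥(S : Set (Fin n)) => degIn G S ↑u ≤ 1)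
      (Classical.decPred _) Finset.univ with hLsub
    have hLsubcard : Lsub.card ≤ 60 := by
      rw [hLsub, card_subtype_filter S (fun a => degIn G S a ≤ 1)]
      exact hL60
    have hsub : B2 ⊆ Lsub.biUnion (fun u => ballF G S u 4) := by
      intro v hv
      rw [hB2, @Finset.mem_filter _ _ (Classical.decPred _)] at hv
      obtain ⟨-, u, hu1, hu2⟩ := hv
      apply Finset.mem_biUnion.2
      refine ⟨u, ?_, ?_⟩
      · rw [hLsub, @Finset.mem_filter _ _ (Classical.decPred _)]
        exact ⟨Finset.mem_univ _, hu1⟩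
      · rw [mem_ballF]
        exact near_symm G S hu2
    calc B2.card ≤ (Lsub.biUnion (fun u => ballF G S u 4)).card := Finset.card_le_card hsub
    _ ≤ ∑ u ∈ Lsub, (ballF G S u 4).card := Finset.card_biUnion_le
    _ ≤ ∑ _u ∈ Lsub, 121 := Finset.sum_le_sum (fun u _ => by
        have := ballF_card_le G S hcub 4 u
        have hb : bnd 4 = 121 := by norm_num [bnd]
        omega)
    _ = Lsub.card * 121 := by rw [Finset.sum_const, smul_eq_mul]
    _ ≤ 7260 := by omega
  have hD2amb : D2.card = (S.filter (fun a => degIn G S a = 2)).card := by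
    rw [hD2]
    exact card_subtype_filter S (fun a => degIn G S a = 2)
  have hcutle := cut_le G hcub S T hpart hdisj
  have hTn : S.card + T.card = n := by
    have := Finset.card_union_of_disjoint hdisj
    rw [hpart, Finset.card_univ] at this
    simp at this
    omega
  have hcovc : D2.card ≤ B1.card + B2.card + W.card + X.card := by
    calc D2.card ≤ (B1 ∪ B2 ∪ W ∪ X).card := Finset.card_le_card hcover
    _ ≤ (B1 ∪ B2 ∪ W).card + X.card := Finset.card_union_le _ _
    _ ≤ (B1 ∪ B2).card + W.card + X.card := by
        have := Finset.card_union_le (B1 ∪ B2) W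
        omega
    _ ≤ B1.card + B2.card + W.card + X.card := by
        have := Finset.card_union_le B1 B2
        omega
  omega

/-- abstract greedy pairing -/
lemma greedy {α : Type*} [DecidableEq α] (X : Finset α) (wf : α → α)
    (hpre : ∀ x : α, (X.filter (fun u => wf u = x)).card ≤ 121) :
    ∃ M : Finset (α × α), X.card ≤ 244 * M.card ∧
      (∀ m ∈ M, m.1 ∈ X ∧ m.2 = wf m.1) ∧
      (∀ m ∈ M, ∀ m' ∈ M, m ≠ m' →
        m.1 ≠ m'.1 ∧ m.1 ≠ m'.2 ∧ m.2 ≠ m'.1 ∧ m.2 ≠ m'.2) := by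
  classical
  induction X using Finset.strongInduction with
  | _ X ih =>
  rcases Finset.eq_empty_or_nonempty X with rfl | ⟨v, hv⟩
  · exact ⟨∅, by simp⟩
  set R := X.filter (fun u => u = v ∨ u = wf v ∨ wf u = v ∨ wf u = wf v) with hR
  have hvR : v ∈ R := by
    rw [hR, Finset.mem_filter]
    exact ⟨hv, Or.inl rfl⟩
  have hRX : R ⊆ X := Finset.filter_subset _ _
  have hX' : X \ R ⊂ X := Finset.sdiff_ssubset hRX ⟨v, hvR⟩
  have hpre' : ∀ x : α, ((X \ R).filter (fun u => wf u = x)).card ≤ 121 := by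
    intro x
    exact le_trans (Finset.card_le_card
      (Finset.filter_subset_filter _ Finset.sdiff_subset)) (hpre x)
  obtain ⟨M', hM'card, hM'mem, hM'disj⟩ := ih (X \ R) hX' hpre'
  have hRcard : R.card ≤ 244 := by
    have hsub : R ⊆ (X.filter (fun u => u = v)) ∪ (X.filter (fun u => u = wf v))
        ∪ (X.filter (fun u => wf u = v)) ∪ (X.filter (fun u => wf u = wf v)) := by
      intro u hu
      rw [hR, Finset.mem_filter] at hu
      obtain ⟨huX, h⟩ := hu
      rcases h with h | h | h | h
      · exact Finset.mem_union_left _ (Finset.mem_union_left _ (Finset.mem_union_left _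
          (Finset.mem_filter.2 ⟨huX, h⟩)))
      · exact Finset.mem_union_left _ (Finset.mem_union_left _ (Finset.mem_union_right _
          (Finset.mem_filter.2 ⟨huX, h⟩)))
      · exact Finset.mem_union_left _ (Finset.mem_union_right _
          (Finset.mem_filter.2 ⟨huX, h⟩))
      · exact Finset.mem_union_right _ (Finset.mem_filter.2 ⟨huX, h⟩)
    have h1 : (X.filter (fun u => u = v)).card ≤ 1 := by
      apply Finset.card_le_one.2
      intro a ha b hb
      rw [Finset.mem_filter] at ha hb
      rw [ha.2, hb.2]
    have h2 : (X.filter (fun u => u = wf v)).card ≤ 1 := by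
      apply Finset.card_le_one.2
      intro a ha b hb
      rw [Finset.mem_filter] at ha hb
      rw [ha.2, hb.2]
    have h3 := hpre v
    have h4 := hpre (wf v)
    calc R.card ≤ _ := Finset.card_le_card hsub
    _ ≤ ((X.filter (fun u => u = v)) ∪ (X.filter (fun u => u = wf v))
        ∪ (X.filter (fun u => wf u = v))).card + (X.filter (fun u => wf u = wf v)).card :=
        Finset.card_union_le _ _
    _ ≤ 244 := by
        have h5 := Finset.card_union_le ((X.filter (fun u => u = v))
          ∪ (X.filter (fun u => u = wf v))) (X.filter (fun u => wf u = v))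
        have h6 := Finset.card_union_le (X.filter (fun u => u = v))
          (X.filter (fun u => u = wf v))
        omega
  have hnotmem : (v, wf v) ∉ M' := by
    intro hmem
    have := (hM'mem _ hmem).1
    rw [Finset.mem_sdiff] at this
    exact this.2 hvR
  have hfacts : ∀ m' ∈ M', m'.1 ≠ v ∧ m'.1 ≠ wf v ∧ wf m'.1 ≠ v ∧ wf m'.1 ≠ wf v := by
    intro m' hm'
    have h1 := (hM'mem _ hm').1
    rw [Finset.mem_sdiff] at h1
    have h2 : ¬(m'.1 = v ∨ m'.1 = wf v ∨ wf m'.1 = v ∨ wf m'.1 = wf v) := by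
      intro h
      exact h1.2 (by rw [hR, Finset.mem_filter]; exact ⟨h1.1, h⟩)
    push_neg at h2
    exact h2
  refine ⟨insert (v, wf v) M', ?_, ?_, ?_⟩
  · rw [Finset.card_insert_of_notMem hnotmem]
    have hXcard : X.card ≤ (X \ R).card + R.card := by
      have := Finset.card_sdiff_of_subset hRX
      have := Finset.card_le_card hRX
      omega
    omega
  · intro m hm
    rcases Finset.mem_insert.1 hm with rfl | hm
    · exact ⟨hv, rfl⟩
    · exact ⟨Finset.sdiff_subset ((hM'mem _ hm).1), (hM'mem _ hm).2⟩
  · intro m hm m' hm' hne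
    rcases Finset.mem_insert.1 hm with rfl | hm
    · rcases Finset.mem_insert.1 hm' with h | hm'
      · exact absurd h.symm hne
      · obtain ⟨f1, f2, f3, f4⟩ := hfacts m' hm'
        have hw : m'.2 = wf m'.1 := (hM'mem _ hm').2
        exact ⟨f1.symm, by rw [hw]; exact f3.symm, f2.symm, by rw [hw]; exact f4.symm⟩
    · rcases Finset.mem_insert.1 hm' with rfl | hm'
      · obtain ⟨f1, f2, f3, f4⟩ := hfacts m hm
        have hw : m.2 = wf m.1 := (hM'mem _ hm).2
        exact ⟨f1, f2, by rw [hw]; exact f3, by rw [hw]; exact f4⟩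
      · exact hM'disj m hm m' hm' hne

end St9

namespace St9
variable {n : ℕ} (G : SimpleGraph (Fin n)) [DecidableRel G.Adj]

lemma inducedDegree_eq (S : Finset (Fin n)) (u : ↥(S : Set (Fin n))) :
    inducedDegree G (S : Set (Fin n)) u = degIn G S ↑u := by
  unfold inducedDegree
  rw [Set.ncard_eq_toFinset_card', ← degH_eq G S u, ← card_neighborFinset_eq_degree]
  try congr 1
  try rw [neighborFinset_def]

lemma side_final (hcub : IsCubic G) (S T : Finset (Fin n))
    (hpart : S ∪ T = Finset.univ) (hdisj : Disjoint S T) (hST : S.card = T.card)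
    (hminS : cutSize G ↑S ↑T = bisectionWidth G)
    (hcutS : n ≤ 10 * E G S T) (hcutT : n ≤ 10 * E G T S)
    (hK : 100 * ((@Finset.filter _ (fun x => OnCycleOfLength G 3 x) (Classical.decPred _)
        Finset.univ).card +
      (@Finset.filter _ (fun x => OnCycleOfLength G 4 x) (Classical.decPred _)
        Finset.univ).card) ≤ n)
    (hn : 10 ^ 9 ≤ n) :
    HasManyGoodPairs G (S : Set (Fin n)) n := by
  classical
  have hL60 := Lsmall G hcub S T hpart hdisj hST hminS hcutT hK hn
  obtain ⟨X, hXcard, hXmem⟩ := side_X G hcub S T hpart hdisj hST hcutS hK hL60 hn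
  -- the good-partner predicate
  set pk : ↥(S : Set (Fin n)) → ↥(S : Set (Fin n)) → Prop := fun v w =>
    w ≠ v ∧ degIn G S ↑w = 2 ∧ near G S v w 4 ∧
    (G.induce (S : Set (Fin n))).Reachable v w ∧
    1 ≤ (G.induce (S : Set (Fin n))).dist v w ∧ (G.induce (S : Set (Fin n))).dist v w ≤ 4 ∧
    ∃ p : (G.induce (S : Set (Fin n))).Walk v w, p.IsPath ∧
      p.length = (G.induce (S : Set (Fin n))).dist v w ∧
      (∀ x ∈ p.support, x ≠ v → x ≠ w → degIn G S ↑x = 3) with hpk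
  have hgood : ∀ v ∈ X, ∃ w, pk v w := by
    intro v hv
    obtain ⟨hv2, hcand, hnoB2⟩ := hXmem v hv
    obtain ⟨w, d, hwv, hw3, hwnear, hd1, hd4, hreach, hdist, p, hpath, hplen, hinternal⟩ :=
      extract G S hcand
    have hw2 : degIn G S ↑w = 2 := by
      have hle := degIn_le_three G hcub S (↑w : Fin n)
      have : ¬ (degIn G S ↑w ≤ 1) := fun h => hnoB2 ⟨w, h, hwnear⟩
      omega
    refine ⟨w, hwv, hw2, hwnear, hreach, ?_, ?_, p, hpath, ?_, hinternal⟩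
    · rw [hdist]; exact hd1
    · rw [hdist]; exact hd4
    · rw [hdist]; exact hplen
  set wf : ↥(S : Set (Fin n)) → ↥(S : Set (Fin n)) := fun v =>
    if h : ∃ w, pk v w then h.choose else v with hwfdef
  have hwf : ∀ v ∈ X, pk v (wf v) := by
    intro v hv
    have h := hgood v hv
    rw [hwfdef]
    simp only [dif_pos h]
    exact h.choose_spec
  have hpre : ∀ x, (X.filter (fun u => wf u = x)).card ≤ 121 := by
    intro x
    have hsub : X.filter (fun u => wf u = x) ⊆ ballF G S x 4 := by
      intro u hu
      rw [Finset.mem_filter] at hu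
      obtain ⟨huX, hux⟩ := hu
      have := (hwf u huX).2.2.1
      rw [mem_ballF, ← hux]
      exact near_symm G S this
    have := ballF_card_le G S hcub 4 x
    have hb : bnd 4 = 121 := by norm_num [bnd]
    have := Finset.card_le_card hsub
    omega
  obtain ⟨M, hMcard, hMmem, hMdisj⟩ := greedy X wf hpre
  -- bucket by distance
  set bucket : ℕ → Finset (↥(S : Set (Fin n)) × ↥(S : Set (Fin n))) := fun d =>
    M.filter (fun m => (G.induce (S : Set (Fin n))).dist m.1 m.2 = d) with hbucket
  have hMsub : M ⊆ bucket 1 ∪ bucket 2 ∪ bucket 3 ∪ bucket 4 := by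
    intro m hm
    have hp := hwf m.1 (hMmem m hm).1
    rw [← (hMmem m hm).2] at hp
    have h1 := hp.2.2.2.2.1
    have h4 := hp.2.2.2.2.2.1
    interval_cases h : (G.induce (S : Set (Fin n))).dist m.1 m.2
    · exact Finset.mem_union_left _ (Finset.mem_union_left _ (Finset.mem_union_left _
        (Finset.mem_filter.2 ⟨hm, h⟩)))
    · exact Finset.mem_union_left _ (Finset.mem_union_left _ (Finset.mem_union_right _
        (Finset.mem_filter.2 ⟨hm, h⟩)))
    · exact Finset.mem_union_left _ (Finset.mem_union_right _ (Finset.mem_filter.2 ⟨hm, h⟩))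
    · exact Finset.mem_union_right _ (Finset.mem_filter.2 ⟨hm, h⟩)
  have hMsum : M.card ≤ (bucket 1).card + (bucket 2).card + (bucket 3).card
      + (bucket 4).card := by
    calc M.card ≤ (bucket 1 ∪ bucket 2 ∪ bucket 3 ∪ bucket 4).card :=
        Finset.card_le_card hMsub
    _ ≤ (bucket 1 ∪ bucket 2 ∪ bucket 3).card + (bucket 4).card := Finset.card_union_le _ _
    _ ≤ (bucket 1).card + (bucket 2).card + (bucket 3).card + (bucket 4).card := by
        have h1 := Finset.card_union_le (bucket 1 ∪ bucket 2) (bucket 3)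
        have h2 := Finset.card_union_le (bucket 1) (bucket 2)
        omega
  -- select the biggest bucket
  have hexists : ∃ d, 1 ≤ d ∧ d ≤ 4 ∧ M.card ≤ 4 * (bucket d).card := by
    by_cases h1 : M.card ≤ 4 * (bucket 1).card
    · exact ⟨1, by omega, by omega, h1⟩
    by_cases h2 : M.card ≤ 4 * (bucket 2).card
    · exact ⟨2, by omega, by omega, h2⟩
    by_cases h3 : M.card ≤ 4 * (bucket 3).card
    · exact ⟨3, by omega, by omega, h3⟩
    · exact ⟨4, by omega, by omega, by omega⟩
  obtain ⟨d, hd1, hd4, hdcard⟩ := hexists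
  refine ⟨d, hd1, hd4, ↑(bucket d), ?_, ?_, ?_⟩
  · -- size
    rw [Set.ncard_coe_finset]
    have hnat : n ≤ 10 ^ 7 * (bucket d).card := by
      calc n ≤ 10 ^ 4 * X.card := hXcard
      _ ≤ 10 ^ 4 * (244 * M.card) := by
          have := hMcard
          apply Nat.mul_le_mul_left
          exact this
      _ ≤ 10 ^ 4 * (244 * (4 * (bucket d).card)) := by
          apply Nat.mul_le_mul_left
          apply Nat.mul_le_mul_left
          exact hdcard
      _ ≤ 10 ^ 7 * (bucket d).card := by ring_nf; omega
    rw [div_le_iff₀ (by norm_num : (0:ℝ) < 10 ^ 7)]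
    calc (n : ℝ) ≤ ((10 ^ 7 * (bucket d).card : ℕ) : ℝ) := by exact_mod_cast hnat
    _ = ((bucket d).card : ℝ) * 10 ^ 7 := by push_cast; ring
  · -- pair properties
    intro p hp
    rw [Finset.mem_coe, hbucket, Finset.mem_filter] at hp
    obtain ⟨hpM, hpdist⟩ := hp
    have hpX := (hMmem p hpM).1
    have hpw := (hMmem p hpM).2
    have hppk := hwf p.1 hpX
    rw [← hpw] at hppk
    obtain ⟨hne, hw2, hnear4, hreach, hdd1, hdd4, q, hqpath, hqlen, hqint⟩ := hppk
    refine ⟨hne.symm, ?_, ?_, hreach, hpdist, q, hqpath, ?_, ?_⟩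
    · rw [inducedDegree_eq]
      exact (hXmem p.1 hpX).1
    · rw [inducedDegree_eq]
      exact hw2
    · rw [hqlen, hpdist]
    · intro x hx hx1 hx2
      rw [inducedDegree_eq]
      exact hqint x hx hx1 hx2
  · -- disjointness
    intro p hp q hq hpq
    rw [Finset.mem_coe, hbucket, Finset.mem_filter] at hp hq
    obtain ⟨f1, f2, f3, f4⟩ := hMdisj p hp.1 q hq.1 hpq
    ext z
    simp only [Set.mem_inter_iff, Set.mem_insert_iff, Set.mem_singleton_iff, Set.mem_empty_iff_false,
      iff_false, not_and, not_or]
    rintro (rfl | rfl)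
    · exact ⟨fun h => f1 h, fun h => f2 h⟩
    · exact ⟨fun h => f3 h, fun h => f4 h⟩

end St9


/-- For all large enough even `n`: in any typical 3-regular graph on `n` vertices with a
minimal bisection `(V1, V2)`, each side has, for some `d ∈ {1,2,3,4}`, at least `n/10⁷`
pairwise disjoint pairs of degree-two vertices at distance `d` joined by a path of length
`d` whose `d−1` internal vertices all have degree three. -/
theorem statement9 :
    ∃ N : ℕ, ∀ n : ℕ, N ≤ n → Even n →
      ∀ G : SimpleGraph (Fin n), IsCubic G → Typical G →
        ∀ V1 V2 : Set (Fin n), IsMinimalBisection G V1 V2 →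
          HasManyGoodPairs G V1 n ∧ HasManyGoodPairs G V2 n := by
  classical
  use 10 ^ 9
  intro n hn _heven G hcub htyp V1 V2 hmin
  letI : DecidableRel G.Adj := Classical.decRel _
  obtain ⟨⟨hunion, hdisjS, hncard⟩, hcut⟩ := hmin
  set S := (Set.toFinite V1).toFinset with hSdef
  set T := (Set.toFinite V2).toFinset with hTdef
  have hS : (S : Set (Fin n)) = V1 := Set.Finite.coe_toFinset _
  have hT : (T : Set (Fin n)) = V2 := Set.Finite.coe_toFinset _
  have hpart : S ∪ T = Finset.univ := by
    apply Finset.coe_injective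
    rw [Finset.coe_union, hS, hT, hunion, Finset.coe_univ]
  have hdisj : Disjoint S T := by
    rw [← Finset.disjoint_coe, hS, hT]
    exact hdisjS
  have hST : S.card = T.card := by
    have h := hncard
    rw [← hS, ← hT, Set.ncard_coe_finset, Set.ncard_coe_finset] at h
    exact h
  have hminS : cutSize G ↑S ↑T = bisectionWidth G := by rw [hS, hT]; exact hcut
  have hminT : cutSize G ↑T ↑S = bisectionWidth G := by
    rw [St9.cutSize_comm]; exact hminS
  have hE : St9.E G S T = bisectionWidth G := by
    rw [← St9.cutSize_coe]; exact hminS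
  have hET : St9.E G T S = bisectionWidth G := by
    rw [St9.E_comm]; exact hE
  have hbwn : n ≤ 10 * bisectionWidth G := by
    have h01 := htyp.1
    have : (n : ℝ) ≤ 10 * (bisectionWidth G : ℝ) := by linarith
    exact_mod_cast this
  have hcutS : n ≤ 10 * St9.E G S T := by rw [hE]; exact hbwn
  have hcutT : n ≤ 10 * St9.E G T S := by rw [hET]; exact hbwn
  have hnR : (10 ^ 9 : ℝ) ≤ (n : ℝ) := by exact_mod_cast hn
  have hKr : ∀ ℓ : ℕ, ℓ ≤ 20 →
      (((@Finset.filter _ (fun x => OnCycleOfLength G ℓ x) (Classical.decPred _)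
        Finset.univ).card : ℝ)) ≤ Real.log n := by
    intro ℓ hℓ
    have h := htyp.2 ℓ hℓ
    have hset : {v : Fin n | OnCycleOfLength G ℓ v} =
        ↑(@Finset.filter _ (fun x => OnCycleOfLength G ℓ x) (Classical.decPred _)
          Finset.univ) := by
      ext x
      rw [Set.mem_setOf_eq, Finset.mem_coe, @Finset.mem_filter _ _ (Classical.decPred _)]
      simp
    rw [hset, Set.ncard_coe_finset] at h
    exact h
  have hsq : Real.log n ≤ 2 * Real.sqrt n := by
    have hpos : (0:ℝ) < Real.sqrt n := Real.sqrt_pos.2 (by linarith)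
    have h1 : Real.log n = 2 * Real.log (Real.sqrt n) := by
      rw [Real.log_sqrt (by linarith)]
      ring
    have h2 : Real.log (Real.sqrt n) ≤ Real.sqrt n - 1 := Real.log_le_sub_one_of_pos hpos
    nlinarith [Real.sqrt_nonneg (n:ℝ)]
  have h400 : (400:ℝ) ≤ Real.sqrt n := by
    have h1 : Real.sqrt 160000 ≤ Real.sqrt n := Real.sqrt_le_sqrt (by linarith)
    rwa [show (160000:ℝ) = 400 ^ 2 by norm_num, Real.sqrt_sq (by norm_num : (0:ℝ) ≤ 400)] at h1
  have hK : 100 * ((@Finset.filter _ (fun x => OnCycleOfLength G 3 x) (Classical.decPred _)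
        Finset.univ).card +
      (@Finset.filter _ (fun x => OnCycleOfLength G 4 x) (Classical.decPred _)
        Finset.univ).card) ≤ n := by
    have e3 := hKr 3 (by norm_num)
    have e4 := hKr 4 (by norm_num)
    have hms := Real.mul_self_sqrt (show (0:ℝ) ≤ n by linarith)
    have : (100:ℝ) * (((@Finset.filter _ (fun x => OnCycleOfLength G 3 x)
        (Classical.decPred _) Finset.univ).card : ℝ) +
        ((@Finset.filter _ (fun x => OnCycleOfLength G 4 x)
        (Classical.decPred _) Finset.univ).card : ℝ)) ≤ n := by
      nlinarith [Real.sqrt_nonneg (n:ℝ)]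
    exact_mod_cast this
  constructor
  · have := St9.side_final G hcub S T hpart hdisj hST hminS hcutS hcutT hK hn
    rwa [hS] at this
  · have := St9.side_final G hcub T S (by rw [Finset.union_comm]; exact hpart) hdisj.symm
      hST.symm hminT hcutT hcutS hK hn
    rwa [hT] at this
end

section
/- Let H be a finite bipartite simple graph with parts H1 and H2 in which every vertex has degree at most two. Then H contains an independent set I with |I ∩ H1| ≥ ⌈|H1|/2⌉ − 1 and |I ∩ H2| ≥ ⌈|H2|/2⌉ − 1. -/
open Finset

namespace Statement13Aux

variable {V : Type*} [DecidableEq V]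

/-- neighbors of `b` inside `A` -/
def Dn (adj : V → V → Prop) [DecidableRel adj] (A : Finset V) (b : V) : Finset V :=
  A.filter (fun a => adj a b)

def cutset (adj : V → V → Prop) [DecidableRel adj] (A B Y : Finset V) : Finset V :=
  B.filter (fun b => (Dn adj A b).card = 2 ∧ ((Dn adj A b) ∩ Y).card = 1)

def cplus (adj : V → V → Prop) [DecidableRel adj] (A B Y : Finset V) : Finset V :=
  B.filter (fun b => 1 ≤ (Dn adj A b).card ∧ (Dn adj A b) ⊆ Y)

def wt (adj : V → V → Prop) [DecidableRel adj] (A B : Finset V) (v : V) : ℕ :=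
  ∑ b ∈ B.filter (fun b => adj v b), (3 - (Dn adj A b).card)

lemma ident (adj : V → V → Prop) [DecidableRel adj] (A B : Finset V)
    (hB : ∀ b, (Dn adj A b).card ≤ 2) {Y : Finset V} (hY : Y ⊆ A) :
    ∑ v ∈ Y, wt adj A B v = 2 * (cplus adj A B Y).card + (cutset adj A B Y).card := by
  have hw : ∀ v, wt adj A B v = ∑ b ∈ B, if adj v b then (3 - (Dn adj A b).card) else 0 := by
    intro v; rw [wt, Finset.sum_filter]
  have step1 : ∑ v ∈ Y, wt adj A B v
      = ∑ b ∈ B, (3 - (Dn adj A b).card) * ((Dn adj A b) ∩ Y).card := by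
    calc ∑ v ∈ Y, wt adj A B v
        = ∑ v ∈ Y, ∑ b ∈ B, if adj v b then (3 - (Dn adj A b).card) else 0 :=
          Finset.sum_congr rfl fun v _ => hw v
      _ = ∑ b ∈ B, ∑ v ∈ Y, if adj v b then (3 - (Dn adj A b).card) else 0 := Finset.sum_comm
      _ = ∑ b ∈ B, (3 - (Dn adj A b).card) * ((Dn adj A b) ∩ Y).card := by
          refine Finset.sum_congr rfl fun b _ => ?_
          rw [← Finset.sum_filter, Finset.sum_const, smul_eq_mul, mul_comm]
          congr 1
          have : Y.filter (fun v => adj v b) = (Dn adj A b) ∩ Y := by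
            ext x
            simp only [mem_filter, Dn, mem_inter]
            constructor
            · rintro ⟨hxY, hadj⟩; exact ⟨⟨hY hxY, hadj⟩, hxY⟩
            · rintro ⟨⟨_, hadj⟩, hxY⟩; exact ⟨hxY, hadj⟩
          rw [this]
  rw [step1, cplus, cutset, Finset.card_filter, Finset.card_filter, Finset.mul_sum,
    ← Finset.sum_add_distrib]
  refine Finset.sum_congr rfl fun b _ => ?_
  have hk : ((Dn adj A b) ∩ Y).card ≤ (Dn adj A b).card :=
    card_le_card inter_subset_left
  have hdb := hB b
  have hiff : (Dn adj A b) ⊆ Y ↔ (Dn adj A b).card ≤ ((Dn adj A b) ∩ Y).card := by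
    constructor
    · intro h
      have he : (Dn adj A b) ∩ Y = Dn adj A b := inter_eq_left.mpr h
      exact (congrArg Finset.card he).symm.le
    · intro h
      have he : (Dn adj A b) ∩ Y = Dn adj A b :=
        Finset.eq_of_subset_of_card_le inter_subset_left h
      exact inter_eq_left.mp he
  rw [if_congr (and_congr_right fun _ => hiff) rfl rfl]
  have hd3 : (Dn adj A b).card = 0 ∨ (Dn adj A b).card = 1 ∨ (Dn adj A b).card = 2 := by omega
  rcases hd3 with h | h | h <;> rw [h] <;> rw [h] at hk <;> split_ifs <;> omega

lemma growth (adj : V → V → Prop) [DecidableRel adj] (A B : Finset V)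
    (hA : ∀ a, (B.filter (fun b => adj a b)).card ≤ 2) :
    ∀ s, s ≤ A.card → ∃ Y, Y ⊆ A ∧ Y.card = s ∧ (cutset adj A B Y).card ≤ 2 := by
  intro s
  induction s with
  | zero =>
    intro _
    refine ⟨∅, empty_subset _, card_empty, ?_⟩
    have h0 : cutset adj A B ∅ = ∅ := by
      refine Finset.eq_empty_of_forall_notMem fun b hb => ?_
      rw [cutset, mem_filter] at hb
      rw [inter_empty, card_empty] at hb
      omega
    rw [h0, card_empty]; omega
  | succ s ih =>
    intro hs
    obtain ⟨Y, hYA, hYcard, hYcut⟩ := ih (Nat.le_of_succ_le hs)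
    by_cases hne : (cutset adj A B Y).Nonempty
    · obtain ⟨b0, hb0⟩ := hne
      rw [cutset, mem_filter] at hb0
      obtain ⟨hb0B, hb0d, hb0k⟩ := hb0
      have hnotsub : ¬ (Dn adj A b0 ⊆ Y) := by
        intro hsub
        have : (Dn adj A b0) ∩ Y = Dn adj A b0 := inter_eq_left.mpr hsub
        rw [this] at hb0k; omega
      obtain ⟨v, hvD, hvY⟩ := not_subset.mp hnotsub
      have hvA : v ∈ A := (mem_filter.mp hvD).1
      have hvadj : adj v b0 := (mem_filter.mp hvD).2
      refine ⟨insert v Y, insert_subset hvA hYA, by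
        rw [card_insert_of_notMem hvY, hYcard], ?_⟩
      set Bv := B.filter (fun b => adj v b) with hBvdef
      have hsub1 : cutset adj A B (insert v Y) ⊆ (cutset adj A B Y ∪ Bv).erase b0 := by
        intro b hb
        rw [cutset, mem_filter] at hb
        obtain ⟨hbB, hbd, hbk⟩ := hb
        by_cases hvb : v ∈ Dn adj A b
        · have hins : Dn adj A b ∩ insert v Y = insert v (Dn adj A b ∩ Y) :=
            Finset.inter_insert_of_mem hvb
          have hvnotin : v ∉ Dn adj A b ∩ Y := fun h => hvY (mem_inter.mp h).2
          have hkY : (Dn adj A b ∩ Y).card = 0 := by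
            rw [hins, card_insert_of_notMem hvnotin] at hbk; omega
          have hbne : b ≠ b0 := by
            intro h; rw [h] at hkY; omega
          exact mem_erase.mpr ⟨hbne,
            mem_union_right _ (mem_filter.mpr ⟨hbB, (mem_filter.mp hvb).2⟩)⟩
        · have hsame : Dn adj A b ∩ insert v Y = Dn adj A b ∩ Y :=
            Finset.inter_insert_of_notMem hvb
          have hbY : b ∈ cutset adj A B Y := by
            rw [cutset, mem_filter]
            exact ⟨hbB, hbd, by rw [← hsame]; exact hbk⟩
          have hbne : b ≠ b0 := fun h => hvb (h ▸ hvD)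
          exact mem_erase.mpr ⟨hbne, mem_union_left _ hbY⟩
      have hb0cut : b0 ∈ cutset adj A B Y := by
        rw [cutset, mem_filter]; exact ⟨hb0B, hb0d, hb0k⟩
      have hb0Bv : b0 ∈ Bv := mem_filter.mpr ⟨hb0B, hvadj⟩
      have hint : 1 ≤ ((cutset adj A B Y) ∩ Bv).card :=
        Finset.card_pos.mpr ⟨b0, mem_inter.mpr ⟨hb0cut, hb0Bv⟩⟩
      have huni := Finset.card_union_add_card_inter (cutset adj A B Y) Bv
      have hBvcard : Bv.card ≤ 2 := hA v
      have herase : ((cutset adj A B Y ∪ Bv).erase b0).card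
          = (cutset adj A B Y ∪ Bv).card - 1 :=
        card_erase_of_mem (mem_union_left _ hb0cut)
      have hle := card_le_card hsub1
      omega
    · have hcut0 : cutset adj A B Y = ∅ := not_nonempty_iff_eq_empty.mp hne
      have hex : ∃ v, v ∈ A \ Y := by
        have h1 : (A \ Y).card = A.card - s := by rw [card_sdiff_of_subset hYA, hYcard]
        have h2 : 0 < (A \ Y).card := by omega
        obtain ⟨v, hv⟩ := Finset.card_pos.mp h2
        exact ⟨v, hv⟩
      obtain ⟨v, hv⟩ := hex
      have hvA : v ∈ A := (mem_sdiff.mp hv).1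
      have hvY : v ∉ Y := (mem_sdiff.mp hv).2
      refine ⟨insert v Y, insert_subset hvA hYA, by
        rw [card_insert_of_notMem hvY, hYcard], ?_⟩
      have hsub1 : cutset adj A B (insert v Y) ⊆ B.filter (fun b => adj v b) := by
        intro b hb
        rw [cutset, mem_filter] at hb
        obtain ⟨hbB, hbd, hbk⟩ := hb
        by_cases hvb : v ∈ Dn adj A b
        · exact mem_filter.mpr ⟨hbB, (mem_filter.mp hvb).2⟩
        · have hsame : Dn adj A b ∩ insert v Y = Dn adj A b ∩ Y :=
            Finset.inter_insert_of_notMem hvb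
          have hbY : b ∈ cutset adj A B Y := by
            rw [cutset, mem_filter]
            exact ⟨hbB, hbd, by rw [← hsame]; exact hbk⟩
          rw [hcut0] at hbY
          exact absurd hbY (notMem_empty b)
      calc (cutset adj A B (insert v Y)).card ≤ _ := card_le_card hsub1
        _ ≤ 2 := hA v

lemma key (adj : V → V → Prop) [DecidableRel adj] (A B : Finset V)
    (hA : ∀ a, (B.filter (fun b => adj a b)).card ≤ 2)
    (hB : ∀ b, (Dn adj A b).card ≤ 2) :
    ∃ P, P ⊆ A ∧ 2 * P.card ≤ A.card + 2 ∧
      B.card ≤ 2 * (B.filter (fun b => Dn adj A b ⊆ P)).card + 2 := by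
  obtain ⟨Y, hYA, hYcard, hYcut⟩ := growth adj A B hA ((A.card + 1) / 2) (by omega)
  set O := A \ Y with hOdef
  have hOA : O ⊆ A := sdiff_subset
  have hOcard : O.card = A.card - (A.card + 1) / 2 := by
    rw [hOdef, card_sdiff_of_subset hYA, hYcard]
  have hcutO : cutset adj A B O = cutset adj A B Y := by
    refine Finset.filter_congr fun b _ => ?_
    have hDA : Dn adj A b ⊆ A := filter_subset _ _
    have hDO : Dn adj A b ∩ O = Dn adj A b \ Y := by
      rw [hOdef]; ext x
      simp only [mem_inter, mem_sdiff]
      exact ⟨fun ⟨h1, _, h3⟩ => ⟨h1, h3⟩, fun ⟨h1, h2⟩ => ⟨h1, hDA h1, h2⟩⟩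
    have hpart : (Dn adj A b \ Y).card + (Dn adj A b ∩ Y).card = (Dn adj A b).card :=
      Finset.card_sdiff_add_card_inter _ _
    rw [hDO]
    constructor
    · rintro ⟨h1, h2⟩; exact ⟨h1, by omega⟩
    · rintro ⟨h1, h2⟩; exact ⟨h1, by omega⟩
  have hidY := ident adj A B hB hYA
  have hidO := ident adj A B hB hOA
  have hidA := ident adj A B hB (Finset.Subset.refl A)
  have hsplit : ∑ v ∈ O, wt adj A B v + ∑ v ∈ Y, wt adj A B v = ∑ v ∈ A, wt adj A B v := by
    rw [hOdef]; exact Finset.sum_sdiff hYA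
  have hcutA : (cutset adj A B A).card = 0 := by
    rw [card_eq_zero]
    refine Finset.eq_empty_of_forall_notMem fun b hb => ?_
    rw [cutset, mem_filter] at hb
    have hDA : Dn adj A b ∩ A = Dn adj A b := inter_eq_left.mpr (filter_subset _ _)
    rw [hDA] at hb
    omega
  have hcplusA : (cplus adj A B A).card = (B.filter (fun b => 1 ≤ (Dn adj A b).card)).card := by
    rw [cplus]
    congr 1
    refine Finset.filter_congr fun b _ => ?_
    simp only [and_iff_left_iff_imp]
    intro _
    exact filter_subset _ _
  have hm := Finset.card_filter_add_card_filter_not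
    (s := B) (p := fun b => 1 ≤ (Dn adj A b).card)
  have hcount : ∀ P : Finset V,
      (cplus adj A B P).card + (B.filter (fun b => ¬ 1 ≤ (Dn adj A b).card)).card
        ≤ (B.filter (fun b => Dn adj A b ⊆ P)).card := by
    intro P
    have hdisj : Disjoint (cplus adj A B P)
        (B.filter (fun b => ¬ 1 ≤ (Dn adj A b).card)) := by
      refine Finset.disjoint_left.mpr fun b hb hb' => ?_
      exact (mem_filter.mp hb').2 (mem_filter.mp hb).2.1
    have hsubu : cplus adj A B P ∪ B.filter (fun b => ¬ 1 ≤ (Dn adj A b).card)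
        ⊆ B.filter (fun b => Dn adj A b ⊆ P) := by
      intro b hb
      rcases mem_union.mp hb with h | h
      · exact mem_filter.mpr ⟨(mem_filter.mp h).1, (mem_filter.mp h).2.2⟩
      · have h0 : (Dn adj A b).card = 0 := by
          have := (mem_filter.mp h).2; omega
        refine mem_filter.mpr ⟨(mem_filter.mp h).1, ?_⟩
        rw [card_eq_zero.mp h0]
        exact empty_subset _
    calc (cplus adj A B P).card + (B.filter (fun b => ¬ 1 ≤ (Dn adj A b).card)).card
        = (cplus adj A B P ∪ B.filter (fun b => ¬ 1 ≤ (Dn adj A b).card)).card :=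
          (card_union_of_disjoint hdisj).symm
      _ ≤ _ := card_le_card hsubu
  by_cases hcase : (B.filter (fun b => 1 ≤ (Dn adj A b).card)).card
      ≤ 2 * (cplus adj A B Y).card + 2
  · refine ⟨Y, hYA, by omega, ?_⟩
    have := hcount Y
    omega
  · refine ⟨O, hOA, by omega, ?_⟩
    have hcutOcard : (cutset adj A B O).card = (cutset adj A B Y).card := by rw [hcutO]
    have := hcount O
    omega

end Statement13Aux

open SimpleGraph

/-- Let `H` be a finite bipartite simple graph with parts `H1` and `H2` in which every
vertex has degree at most two. Then `H` contains an independent set `I` with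
`|I ∩ H1| ≥ ⌈|H1|/2⌉ − 1` and `|I ∩ H2| ≥ ⌈|H2|/2⌉ − 1`. -/
theorem statement13 {V : Type*} [Fintype V] (H : SimpleGraph V) (H1 H2 : Set V)
    (hpart : H1 ∪ H2 = Set.univ) (hdisj : Disjoint H1 H2)
    (hbip : ∀ u v : V, H.Adj u v → (u ∈ H1 ∧ v ∈ H2) ∨ (u ∈ H2 ∧ v ∈ H1))
    (hdeg : ∀ v : V, (H.neighborSet v).ncard ≤ 2) :
    ∃ I : Set V,
      (∀ u ∈ I, ∀ v ∈ I, ¬ H.Adj u v) ∧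
      (H1.ncard + 1) / 2 - 1 ≤ (I ∩ H1).ncard ∧
      (H2.ncard + 1) / 2 - 1 ≤ (I ∩ H2).ncard := by
  classical
  have hfin1 : H1.Finite := Set.toFinite _
  have hfin2 : H2.Finite := Set.toFinite _
  set A := hfin1.toFinset with hAdef
  set B := hfin2.toFinset with hBdef
  have hmemA : ∀ x, x ∈ A ↔ x ∈ H1 := fun x => Set.Finite.mem_toFinset hfin1
  have hmemB : ∀ x, x ∈ B ↔ x ∈ H2 := fun x => Set.Finite.mem_toFinset hfin2
  have hdegA : ∀ a, (B.filter (fun b => H.Adj a b)).card ≤ 2 := by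
    intro a
    have hsub : (↑(B.filter (fun b => H.Adj a b)) : Set V) ⊆ H.neighborSet a := by
      intro x hx
      rw [Finset.mem_coe, Finset.mem_filter] at hx
      exact hx.2
    calc (B.filter (fun b => H.Adj a b)).card
        = (↑(B.filter (fun b => H.Adj a b)) : Set V).ncard := (Set.ncard_coe_finset _).symm
      _ ≤ (H.neighborSet a).ncard := Set.ncard_le_ncard hsub (Set.toFinite _)
      _ ≤ 2 := hdeg a
  have hdegB : ∀ b, (Statement13Aux.Dn H.Adj A b).card ≤ 2 := by
    intro b
    have hsub : (↑(Statement13Aux.Dn H.Adj A b) : Set V) ⊆ H.neighborSet b := by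
      intro x hx
      rw [Finset.mem_coe, Statement13Aux.Dn, Finset.mem_filter] at hx
      exact hx.2.symm
    calc (Statement13Aux.Dn H.Adj A b).card
        = (↑(Statement13Aux.Dn H.Adj A b) : Set V).ncard := (Set.ncard_coe_finset _).symm
      _ ≤ (H.neighborSet b).ncard := Set.ncard_le_ncard hsub (Set.toFinite _)
      _ ≤ 2 := hdeg b
  obtain ⟨P, hPA, hPcard, hPcount⟩ := Statement13Aux.key H.Adj A B hdegA hdegB
  set Q := B.filter (fun b => Statement13Aux.Dn H.Adj A b ⊆ P) with hQdef
  have hsd1 : ∀ x ∈ (↑(A \ P) : Set V), x ∈ H1 := by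
    intro x hx
    rw [Finset.mem_coe, Finset.mem_sdiff] at hx
    exact (hmemA x).mp hx.1
  have hQ2 : ∀ x ∈ (↑Q : Set V), x ∈ H2 := by
    intro x hx
    rw [Finset.mem_coe, hQdef, Finset.mem_filter] at hx
    exact (hmemB x).mp hx.1
  refine ⟨(↑(A \ P) : Set V) ∪ ↑Q, ?_, ?_, ?_⟩
  · rintro u hu v hv hadj
    rcases hu with hu | hu <;> rcases hv with hv | hv
    · have h1 := hsd1 u hu
      have h2 := hsd1 v hv
      rcases hbip u v hadj with ⟨_, hv2⟩ | ⟨hu2, _⟩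
      · exact Set.disjoint_left.mp hdisj h2 hv2
      · exact Set.disjoint_left.mp hdisj h1 hu2
    · have huAP := Finset.mem_sdiff.mp (Finset.mem_coe.mp hu)
      have hvQ := Finset.mem_filter.mp (Finset.mem_coe.mp hv)
      have hmem : u ∈ Statement13Aux.Dn H.Adj A v :=
        Finset.mem_filter.mpr ⟨huAP.1, hadj⟩
      exact huAP.2 (hvQ.2 hmem)
    · have hvAP := Finset.mem_sdiff.mp (Finset.mem_coe.mp hv)
      have huQ := Finset.mem_filter.mp (Finset.mem_coe.mp hu)
      have hmem : v ∈ Statement13Aux.Dn H.Adj A u :=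
        Finset.mem_filter.mpr ⟨hvAP.1, hadj.symm⟩
      exact hvAP.2 (huQ.2 hmem)
    · have h1 := hQ2 u hu
      have h2 := hQ2 v hv
      rcases hbip u v hadj with ⟨hu1, _⟩ | ⟨_, hv1⟩
      · exact Set.disjoint_left.mp hdisj hu1 h1
      · exact Set.disjoint_left.mp hdisj hv1 h2
  · have hIH1 : ((↑(A \ P) : Set V) ∪ ↑Q) ∩ H1 = ↑(A \ P) := by
      ext x
      constructor
      · rintro ⟨hx | hx, hxH1⟩
        · exact hx
        · exact absurd hxH1 (Set.disjoint_right.mp hdisj (hQ2 x hx))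
      · intro hx
        exact ⟨Or.inl hx, hsd1 x hx⟩
    rw [hIH1, Set.ncard_coe_finset, Finset.card_sdiff_of_subset hPA]
    have hn : H1.ncard = A.card := Set.ncard_eq_toFinset_card _ hfin1
    rw [hn]
    have hPA' := Finset.card_le_card hPA
    omega
  · have hIH2 : ((↑(A \ P) : Set V) ∪ ↑Q) ∩ H2 = ↑Q := by
      ext x
      constructor
      · rintro ⟨hx | hx, hxH2⟩
        · exact absurd hxH2 (Set.disjoint_left.mp hdisj (hsd1 x hx))
        · exact hx
      · intro hx
        exact ⟨Or.inr hx, hQ2 x hx⟩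
    rw [hIH2, Set.ncard_coe_finset]
    have hn : H2.ncard = B.card := Set.ncard_eq_toFinset_card _ hfin2
    rw [hn]
    omega
end
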